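/- arXiv:0904.4472 — 5 statements merged into one kernel-verified Lean document; each statement's English description precedes it below -/
import Mathlib

section
/- Let w = w₁w₂⋯w_p be a reduced expression for an element w of a Coxeter group W, and let x ≤ w in Bruhat order. Then there exists a unique mask σ ∈ {0,1}^p on this reduced expression such that the subword w^σ is a reduced expression for x and σ has no defects, i.e., for every position j with 2 ≤ j ≤ p, multiplying the subword determined by σ restricted to positions 1,…,j−1 on the right by w_j increases length. -/
open CoxeterSystem

variable {B W : Type*} [Group W] {M : CoxeterMatrix B}

/-- The subword of `ω` selected by the mask `σ` (positions with mask-value `true`). -/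
def maskSubword {α : Type*} (ω : List α) (σ : List Bool) : List α :=
  (ω.zip σ).filterMap (fun p => if p.2 then some p.1 else none)

/-- The group element `w^σ` determined by a mask `σ` on the word `ω`. -/
def maskProd (cs : CoxeterSystem M W) (ω : List B) (σ : List Bool) : W :=
  cs.wordProd (maskSubword ω σ)

/-- Bruhat order: `x ≤ w` iff some reduced word for `w` has a subword whose product is `x`. -/
def bruhatLE (cs : CoxeterSystem M W) (x w : W) : Prop :=
  ∃ ω φ : List B, cs.IsReduced ω ∧ cs.wordProd ω = w ∧ φ.Sublist ω ∧ cs.wordProd φ = x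

/-- Strict Bruhat order. -/
def bruhatLT (cs : CoxeterSystem M W) (x w : W) : Prop :=
  bruhatLE cs x w ∧ x ≠ w

/-- `z` covers `x` in Bruhat order. -/
def bruhatCovers (cs : CoxeterSystem M W) (x z : W) : Prop :=
  bruhatLT cs x z ∧ cs.length z = cs.length x + 1

/-- Position `j` (0-indexed) is a defect of the mask `σ` on the word `ω`:
multiplying the product of the first `j` masked letters by `ω_j` decreases length. -/
def IsDefect (cs : CoxeterSystem M W) (ω : List B) (σ : List Bool) (j : ℕ) : Prop :=
  ∃ h : j < ω.length, cs.IsRightDescent (maskProd cs (ω.take j) (σ.take j)) (ω.get ⟨j, h⟩)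

/-- A constant mask: a mask with no defect positions. -/
def IsConstantMask (cs : CoxeterSystem M W) (ω : List B) (σ : List Bool) : Prop :=
  σ.length = ω.length ∧ ∀ j, ¬ IsDefect cs ω σ j

/-! ## Auxiliary development for the proof of Deodhar's lemma -/

open List
open scoped Classical

variable (cs : CoxeterSystem M W)

namespace Deodhar

local prefix:100 "s" => cs.simple
local prefix:100 "π" => cs.wordProd
local prefix:100 "ℓ" => cs.length
local prefix:100 "ris" => cs.rightInvSeq
local prefix:100 "lis" => cs.leftInvSeq

/-- The basic sign-flipping map. -/
noncomputable def eta (i : B) : W × ℤˣ → W × ℤˣ :=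
  fun p => (s i * p.1 * s i, if p.1 = s i then -p.2 else p.2)

theorem eta_involutive (i : B) : Function.Involutive (eta cs i) := by
  rintro ⟨t, ε⟩
  simp only [eta]
  have h1 : s i * (s i * t * s i) * s i = t := by
    rw [show s i * (s i * t * s i) * s i = (s i * s i) * t * (s i * s i) by group,
      cs.simple_mul_simple_self]
    group
  have h2 : (s i * t * s i = s i) ↔ (t = s i) := by
    constructor
    · intro h
      have := congrArg (fun x => s i * x * s i) h
      rw [h1] at this
      rw [this, show s i * s i * s i = (s i * s i) * s i from rfl, cs.simple_mul_simple_self,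
        one_mul]
    · rintro rfl; rw [cs.simple_mul_simple_self, one_mul]
  rcases em (t = s i) with h | h <;> simp [h, h1, h2]

/-- The sign-flipping permutation. -/
noncomputable def etaPerm (i : B) : Equiv.Perm (W × ℤˣ) := (eta_involutive cs i).toPerm

theorem etaPerm_apply (i : B) (p : W × ℤˣ) :
    etaPerm cs i p = (s i * p.1 * s i, if p.1 = s i then -p.2 else p.2) := rfl

/-- Master lemma: the action of a word of `etaPerm`s. -/
theorem etaPerm_word (ω : List B) (t : W) (ε : ℤˣ) :
    (ω.map (etaPerm cs)).prod (t, ε) =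
      (π ω * t * (π ω)⁻¹, (-1 : ℤˣ) ^ ((ris ω).count t) * ε) := by
  induction ω generalizing t ε with
  | nil => simp
  | cons i ω ih =>
    rw [map_cons, prod_cons, Equiv.Perm.mul_apply, ih, etaPerm_apply]
    have hr : ris (i :: ω) = ((π ω)⁻¹ * (s i) * (π ω)) :: ris ω := rfl
    rw [hr, count_cons]
    have hiff : (π ω * t * (π ω)⁻¹ = s i) ↔ (t = (π ω)⁻¹ * s i * π ω) := by
      constructor
      · intro h; rw [← h]; group
      · intro h; rw [h]; group
    by_cases h : t = (π ω)⁻¹ * s i * π ω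
    · rw [if_pos (hiff.mpr h), if_pos (beq_iff_eq.mpr h.symm)]
      refine Prod.ext ?_ ?_
      · show s i * (π ω * t * (π ω)⁻¹) * s i = π (i :: ω) * t * (π (i :: ω))⁻¹
        rw [wordProd_cons, mul_inv_rev, inv_simple]
        group
      · show -((-1 : ℤˣ) ^ ((ris ω).count t) * ε) = (-1) ^ ((ris ω).count t + 1) * ε
        rw [pow_succ, neg_eq_neg_one_mul, mul_left_comm, ← mul_assoc]
    · rw [if_neg (fun hc => h (hiff.mp hc)), if_neg (by simpa using fun hc => h hc.symm), add_zero]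
      refine Prod.ext ?_ rfl
      show s i * (π ω * t * (π ω)⁻¹) * s i = π (i :: ω) * t * (π (i :: ω))⁻¹
      rw [wordProd_cons, mul_inv_rev, inv_simple]
      group

theorem alt_drop (i j : B) : ∀ (n k : ℕ), (alternatingWord i j n).drop k = alternatingWord i j (n - k) := by
  intro n
  induction n with
  | zero => intro k; simp [alternatingWord]
  | succ n ih =>
    intro k
    cases k with
    | zero => simp
    | succ k =>
      rw [alternatingWord_succ' i j n, drop_succ_cons, ih k]
      congr 1
      omega

theorem alt_head (i j : B) (n : ℕ) :
    (alternatingWord i j (n+1)).head? = some (if Even n then j else i) := by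
  rw [alternatingWord_succ' i j n]
  rfl

theorem alt_get? (i j : B) (n k : ℕ) (h : k < n) :
    (alternatingWord i j n)[k]? = some (if Even (n - k - 1) then j else i) := by
  rw [← head?_drop, alt_drop]
  have : n - k = (n - k - 1) + 1 := by omega
  rw [this, alt_head]
  simp


theorem bz_comm (i j : B) : (s j) * (s i * s j) = (s i * s j)⁻¹ * (s j) := by
  rw [mul_inv_rev, inv_simple, inv_simple]
  group

theorem bz_pow_comm (i j : B) (d : ℕ) : (s j) * (s i * s j)^d = ((s i * s j)^d)⁻¹ * (s j) := by
  induction d with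
  | zero => simp
  | succ d ih =>
    calc (s j) * (s i * s j)^(d+1) = ((s j) * (s i * s j)^d) * (s i * s j) := by
          rw [pow_succ, mul_assoc]
      _ = ((s i * s j)^d)⁻¹ * ((s j) * (s i * s j)) := by rw [ih]; group
      _ = ((s i * s j)^d)⁻¹ * ((s i * s j)⁻¹ * (s j)) := by rw [bz_comm]
      _ = ((s i * s j)^(d+1))⁻¹ * (s j) := by
          rw [pow_succ', mul_inv_rev (s i * s j) ((s i * s j)^d), mul_assoc]

theorem ris_alt (i j : B) (k : ℕ) (hk : k < 2 * M i j) :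
    (ris (alternatingWord i j (2 * M i j))).getD k 1 = (s i * s j)^(k+1) * s j := by
  have hz : (s i * s j) ^ (M i j) = 1 := cs.simple_mul_simple_pow i j
  rw [cs.getD_rightInvSeq, alt_drop, alt_get? i j _ k (by omega)]
  have hn2 : 2 * M i j - k - 1 = 2 * M i j - (k + 1) := by omega
  rw [hn2]
  set z := s i * s j with hzdef
  set m := M i j with hm
  set n := 2 * m - (k + 1) with hn
  have hfin : ∀ d : ℕ, d + (k + 1) = 2 * m → (z^d)⁻¹ * s j = z^(k+1) * s j := by
    intro d hd
    congr 1
    exact inv_eq_of_mul_eq_one_left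
      (by rw [← pow_add, show k + 1 + d = 2 * m by omega, two_mul, pow_add, hz, one_mul])
  rcases Nat.even_or_odd n with he | ho
  · obtain ⟨d, hd⟩ := he
    have hq : π (alternatingWord i j n) = z ^ d := by
      rw [cs.prod_alternatingWord_eq_mul_pow, if_pos ⟨d, hd⟩, one_mul, ← hzdef]
      congr 1
      omega
    rw [if_pos (by exact ⟨d, hd⟩), hq]
    simp only [Option.map_some, Option.getD_some]
    calc (z^d)⁻¹ * s j * z^d = (z^d)⁻¹ * ((s j) * z^d) := by group
      _ = (z^d)⁻¹ * ((z^d)⁻¹ * s j) := by rw [bz_pow_comm]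
      _ = (z^(d+d))⁻¹ * s j := by rw [pow_add, mul_inv_rev]; group
      _ = z^(k+1) * s j := hfin _ (by omega)
  · obtain ⟨d, hd⟩ := ho
    have hq : π (alternatingWord i j n) = s j * z ^ d := by
      rw [cs.prod_alternatingWord_eq_mul_pow, if_neg (by simp [Nat.even_iff, Nat.odd_iff.mp ⟨d, hd⟩]), ← hzdef]
      congr 2
      omega
    rw [if_neg (by simp [Nat.even_iff, Nat.odd_iff.mp ⟨d, hd⟩]), hq]
    simp only [Option.map_some, Option.getD_some]
    have hsjs : s j * s i * s j = z⁻¹ * s j := by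
      rw [hzdef, mul_inv_rev, inv_simple, inv_simple]
    calc (s j * z^d)⁻¹ * s i * (s j * z^d)
        = (z^d)⁻¹ * ((s j * s i * s j) * z^d) := by rw [mul_inv_rev, inv_simple]; group
      _ = (z^d)⁻¹ * (z⁻¹ * ((s j) * z^d)) := by rw [hsjs]; group
      _ = (z^d)⁻¹ * (z⁻¹ * ((z^d)⁻¹ * s j)) := by rw [bz_pow_comm]
      _ = (z^(d + 1 + d))⁻¹ * s j := by simp only [pow_add, pow_one, mul_inv_rev]; group
      _ = z^(k+1) * s j := hfin _ (by omega)


theorem ris_alt_period (i j : B) (k : ℕ) (hk : k < M i j) :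
    (ris (alternatingWord i j (2 * M i j))).getD (k + M i j) 1
      = (ris (alternatingWord i j (2 * M i j))).getD k 1 := by
  rw [ris_alt cs i j k (by omega), ris_alt cs i j (k + M i j) (by omega)]
  congr 1
  rw [show k + M i j + 1 = (k + 1) + M i j by omega, pow_add, cs.simple_mul_simple_pow i j,
    mul_one]

theorem count_ris_alt_even (i j : B) (t : W) :
    Even ((ris (alternatingWord i j (2 * M i j))).count t) := by
  set r := ris (alternatingWord i j (2 * M i j)) with hr
  have hlen : r.length = 2 * M i j := by
    rw [hr, cs.length_rightInvSeq, length_alternatingWord]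
  have htd : r.take (M i j) = r.drop (M i j) := by
    apply List.ext_getElem
    · simp [hlen]; omega
    · intro k h1 h2
      rw [List.getElem_take, List.getElem_drop]
      have hk : k < M i j := by simp [hlen] at h1; omega
      have e1 : r[k] = r.getD k 1 := (getD_eq_getElem r 1 (by omega)).symm
      have e2 : r[M i j + k] = r.getD (k + M i j) 1 := by
        rw [getD_eq_getElem r 1 (by omega)]
        congr 1
        omega
      rw [e1, e2, ris_alt_period cs i j k hk]
  have hsplit : r.count t = (r.take (M i j)).count t + (r.drop (M i j)).count t := by
    rw [← List.count_append, take_append_drop]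
  rw [hsplit, ← htd]
  exact ⟨_, rfl⟩

theorem etaPerm_liftable : M.IsLiftable (etaPerm cs) := by
  intro i j
  rcases Nat.eq_zero_or_pos (M i j) with h0 | hpos
  · rw [h0, pow_zero]
  · have halt : ∀ m : ℕ, ((alternatingWord i j (2 * m)).map (etaPerm cs)).prod
        = (etaPerm cs i * etaPerm cs j) ^ m := by
      intro m
      induction m with
      | zero => simp [alternatingWord]
      | succ m ih =>
        have h2 : alternatingWord i j (2 * (m + 1)) = i :: j :: alternatingWord i j (2 * m) := by
          rw [show 2 * (m + 1) = (2 * m + 1) + 1 by omega, alternatingWord_succ' i j,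
            alternatingWord_succ' i j]
          simp [Nat.even_add_one, Nat.even_mul]
        rw [h2, map_cons, map_cons, prod_cons, prod_cons, ih, pow_succ']
        rw [← mul_assoc]
    rw [← halt]
    apply Equiv.ext
    rintro ⟨t, ε⟩
    rw [etaPerm_word]
    have hprod : π (alternatingWord i j (2 * M i j)) = 1 := by
      rw [cs.prod_alternatingWord_eq_mul_pow, if_pos (by simp [Nat.even_mul]),
        show 2 * M i j / 2 = M i j by omega, one_mul, cs.simple_mul_simple_pow]
    rw [hprod]
    have hev := count_ris_alt_even cs i j t
    rw [Even.neg_one_pow hev]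
    simp

/-- The sign representation of the Coxeter group. -/
noncomputable def signRep : W →* Equiv.Perm (W × ℤˣ) := cs.lift ⟨etaPerm cs, etaPerm_liftable cs⟩

theorem signRep_wordProd (ω : List B) : signRep cs (π ω) = (ω.map (etaPerm cs)).prod := by
  induction ω with
  | nil => simp [wordProd_nil]
  | cons i ω ih =>
    rw [wordProd_cons, map_mul, ih, map_cons, prod_cons]
    congr 1
    exact cs.lift_apply_simple (etaPerm_liftable cs) i

/-- Parity of the number of occurrences of `t` in the right inversion sequence only depends on
the product of the word. -/
theorem count_parity {ω₁ ω₂ : List B} (h : π ω₁ = π ω₂) (t : W) :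
    Odd ((ris ω₁).count t) ↔ Odd ((ris ω₂).count t) := by
  have h1 := etaPerm_word cs ω₁ t 1
  have h2 := etaPerm_word cs ω₂ t 1
  rw [← signRep_wordProd, h, signRep_wordProd, h2] at h1
  have hsnd : ((-1:ℤˣ)) ^ ((ris ω₂).count t) = (-1) ^ ((ris ω₁).count t) := by
    have := congrArg Prod.snd h1
    simpa using this
  constructor <;> intro hodd <;> by_contra hev <;> rw [Nat.not_odd_iff_even] at hev
  · rw [Even.neg_one_pow hev, Odd.neg_one_pow hodd] at hsnd
    exact absurd hsnd (by decide)
  · rw [Odd.neg_one_pow hodd, Even.neg_one_pow hev] at hsnd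
    exact absurd hsnd (by decide)


theorem ris_append (α β : List B) :
    ris (α ++ β) = (ris α).map (fun r => (π β)⁻¹ * r * π β) ++ ris β := by
  induction α with
  | nil => simp
  | cons i α ih =>
    show (π (α ++ β))⁻¹ * s i * (π (α ++ β)) :: ris (α ++ β) = _
    rw [ih, cs.wordProd_append]
    simp only [map_cons, cons_append, mul_inv_rev]
    congr 1
    group

theorem lis_eq_map (ω : List B) :
    lis ω = (ris ω).map (fun r => π ω * r * (π ω)⁻¹) := by
  induction ω with
  | nil => simp
  | cons i ω ih =>
    show s i :: List.map (MulAut.conj (s i)) (lis ω) = _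
    have hris : ris (i :: ω) = (π ω)⁻¹ * s i * (π ω) :: ris ω := rfl
    rw [hris, map_cons, ih, List.map_map]
    congr 1
    · rw [wordProd_cons, mul_inv_rev, inv_simple]
      group
      rw [cs.simple_mul_simple_self, one_mul]
    · apply List.map_congr_left
      intro r _
      simp only [Function.comp_apply, MulAut.conj_apply, wordProd_cons, mul_inv_rev, inv_simple]
      group

theorem count_map_conj (l : List W) (a b t : W) :
    (l.map (fun r => a * r * b)).count t = l.count (a⁻¹ * t * b⁻¹) := by
  induction l with
  | nil => simp
  | cons r l ih =>
    rw [map_cons, count_cons, count_cons, ih]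
    congr 1
    have : (a * r * b = t) ↔ (r = a⁻¹ * t * b⁻¹) := by
      constructor
      · intro h; rw [← h]; group
      · intro h; rw [h]; group
    by_cases h : a * r * b = t
    · rw [if_pos (beq_iff_eq.mpr h), if_pos (beq_iff_eq.mpr (this.mp h))]
    · rw [if_neg (by simpa using h), if_neg (by simpa using fun hc => h (this.mpr hc))]

/-- Every reflection has a word in which it appears an odd number of times in the
right inversion sequence. -/
theorem exists_palindrome {t : W} (ht : cs.IsReflection t) :
    ∃ τ : List B, π τ = t ∧ Odd ((ris τ).count t) := by
  obtain ⟨w, i, rfl⟩ := ht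
  obtain ⟨υ, -, hυ⟩ := cs.exists_reduced_word' w
  subst hυ
  set u := π υ with hu
  refine ⟨υ ++ ([i] ++ υ.reverse), ?_, ?_⟩
  · rw [cs.wordProd_append, cs.wordProd_append, cs.wordProd_singleton, cs.wordProd_reverse]
    rw [mul_assoc]
  · rw [ris_append]
    have hβ : π ([i] ++ υ.reverse) = s i * u⁻¹ := by
      rw [cs.wordProd_append, cs.wordProd_singleton, cs.wordProd_reverse]
    rw [count_append, hβ]
    have hris2 : ris ([i] ++ υ.reverse) = ((π υ.reverse)⁻¹ * s i * (π υ.reverse)) :: ris υ.reverse := rfl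
    rw [hris2, count_cons]
    have hhead : (π υ.reverse)⁻¹ * s i * (π υ.reverse) = u * s i * u⁻¹ := by
      rw [cs.wordProd_reverse, inv_inv]
    have hcount1 : ((ris υ).map (fun r => (s i * u⁻¹)⁻¹ * r * (s i * u⁻¹))).count (u * s i * u⁻¹)
        = (ris υ).count (s i) := by
      rw [count_map_conj]
      congr 1
      rw [inv_inv, mul_inv_rev, inv_inv, inv_simple]
      group
      rw [cs.simple_mul_simple_self, one_mul]
    have hcount3 : (ris υ.reverse).count (u * s i * u⁻¹) = (ris υ).count (s i) := by
      rw [cs.rightInvSeq_reverse, count_reverse, lis_eq_map, count_map_conj, ← hu]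
      congr 1
      group
    rw [hcount1, hcount3, hhead, if_pos (beq_iff_eq.mpr rfl)]
    exact ⟨(ris υ).count (s i), by ring⟩

/-- Odd count implies right inversion (for reduced words). -/
theorem isRightInversion_of_odd_count {ω : List B} (hω : cs.IsReduced ω) {t : W}
    (hodd : Odd ((ris ω).count t)) : cs.IsRightInversion (π ω) t := by
  apply cs.isRightInversion_of_mem_rightInvSeq hω
  exact count_pos_iff.mp (Nat.pos_of_ne_zero (by rintro h0; rw [h0] at hodd; simp at hodd))

/-- The hard direction: a right inversion appears an odd number of times in the right
inversion sequence of any word (here stated for arbitrary words). -/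
theorem odd_count_of_isRightInversion {ω : List B} {t : W}
    (ht : cs.IsReflection t) (hlt : ℓ (π ω * t) < ℓ (π ω)) :
    Odd ((ris ω).count t) := by
  obtain ⟨κ, hκred, hκ⟩ := cs.exists_reduced_word' (π ω * t)
  obtain ⟨τ, hτprod, hτodd⟩ := exists_palindrome cs ht
  have hprod : π (κ ++ τ) = π ω := by
    rw [cs.wordProd_append, ← hκ, hτprod, mul_assoc, ht.mul_self, mul_one]
  have hpar := (count_parity cs hprod t)
  have hκτ : (ris (κ ++ τ)).count t = ((ris κ).map (fun r => (π τ)⁻¹ * r * π τ)).count t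
      + (ris τ).count t := by rw [ris_append, count_append]
  have hconj : ((ris κ).map (fun r => (π τ)⁻¹ * r * π τ)).count t = (ris κ).count t := by
    rw [count_map_conj]
    congr 1
    rw [hτprod, ht.inv]
    group
  have hκeven : ¬ Odd ((ris κ).count t) := by
    intro hoddκ
    have h2 := (isRightInversion_of_odd_count cs hκred hoddκ).2
    rw [← hκ, mul_assoc, ht.mul_self, mul_one] at h2
    omega
  rw [Nat.not_odd_iff_even] at hκeven
  rw [← hpar, hκτ, hconj]
  rcases hτodd with ⟨c, hc⟩
  rcases hκeven with ⟨d, hd⟩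
  exact ⟨d + c, by omega⟩

/-- **Strong exchange property**. -/
theorem strong_exchange {ω : List B} (hω : cs.IsReduced ω) {t : W}
    (ht : cs.IsReflection t) (hlt : ℓ (π ω * t) < ℓ (π ω)) :
    ∃ j, ∃ _ : j < ω.length, π ω * t = π (ω.eraseIdx j) := by
  have hodd := odd_count_of_isRightInversion cs ht hlt
  have hmem : t ∈ ris ω :=
    count_pos_iff.mp (Nat.pos_of_ne_zero (by rintro h0; rw [h0] at hodd; simp at hodd))
  obtain ⟨⟨j, hj⟩, hget⟩ := List.mem_iff_get.mp hmem
  rw [cs.length_rightInvSeq] at hj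
  refine ⟨j, hj, ?_⟩
  have : (ris ω).getD j 1 = t := by
    rw [List.getD_eq_getElem _ _ (by rw [cs.length_rightInvSeq]; exact hj)]
    exact hget
  rw [← this]
  exact cs.wordProd_mul_getD_rightInvSeq ω j

/-- Simple-reflection version of the exchange property. -/
theorem simple_exchange {ω : List B} (hω : cs.IsReduced ω) {i : B}
    (hlt : ℓ (π ω * s i) < ℓ (π ω)) :
    ∃ j, ∃ _ : j < ω.length, π ω * s i = π (ω.eraseIdx j) :=
  strong_exchange cs hω (cs.isReflection_simple i) hlt


/-! ### Deletion property -/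

theorem isReduced_nil : cs.IsReduced ([] : List B) := by
  simp [CoxeterSystem.IsReduced]

theorem deletion (ω : List B) : ∃ φ, φ.Sublist ω ∧ cs.IsReduced φ ∧ π φ = π ω := by
  induction ω using List.reverseRecOn with
  | nil => exact ⟨[], List.Sublist.refl _, isReduced_nil cs, rfl⟩
  | append_singleton η i ih =>
    obtain ⟨φ', hsub, hred, hprod⟩ := ih
    have hπ : π (η ++ [i]) = π φ' * s i := by
      rw [cs.wordProd_append, cs.wordProd_singleton, hprod]
    rcases cs.length_mul_simple (π φ') i with hup | hdown
    · refine ⟨φ' ++ [i], hsub.append (List.Sublist.refl _), ?_, ?_⟩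
      · show ℓ (π (φ' ++ [i])) = (φ' ++ [i]).length
        rw [cs.wordProd_append, cs.wordProd_singleton, hup]
        simp only [CoxeterSystem.IsReduced] at hred
        simp [hred]
      · rw [cs.wordProd_append, cs.wordProd_singleton, hπ]
    · obtain ⟨j, hj, herase⟩ := simple_exchange cs (i := i) hred (by omega)
      refine ⟨φ'.eraseIdx j, ((φ'.eraseIdx_sublist j).trans hsub).trans (by simp), ?_, ?_⟩
      · show ℓ (π (φ'.eraseIdx j)) = (φ'.eraseIdx j).length
        rw [← herase, List.length_eraseIdx, if_pos hj]
        have := hred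
        simp only [CoxeterSystem.IsReduced] at this
        omega
      · rw [← herase, hπ]

/-! ### The chain (Bruhat) order -/

/-- One step of a Bruhat chain. -/
def chainStep (a b : W) : Prop := ∃ t, cs.IsReflection t ∧ b = a * t ∧ ℓ a < ℓ b

/-- The Bruhat order, defined via chains of reflections. -/
def chainLE : W → W → Prop := Relation.ReflTransGen (chainStep cs)

theorem chainLE.refl (w : W) : chainLE cs w w := Relation.ReflTransGen.refl

theorem chainLE.trans {a b c : W} (h1 : chainLE cs a b) (h2 : chainLE cs b c) :
    chainLE cs a c := Relation.ReflTransGen.trans h1 h2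

theorem chainLE_up {w t : W} (ht : cs.IsReflection t) (h : ℓ w < ℓ (w * t)) :
    chainLE cs w (w * t) := Relation.ReflTransGen.single ⟨t, ht, rfl, h⟩

theorem chainLE_down {v t : W} (ht : cs.IsReflection t) (h : ℓ (v * t) < ℓ v) :
    chainLE cs (v * t) v := by
  have : v = (v * t) * t := by rw [mul_assoc, ht.mul_self, mul_one]
  exact Relation.ReflTransGen.single ⟨t, ht, this, h⟩

theorem chainLE_length_le {a b : W} (h : chainLE cs a b) : ℓ a ≤ ℓ b := by
  induction h with
  | refl => exact le_refl _
  | tail _ hstep ih => obtain ⟨t, -, rfl, hlen⟩ := hstep; omega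

theorem chainLE_one_iff {a : W} (h : chainLE cs a 1) : a = 1 := by
  have := chainLE_length_le cs h
  rw [cs.length_one] at this
  exact cs.length_eq_zero_iff.mp (by omega)

/-- Chains give subwords in every reduced word (via strong exchange). -/
theorem chain_subword : ∀ n, ∀ w : W, ℓ w = n → ∀ x, chainLE cs x w →
    ∀ ω : List B, cs.IsReduced ω → π ω = w → ∃ φ, φ.Sublist ω ∧ π φ = x := by
  intro n
  induction n using Nat.strong_induction_on with
  | _ n ih =>
    intro w hw x hx ω hωred hωprod
    rcases Relation.ReflTransGen.cases_tail hx with rfl | ⟨u, hxu, t, ht, rfl, hlen⟩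
    · exact ⟨ω, List.Sublist.refl _, hωprod⟩
    · -- w = u * t with ℓ u < ℓ w
      have hwt : π ω * t = u := by
        rw [hωprod, mul_assoc, ht.mul_self, mul_one]
      have hlt : ℓ (π ω * t) < ℓ (π ω) := by
        rw [hωprod, mul_assoc, ht.mul_self, mul_one]
        exact hlen
      obtain ⟨j, hj, herase⟩ := strong_exchange cs hωred ht hlt
      rw [hwt] at herase
      obtain ⟨ρ, hρsub, hρred, hρprod⟩ := deletion cs (ω.eraseIdx j)
      rw [← herase] at hρprod
      obtain ⟨φ, hφsub, hφprod⟩ :=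
        ih (ℓ u) (by rw [← hw]; exact hlen) u rfl x hxu ρ hρred hρprod
      exact ⟨φ, (hφsub.trans hρsub).trans (ω.eraseIdx_sublist j), hφprod⟩


/-- The grand mutual induction: subword ⇒ chain, together with the two lifting properties. -/
theorem grand : ∀ n : ℕ, ∀ w : W, ℓ w = n →
    ((∀ ω φ : List B, cs.IsReduced ω → π ω = w → φ.Sublist ω → chainLE cs (π φ) w) ∧
     (∀ (v : W) (i : B), chainLE cs v w → ℓ w < ℓ (w * s i) →
        chainLE cs (v * s i) (w * s i)) ∧
     (∀ (v : W) (i : B), chainLE cs v w → ℓ (w * s i) < ℓ w → ℓ v < ℓ (v * s i) →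
        chainLE cs (v * s i) w)) := by
  intro n
  induction n using Nat.strong_induction_on with
  | _ n ih =>
    intro w hw
    refine ⟨?_, ?_, ?_⟩
    · -- SC : subword implies chain
      intro ω φ hred hprod hsub
      rcases List.eq_nil_or_concat ω with rfl | ⟨η, i, rfl⟩
      · rw [List.sublist_nil.mp hsub, ← hprod]
        exact chainLE.refl cs _
      · rw [List.concat_eq_append] at hsub hred hprod
        have hηred : cs.IsReduced η := by
          have := hred.take η.length
          rwa [List.take_left] at this
        have hwπ : w = π η * s i := by rw [← hprod, cs.wordProd_append, cs.wordProd_singleton]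
        have hℓη : ℓ (π η) = η.length := hηred
        have hℓw : ℓ w = η.length + 1 := by
          rw [← hprod]
          have := hred
          simp only [CoxeterSystem.IsReduced] at this
          simp only [this, List.length_append, List.length_singleton]
        have hup : ℓ (π η) < ℓ (π η * s i) := by rw [← hwπ]; omega
        have hstep : chainLE cs (π η) w := by
          rw [hwπ]
          exact chainLE_up cs (cs.isReflection_simple i) hup
        obtain ⟨l₁, l₂, rfl, hl₁, hl₂⟩ := List.sublist_append_iff.mp hsub
        have hSCη := (ih (ℓ (π η)) (by omega) (π η) rfl).1 η l₁ hηred rfl hl₁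
        rcases List.sublist_singleton.mp hl₂ with rfl | rfl
        · rw [List.append_nil]
          exact chainLE.trans cs hSCη hstep
        · rw [cs.wordProd_append, cs.wordProd_singleton, hwπ]
          exact (ih (ℓ (π η)) (by omega) (π η) rfl).2.1 (π l₁) i hSCη hup
    · -- W' : ascent lifting
      intro v i hv hasc
      by_cases hvs : ℓ (v * s i) < ℓ v
      · exact chainLE.trans cs (chainLE.trans cs (chainLE_down cs (cs.isReflection_simple i) hvs) hv)
          (chainLE_up cs (cs.isReflection_simple i) hasc)
      · have hvs' : ℓ v < ℓ (v * s i) := by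
          rcases cs.length_mul_simple v i with h | h <;> omega
        rcases Relation.ReflTransGen.cases_tail hv with rfl | ⟨p, hvp, t, ht, rfl, hplen⟩
        · exact chainLE.refl cs _
        · rcases cs.length_mul_simple p i with hps | hps
          · -- ℓ (p * s i) = ℓ p + 1 : use W' at p
            have hpasc : ℓ p < ℓ (p * s i) := by omega
            have h1 := (ih (ℓ p) (by omega) p rfl).2.1 v i hvp hpasc
            have ht' : cs.IsReflection (s i * t * s i) := by
              have := ht.conj (s i)
              rwa [inv_simple] at this
            have heq : (p * s i) * (s i * t * s i) = (p * t) * s i := by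
              rw [show (p * s i) * (s i * t * s i) = p * (s i * s i) * t * s i by group,
                cs.simple_mul_simple_self, mul_one]
            have h2 : chainLE cs (p * s i) ((p * t) * s i) := by
              rw [← heq]
              apply chainLE_up cs ht'
              rw [heq]
              omega
            exact chainLE.trans cs h1 h2
          · -- ℓ (p * s i) < ℓ p : use D at p
            have h1 := (ih (ℓ p) (by omega) p rfl).2.2 v i hvp (by omega) hvs'
            exact chainLE.trans cs (chainLE.trans cs h1 (chainLE_up cs ht hplen))
              (chainLE_up cs (cs.isReflection_simple i) hasc)
    · -- D : descent absorption
      intro v i hv hdesc hasc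
      rcases Relation.ReflTransGen.cases_tail hv with rfl | ⟨q, hvq, t, ht, rfl, hqlen⟩
      · omega
      · rcases cs.length_mul_simple q i with hqs | hqs
        · -- ℓ (q * s i) = ℓ q + 1 : use W' at q, then strong exchange
          have h1 := (ih (ℓ q) (by omega) q rfl).2.1 v i hvq (by omega)
          -- show (q * s i) ≤ w where w = q * t
          obtain ⟨κ, hκred, hκ⟩ := cs.exists_reduced_word' ((q * t) * s i)
          have hκlen : κ.length = ℓ ((q * t) * s i) := by
            rw [hκ]; exact hκred.symm
          have hρprod : π (κ ++ [i]) = q * t := by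
            rw [cs.wordProd_append, cs.wordProd_singleton, ← hκ, mul_assoc,
              cs.simple_mul_simple_self, mul_one]
          have hρred : cs.IsReduced (κ ++ [i]) := by
            show ℓ (π (κ ++ [i])) = _
            rw [hρprod]
            simp only [List.length_append, List.length_singleton]
            rcases cs.length_mul_simple (q * t) i with hh | hh <;> omega
          have hlt : ℓ (π (κ ++ [i]) * t) < ℓ (π (κ ++ [i])) := by
            rw [hρprod, mul_assoc, ht.mul_self, mul_one]
            exact hqlen
          obtain ⟨j, hj, herase⟩ := strong_exchange cs hρred ht hlt
          rw [hρprod, mul_assoc, ht.mul_self, mul_one] at herase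
          -- herase : q = π ((κ ++ [i]).eraseIdx j)
          have h2 : chainLE cs (q * s i) (q * t) := by
            by_cases hjκ : j < κ.length
            · rw [List.eraseIdx_append_of_lt_length hjκ] at herase
              have hqs2 : q * s i = π (κ.eraseIdx j) := by
                rw [herase, cs.wordProd_append, cs.wordProd_singleton, mul_assoc,
                  cs.simple_mul_simple_self, mul_one]
              have h3 := (ih (ℓ ((q * t) * s i)) (by omega) ((q * t) * s i) rfl).1
                κ (κ.eraseIdx j) hκred hκ.symm (κ.eraseIdx_sublist j)
              rw [← hqs2] at h3
              exact chainLE.trans cs h3 (chainLE_down cs (cs.isReflection_simple i) hdesc)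
            · rw [List.eraseIdx_append_of_length_le (by omega) [i]] at herase
              have : [i].eraseIdx (j - κ.length) = [] := by
                have hj' : j < κ.length + 1 := by
                  simpa using hj
                have : j - κ.length = 0 := by omega
                rw [this]
                rfl
              rw [this, List.append_nil] at herase
              have hqq : q * s i = q * t := by
                conv_lhs => rw [herase, ← hκ]
                rw [mul_assoc, cs.simple_mul_simple_self, mul_one]
              rw [hqq]
              exact chainLE.refl cs _
          exact chainLE.trans cs h1 h2
        · -- ℓ (q * s i) < ℓ q : use D at q
          have h1 := (ih (ℓ q) (by omega) q rfl).2.2 v i hvq (by omega) hasc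
          exact chainLE.trans cs h1 (chainLE_up cs ht hqlen)


theorem subword_le {ω φ : List B} (hred : cs.IsReduced ω) (hsub : φ.Sublist ω) :
    chainLE cs (π φ) (π ω) :=
  (grand cs (ℓ (π ω)) (π ω) rfl).1 ω φ hred rfl hsub

theorem chainLE_subword {w x : W} (h : chainLE cs x w) {ω : List B} (hred : cs.IsReduced ω)
    (hprod : π ω = w) : ∃ φ, φ.Sublist ω ∧ cs.IsReduced φ ∧ π φ = x := by
  obtain ⟨φ, hsub, hprodφ⟩ := chain_subword cs (ℓ w) w rfl x h ω hred hprod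
  obtain ⟨φ', h1, h2, h3⟩ := deletion cs φ
  exact ⟨φ', h1.trans hsub, h2, by rw [h3, hprodφ]⟩

/-- A reduced word for `w` that ends with the letter `i`, when `i` is a right descent. -/
theorem exists_reduced_word_concat {w : W} {i : B} (hdesc : ℓ (w * s i) < ℓ w) :
    ∃ κ : List B, cs.IsReduced (κ ++ [i]) ∧ cs.IsReduced κ ∧ π (κ ++ [i]) = w ∧
      π κ = w * s i := by
  obtain ⟨κ, hκred, hκ⟩ := cs.exists_reduced_word' (w * s i)
  have hκlen : κ.length = ℓ (w * s i) := by rw [hκ]; exact hκred.symm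
  have hprod : π (κ ++ [i]) = w := by
    rw [cs.wordProd_append, cs.wordProd_singleton, ← hκ, mul_assoc,
      cs.simple_mul_simple_self, mul_one]
  refine ⟨κ, ?_, hκred, hprod, hκ.symm⟩
  show ℓ (π (κ ++ [i])) = _
  rw [hprod]
  simp only [List.length_append, List.length_singleton]
  rcases cs.length_mul_simple w i with hh | hh <;> omega

/-- Lifting property, case where `i` is a descent of both `x` and `w`:
`x * sᵢ ≤ w * sᵢ`. -/
theorem chain_lift_descent {w x : W} {i : B} (hdesc : ℓ (w * s i) < ℓ w)
    (hx : chainLE cs x w) (hxdesc : ℓ (x * s i) < ℓ x) :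
    chainLE cs (x * s i) (w * s i) := by
  obtain ⟨κ, hρred, hκred, hρprod, hκprod⟩ := exists_reduced_word_concat cs hdesc
  obtain ⟨φ, hφsub, hφred, hφprod⟩ := chainLE_subword cs hx hρred hρprod
  obtain ⟨l₁, l₂, rfl, hl₁, hl₂⟩ := List.sublist_append_iff.mp hφsub
  rcases List.sublist_singleton.mp hl₂ with rfl | rfl
  · -- x is a subword of κ; use the exchange property on the reduced word of x
    rw [List.append_nil] at hφred hφprod
    obtain ⟨r, hr, herase⟩ := simple_exchange cs (i := i) hφred (by rw [hφprod]; exact hxdesc)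
    rw [hφprod] at herase
    rw [herase, ← hκprod]
    exact subword_le cs hκred ((l₁.eraseIdx_sublist r).trans hl₁)
  · -- x = (π l₁) * sᵢ, so x * sᵢ = π l₁ is a subword of κ
    rw [cs.wordProd_append, cs.wordProd_singleton] at hφprod
    have : x * s i = π l₁ := by
      rw [← hφprod, mul_assoc, cs.simple_mul_simple_self, mul_one]
    rw [this, ← hκprod]
    exact subword_le cs hκred hl₁

/-- Lifting property, case where `i` is a descent of `w` but an ascent of `x`: `x ≤ w * sᵢ`. -/
theorem chain_lift_ascent {w x : W} {i : B} (hdesc : ℓ (w * s i) < ℓ w)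
    (hx : chainLE cs x w) (hxasc : ℓ x < ℓ (x * s i)) :
    chainLE cs x (w * s i) := by
  obtain ⟨κ, hρred, hκred, hρprod, hκprod⟩ := exists_reduced_word_concat cs hdesc
  obtain ⟨φ, hφsub, hφred, hφprod⟩ := chainLE_subword cs hx hρred hρprod
  obtain ⟨l₁, l₂, rfl, hl₁, hl₂⟩ := List.sublist_append_iff.mp hφsub
  rcases List.sublist_singleton.mp hl₂ with rfl | rfl
  · rw [List.append_nil] at hφred hφprod
    rw [← hφprod, ← hκprod]
    exact subword_le cs hκred hl₁
  · -- impossible: then x ends in sᵢ and ℓ (x sᵢ) < ℓ x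
    exfalso
    rw [cs.wordProd_append, cs.wordProd_singleton] at hφprod
    have hxs : x * s i = π l₁ := by
      rw [← hφprod, mul_assoc, cs.simple_mul_simple_self, mul_one]
    have h1 : ℓ (x * s i) ≤ l₁.length := by
      rw [hxs]; exact cs.length_wordProd_le l₁
    have h2 : ℓ x = l₁.length + 1 := by
      have := hφred
      simp only [CoxeterSystem.IsReduced] at this
      rw [cs.wordProd_append, cs.wordProd_singleton, hφprod] at this
      simpa using this
    omega

/-- `bruhatLE` coincides with the chain order. -/
theorem bruhatLE_iff_chainLE {x w : W} : bruhatLE cs x w ↔ chainLE cs x w := by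
  constructor
  · rintro ⟨ω, φ, hred, hprod, hsub, hφprod⟩
    rw [← hφprod, ← hprod]
    exact subword_le cs hred hsub
  · intro h
    obtain ⟨ω, hred, hprod⟩ := cs.exists_reduced_word' w
    obtain ⟨φ, hsub, -, hφprod⟩ := chainLE_subword cs h hred hprod.symm
    exact ⟨ω, φ, hred, hprod.symm, hsub, hφprod⟩


/-! ### Masks -/

theorem maskSubword_append_singleton {η : List B} {σ : List Bool} (i : B) (b : Bool)
    (hlen : σ.length = η.length) :
    maskSubword (η ++ [i]) (σ ++ [b]) = maskSubword η σ ++ (if b then [i] else []) := by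
  unfold maskSubword
  rw [List.zip_append hlen.symm, List.filterMap_append]
  congr 1
  cases b <;> rfl

theorem maskProd_append_singleton {η : List B} {σ : List Bool} (i : B) (b : Bool)
    (hlen : σ.length = η.length) :
    maskProd cs (η ++ [i]) (σ ++ [b]) = maskProd cs η σ * (if b then s i else 1) := by
  unfold maskProd
  rw [maskSubword_append_singleton i b hlen, cs.wordProd_append]
  congr 1
  cases b
  · simp [wordProd_nil]
  · simp [cs.wordProd_singleton]

theorem isConstantMask_append_singleton {η : List B} {σ : List Bool} (i : B) (b : Bool)
    (hlen : σ.length = η.length) :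
    IsConstantMask cs (η ++ [i]) (σ ++ [b]) ↔
      IsConstantMask cs η σ ∧ ¬ cs.IsRightDescent (maskProd cs η σ) i := by
  have htakeσ : ∀ j, j ≤ η.length → (σ ++ [b]).take j = σ.take j := fun j hj =>
    List.take_append_of_le_length (by omega)
  have htakeη : ∀ j, j ≤ η.length → (η ++ [i]).take j = η.take j := fun j hj =>
    List.take_append_of_le_length (by omega)
  have htakeσ' : (σ ++ [b]).take η.length = σ := by
    rw [htakeσ _ (le_refl _), ← hlen, List.take_length]
  have htakeη' : (η ++ [i]).take η.length = η := by
    rw [htakeη _ (le_refl _), List.take_length]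
  have hgetlast : ∀ (h : η.length < (η ++ [i]).length), (η ++ [i]).get ⟨η.length, h⟩ = i := by
    intro h
    rw [List.get_eq_getElem, List.getElem_append_right (by simp)]
    simp
  have hgetlt : ∀ (j : ℕ) (h1 : j < (η ++ [i]).length) (h2 : j < η.length),
      (η ++ [i]).get ⟨j, h1⟩ = η.get ⟨j, h2⟩ := by
    intro j h1 h2
    rw [List.get_eq_getElem, List.get_eq_getElem, List.getElem_append_left h2]
  constructor
  · rintro ⟨hl, hnd⟩
    refine ⟨⟨hlen, ?_⟩, ?_⟩
    · rintro j ⟨hj, hdef⟩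
      apply hnd j
      have hj1 : j < (η ++ [i]).length := by simp; omega
      refine ⟨hj1, ?_⟩
      rw [htakeσ j (by omega), htakeη j (by omega), hgetlt j hj1 hj]
      exact hdef
    · rintro hd
      apply hnd η.length
      have hj1 : η.length < (η ++ [i]).length := by simp
      refine ⟨hj1, ?_⟩
      rw [htakeσ', htakeη', hgetlast hj1]
      exact hd
  · rintro ⟨⟨hl, hnd⟩, hlast⟩
    refine ⟨by simp [hlen], ?_⟩
    rintro j ⟨hj, hdef⟩
    have hj' : j < η.length + 1 := by simpa using hj
    by_cases hjη : j < η.length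
    · apply hnd j
      refine ⟨hjη, ?_⟩
      rw [htakeσ j (by omega), htakeη j (by omega), hgetlt j hj hjη] at hdef
      exact hdef
    · have hj2 : j = η.length := by omega
      subst hj2
      apply hlast
      rw [htakeσ', htakeη', hgetlast hj] at hdef
      exact hdef

theorem isConstantMask_nil_iff (σ : List Bool) :
    IsConstantMask cs ([] : List B) σ ↔ σ = [] := by
  constructor
  · rintro ⟨hl, -⟩
    exact List.length_eq_zero_iff.mp (by simpa using hl)
  · rintro rfl
    exact ⟨rfl, by rintro j ⟨hj, -⟩; simp at hj⟩


/-- **Deodhar's lemma**, chain-order version, by induction on the reduced word. -/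
theorem exists_unique_constant_mask : ∀ (ω : List B), cs.IsReduced ω → ∀ x : W,
    chainLE cs x (π ω) →
    ∃! σ : List Bool, IsConstantMask cs ω σ ∧ cs.IsReduced (maskSubword ω σ) ∧
      maskProd cs ω σ = x := by
  intro ω
  induction ω using List.reverseRecOn with
  | nil =>
    intro _ x hx
    have hx1 : x = 1 := chainLE_one_iff cs (by rwa [cs.wordProd_nil] at hx)
    refine ⟨[], ⟨(isConstantMask_nil_iff cs []).mpr rfl, ?_, ?_⟩, ?_⟩
    · show cs.IsReduced (maskSubword ([] : List B) [])
      have : maskSubword ([] : List B) [] = [] := rfl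
      rw [this]
      exact isReduced_nil cs
    · show maskProd cs ([] : List B) [] = x
      have : maskSubword ([] : List B) [] = [] := rfl
      rw [maskProd, this, cs.wordProd_nil, hx1]
    · rintro σ ⟨hc, -, -⟩
      exact (isConstantMask_nil_iff cs σ).mp hc
  | append_singleton η i ih =>
    intro hred x hx
    have hηred : cs.IsReduced η := by
      have := hred.take η.length
      rwa [List.take_left] at this
    have hπ : π (η ++ [i]) = π η * s i := by
      rw [cs.wordProd_append, cs.wordProd_singleton]
    have hℓη : ℓ (π η) = η.length := hηred
    have hℓw : ℓ (π (η ++ [i])) = η.length + 1 := by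
      have := hred
      simp only [CoxeterSystem.IsReduced] at this
      simpa using this
    have hdesc : ℓ (π (η ++ [i]) * s i) < ℓ (π (η ++ [i])) := by
      rw [hπ, mul_assoc, cs.simple_mul_simple_self, mul_one, ← hπ]
      omega
    have hws : π (η ++ [i]) * s i = π η := by
      rw [hπ, mul_assoc, cs.simple_mul_simple_self, mul_one]
    -- helper : from a reduced subword ending in i, the prefix is reduced
    have hprefix : ∀ φ : List B, cs.IsReduced (φ ++ [i]) → cs.IsReduced φ := by
      intro φ h
      have := h.take φ.length
      rwa [List.take_left] at this
    rcases cs.length_mul_simple x i with hxup | hxdown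
    · -- ascent case : mask ends with false
      have hxw' : chainLE cs x (π η) := by
        have := chain_lift_ascent cs hdesc hx (by omega)
        rwa [hws] at this
      obtain ⟨σ', ⟨hc', hr', hp'⟩, huniq'⟩ := ih hηred x hxw'
      have hlen' : σ'.length = η.length := hc'.1
      refine ⟨σ' ++ [false], ⟨?_, ?_, ?_⟩, ?_⟩
      · apply (isConstantMask_append_singleton cs i false hlen').mpr
        refine ⟨hc', ?_⟩
        rw [hp']
        show ¬ ℓ (x * s i) < ℓ x
        omega
      · rw [maskSubword_append_singleton i false hlen']
        simpa using hr'
      · rw [maskProd_append_singleton cs i false hlen', hp']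
        simp
      · rintro σ ⟨hc, hr, hp⟩
        rcases List.eq_nil_or_concat σ with rfl | ⟨σ₀, b, rfl⟩
        · exact absurd hc.1 (by simp)
        rw [List.concat_eq_append] at hc hr hp ⊢
        have hσlen : σ₀.length = η.length := by
          have := hc.1
          simpa using this
        have hsplit := (isConstantMask_append_singleton cs i b hσlen).mp hc
        cases b
        · -- false : forced to coincide with σ'
          rw [maskProd_append_singleton cs i false hσlen, if_neg (by simp), mul_one] at hp
          rw [maskSubword_append_singleton i false hσlen, if_neg (by simp),
            List.append_nil] at hr
          rw [huniq' σ₀ ⟨hsplit.1, hr, hp⟩]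
        · -- true : impossible in the ascent case
          exfalso
          rw [maskProd_append_singleton cs i true hσlen, if_pos rfl] at hp
          rw [maskSubword_append_singleton i true hσlen, if_pos rfl] at hr
          set x₀ := maskProd cs η σ₀ with hx₀
          have hx₀x : x₀ = x * s i := by
            rw [← hp, mul_assoc, cs.simple_mul_simple_self, mul_one]
          have h1 : ℓ x = (maskSubword η σ₀).length + 1 := by
            have := hr
            simp only [CoxeterSystem.IsReduced] at this
            rw [cs.wordProd_append, cs.wordProd_singleton] at this
            rw [show cs.wordProd (maskSubword η σ₀) = x₀ from rfl] at this
            rw [hx₀x, mul_assoc, cs.simple_mul_simple_self, mul_one] at this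
            simpa using this
          have h2 : ℓ x₀ ≤ (maskSubword η σ₀).length := cs.length_wordProd_le _
          rw [hx₀x] at h2
          omega
    · -- descent case : mask ends with true
      have hchain : chainLE cs (x * s i) (π η) := by
        have := chain_lift_descent cs hdesc hx (by omega)
        rwa [hws] at this
      obtain ⟨σ', ⟨hc', hr', hp'⟩, huniq'⟩ := ih hηred (x * s i) hchain
      have hlen' : σ'.length = η.length := hc'.1
      have hsublen : ℓ (x * s i) = (maskSubword η σ').length := by
        have := hr'
        simp only [CoxeterSystem.IsReduced] at this
        rw [show cs.wordProd (maskSubword η σ') = maskProd cs η σ' from rfl, hp'] at this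
        exact this
      refine ⟨σ' ++ [true], ⟨?_, ?_, ?_⟩, ?_⟩
      · apply (isConstantMask_append_singleton cs i true hlen').mpr
        refine ⟨hc', ?_⟩
        rw [hp']
        show ¬ ℓ (x * s i * s i) < ℓ (x * s i)
        rw [mul_assoc, cs.simple_mul_simple_self, mul_one]
        omega
      · rw [maskSubword_append_singleton i true hlen', if_pos rfl]
        show ℓ (π (maskSubword η σ' ++ [i])) = _
        rw [cs.wordProd_append, cs.wordProd_singleton,
          show cs.wordProd (maskSubword η σ') = maskProd cs η σ' from rfl, hp',
          mul_assoc, cs.simple_mul_simple_self, mul_one]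
        simp only [List.length_append, List.length_singleton]
        omega
      · rw [maskProd_append_singleton cs i true hlen', hp', if_pos rfl]
        rw [mul_assoc, cs.simple_mul_simple_self, mul_one]
      · rintro σ ⟨hc, hr, hp⟩
        rcases List.eq_nil_or_concat σ with rfl | ⟨σ₀, b, rfl⟩
        · exact absurd hc.1 (by simp)
        rw [List.concat_eq_append] at hc hr hp ⊢
        have hσlen : σ₀.length = η.length := by
          have := hc.1
          simpa using this
        have hsplit := (isConstantMask_append_singleton cs i b hσlen).mp hc
        cases b
        · -- false : impossible in the descent case
          exfalso
          rw [maskProd_append_singleton cs i false hσlen, if_neg (by simp), mul_one] at hp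
          have := hsplit.2
          rw [hp] at this
          exact this (by show ℓ (x * s i) < ℓ x; omega)
        · -- true : forced to coincide with σ'
          rw [maskProd_append_singleton cs i true hσlen, if_pos rfl] at hp
          rw [maskSubword_append_singleton i true hσlen, if_pos rfl] at hr
          have hx₀x : maskProd cs η σ₀ = x * s i := by
            rw [← hp, mul_assoc, cs.simple_mul_simple_self, mul_one]
          have hsubred : cs.IsReduced (maskSubword η σ₀) := hprefix _ hr
          rw [huniq' σ₀ ⟨hsplit.1, hsubred, hx₀x⟩]

end Deodhar

/-- **Deodhar's lemma.** For any reduced expression `ω` of `w` and any `x ≤ w`, there is a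
unique constant (defect-free) mask `σ` on `ω` such that `ω^σ` is a reduced expression for `x`. -/
theorem unique_constant_mask (cs : CoxeterSystem M W) {w x : W} {ω : List B}
    (hred : cs.IsReduced ω) (hprod : cs.wordProd ω = w) (hx : bruhatLE cs x w) :
    ∃! σ : List Bool, IsConstantMask cs ω σ ∧ cs.IsReduced (maskSubword ω σ) ∧
      maskProd cs ω σ = x := by
  have hchain : Deodhar.chainLE cs x (cs.wordProd ω) := by
    rw [hprod]
    exact (Deodhar.bruhatLE_iff_chainLE cs).mp hx
  exact Deodhar.exists_unique_constant_mask cs ω hred x hchain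
end

section
/- Let w = w₁⋯w_p be a reduced expression in a Coxeter group and let x ≤ w. Define r_{p+1}(x) = x and, for i from p down to 1, set r_i(x) = r_{i+1}(x) if w_i is a right ascent of r_{i+1}(x), and r_i(x) = r_{i+1}(x)·w_i if w_i is a right descent of r_{i+1}(x). Then r_1(x) is the identity element of W. -/
open CoxeterSystem
open scoped Classical

variable {B W : Type*} [Group W] {M : CoxeterMatrix B}

/-- The greedy right-to-left algorithm: process the letters of the word from right to left,
multiplying by each letter that is a right descent of the current element. -/

noncomputable def greedyAux (cs : CoxeterSystem M W) : W → List B → W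
  | x, [] => x
  | x, i :: rest =>
      greedyAux cs (if cs.IsRightDescent x i then x * cs.simple i else x) rest

namespace GreedyMaskProof

open List

variable (cs : CoxeterSystem M W)

/-! ### Basic conjugation helpers -/

lemma simple_conj_conj (i : B) (t : W) :
    cs.simple i * (cs.simple i * t * cs.simple i) * cs.simple i = t := by
  have h := cs.simple_mul_simple_self i
  calc cs.simple i * (cs.simple i * t * cs.simple i) * cs.simple i
      = (cs.simple i * cs.simple i) * t * (cs.simple i * cs.simple i) := by group
    _ = t := by rw [h]; group

lemma simple_conj_eq_iff (i : B) (x y : W) :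
    cs.simple i * x * cs.simple i = y ↔ x = cs.simple i * y * cs.simple i := by
  constructor
  · rintro rfl; rw [simple_conj_conj]
  · rintro rfl; rw [simple_conj_conj]

lemma conj_simple_eq_simple_iff (i : B) (t : W) :
    cs.simple i * t * cs.simple i = cs.simple i ↔ t = cs.simple i := by
  rw [simple_conj_eq_iff]
  have h : cs.simple i * cs.simple i * cs.simple i = cs.simple i := by
    rw [cs.simple_mul_simple_self, one_mul]
  rw [h]

lemma conj_eq_iff (g u v : W) : g * u * g⁻¹ = v ↔ u = g⁻¹ * v * g := by
  constructor
  · rintro rfl; group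
  · rintro rfl; group

/-! ### The parity representation on `W × ZMod 2` -/

/-- The function underlying the permutation associated to a simple reflection. -/
noncomputable def etaFun (i : B) : W × ZMod 2 → W × ZMod 2 :=
  fun p => (cs.simple i * p.1 * cs.simple i,
    p.2 + if p.1 = cs.simple i then 1 else 0)

lemma etaFun_invol (i : B) : Function.Involutive (etaFun cs i) := by
  intro p
  obtain ⟨t, z⟩ := p
  simp only [etaFun]
  refine Prod.ext ?_ ?_
  · exact simple_conj_conj cs i t
  · show z + _ + _ = z
    by_cases h : t = cs.simple i
    · simp only [if_pos h, (conj_simple_eq_simple_iff cs i t).mpr h, if_true]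
      have : ∀ x : ZMod 2, x + 1 + 1 = x := by decide
      exact this z
    · simp only [if_neg h, (fun hc => h ((conj_simple_eq_simple_iff cs i t).mp hc) : ¬ cs.simple i * t * cs.simple i = cs.simple i), if_false]
      simp
      intro hc; apply h; rw [← cs.inv_simple i]; exact eq_inv_of_mul_eq_one_right hc

/-- The permutation of `W × ZMod 2` associated to a simple reflection. -/
noncomputable def eta (i : B) : Equiv.Perm (W × ZMod 2) :=
  Function.Involutive.toPerm _ (etaFun_invol cs i)

lemma eta_apply (i : B) (t : W) (z : ZMod 2) :
    eta cs i (t, z) = (cs.simple i * t * cs.simple i,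
      z + if t = cs.simple i then 1 else 0) := rfl

lemma eta_pow_apply (i j : B) (k : ℕ) (t : W) (z : ZMod 2) :
    ((eta cs i * eta cs j) ^ k) (t, z) =
      ((cs.simple i * cs.simple j) ^ k * t * (cs.simple j * cs.simple i) ^ k,
       z + ∑ n ∈ Finset.range (2 * k),
         (if t = (cs.simple j * cs.simple i) ^ n * cs.simple j then (1 : ZMod 2) else 0)) := by
  have key : ∀ n : ℕ, (cs.simple j * cs.simple i) ^ (n + 1 + 1) * cs.simple j
      = cs.simple j * (cs.simple i * ((cs.simple j * cs.simple i) ^ n * cs.simple j)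
          * cs.simple i) * cs.simple j := by
    intro n
    rw [pow_succ', pow_succ']
    rw [show (cs.simple j * cs.simple i) * (cs.simple j * cs.simple i) ^ n
        = (cs.simple j * cs.simple i) ^ n * (cs.simple j * cs.simple i) from by
      rw [← pow_succ', pow_succ]]
    simp only [mul_assoc]
  induction k generalizing t z with
  | zero => simp
  | succ k ih =>
    have hstep : ((eta cs i * eta cs j) ^ (k+1)) (t, z)
        = ((eta cs i * eta cs j) ^ k) ((eta cs i * eta cs j) (t, z)) := by
      rw [pow_succ]
      rfl
    have happ : (eta cs i * eta cs j) (t, z) =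
        (cs.simple i * (cs.simple j * t * cs.simple j) * cs.simple i,
         z + (if t = cs.simple j then (1 : ZMod 2) else 0)
           + (if cs.simple j * t * cs.simple j = cs.simple i then (1 : ZMod 2) else 0)) := by
      show eta cs i (eta cs j (t, z)) = _
      rw [eta_apply, eta_apply]
    rw [hstep, happ, ih]
    refine Prod.ext ?_ ?_
    · show (cs.simple i * cs.simple j) ^ k * (cs.simple i * (cs.simple j * t * cs.simple j) * cs.simple i) * (cs.simple j * cs.simple i) ^ k = _
      rw [pow_succ (cs.simple i * cs.simple j) k, pow_succ' (cs.simple j * cs.simple i) k]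
      simp only [mul_assoc]
    · show _ + ∑ n ∈ Finset.range (2 * k), _ = _
      have h2k : 2 * (k + 1) = (2 * k + 1) + 1 := by ring
      rw [h2k, Finset.sum_range_succ', Finset.sum_range_succ']
      have hterm : ∀ n : ℕ,
          (if cs.simple i * (cs.simple j * t * cs.simple j) * cs.simple i
              = (cs.simple j * cs.simple i) ^ n * cs.simple j then (1 : ZMod 2) else 0)
          = (if t = (cs.simple j * cs.simple i) ^ (n + 1 + 1) * cs.simple j then (1 : ZMod 2) else 0) := by
        intro n
        congr 1
        rw [eq_iff_iff]
        rw [simple_conj_eq_iff, simple_conj_eq_iff, key n]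
      have h0 : (if t = (cs.simple j * cs.simple i) ^ 0 * cs.simple j then (1 : ZMod 2) else 0)
          = (if t = cs.simple j then (1 : ZMod 2) else 0) := by
        congr 1
        rw [pow_zero, one_mul]
      have h1 : (if t = (cs.simple j * cs.simple i) ^ (0 + 1) * cs.simple j then (1 : ZMod 2) else 0)
          = (if cs.simple j * t * cs.simple j = cs.simple i then (1 : ZMod 2) else 0) := by
        congr 1
        rw [eq_iff_iff]
        rw [simple_conj_eq_iff]
        rw [zero_add, pow_one]
      rw [Finset.sum_congr rfl (fun n _ => (hterm n))]
      rw [h0, h1]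
      ring

lemma eta_liftable : M.IsLiftable (fun i => eta cs i) := by
  intro i j
  apply Equiv.ext
  rintro ⟨t, z⟩
  rw [show ((fun i => eta cs i) i * (fun i => eta cs i) j) = eta cs i * eta cs j from rfl]
  rw [eta_pow_apply]
  have h1 : (cs.simple i * cs.simple j) ^ (M i j) = 1 := cs.simple_mul_simple_pow i j
  have h2 : (cs.simple j * cs.simple i) ^ (M i j) = 1 := cs.simple_mul_simple_pow' i j
  have hsum : ∑ n ∈ Finset.range (2 * M i j),
      (if t = (cs.simple j * cs.simple i) ^ n * cs.simple j then (1 : ZMod 2) else 0) = 0 := by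
    have hper : ∀ n : ℕ,
        (if t = (cs.simple j * cs.simple i) ^ (M i j + n) * cs.simple j then (1 : ZMod 2) else 0)
        = (if t = (cs.simple j * cs.simple i) ^ n * cs.simple j then (1 : ZMod 2) else 0) := by
      intro n
      rw [pow_add, h2, one_mul]
    rw [two_mul, Finset.sum_range_add]
    rw [Finset.sum_congr rfl (fun n _ => hper n)]
    have : ∀ x : ZMod 2, x + x = 0 := by decide
    exact this _
  rw [h1, h2, hsum]
  simp

/-- The parity representation `W →* Perm (W × ZMod 2)`. -/
noncomputable def P : W →* Equiv.Perm (W × ZMod 2) :=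
  cs.lift ⟨fun i => eta cs i, eta_liftable cs⟩

lemma P_simple (i : B) : P cs (cs.simple i) = eta cs i :=
  cs.lift_apply_simple (eta_liftable cs) i

/-- The parity cocycle. -/
noncomputable def eps (w t : W) : ZMod 2 := ((P cs w) (t, 0)).2

lemma P_apply (w : W) : ∀ t : W, ∀ z : ZMod 2,
    P cs w (t, z) = (w * t * w⁻¹, z + eps cs w t) := by
  induction w using cs.simple_induction_left with
  | one =>
    intro t z
    have h1 : P cs (1 : W) = 1 := map_one _
    have h0 : eps cs 1 t = 0 := by
      show ((P cs (1:W)) (t, 0)).2 = 0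
      rw [h1]
      rfl
    rw [h1, h0]
    simp
  | mul_simple_left w i ih =>
    intro t z
    have key : ∀ z' : ZMod 2, P cs (cs.simple i * w) (t, z') =
        (cs.simple i * (w * t * w⁻¹) * cs.simple i,
         z' + eps cs w t + if w * t * w⁻¹ = cs.simple i then 1 else 0) := by
      intro z'
      rw [map_mul, Equiv.Perm.mul_apply, ih t z', P_simple, eta_apply]
    have heps : eps cs (cs.simple i * w) t
        = eps cs w t + if w * t * w⁻¹ = cs.simple i then 1 else 0 := by
      show ((P cs (cs.simple i * w)) (t, 0)).2 = _
      rw [key 0]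
      show (0 : ZMod 2) + _ + _ = _
      ring
    rw [key z, heps]
    refine Prod.ext ?_ ?_
    · show cs.simple i * (w * t * w⁻¹) * cs.simple i = (cs.simple i * w) * t * (cs.simple i * w)⁻¹
      rw [mul_inv_rev, cs.inv_simple]
      group
    · show _ = z + _
      ring

lemma eps_mul (a b t : W) : eps cs (a * b) t = eps cs b t + eps cs a (b * t * b⁻¹) := by
  show ((P cs (a * b)) (t, 0)).2 = _
  rw [map_mul, Equiv.Perm.mul_apply, P_apply cs b t 0, zero_add,
    P_apply cs a (b * t * b⁻¹) (eps cs b t)]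

lemma eps_simple (i : B) (t : W) :
    eps cs (cs.simple i) t = if t = cs.simple i then 1 else 0 := by
  show ((P cs (cs.simple i)) (t, 0)).2 = _
  rw [P_simple, eta_apply]
  show (0 : ZMod 2) + _ = _
  rw [zero_add]

lemma eps_count (ω : List B) (t : W) :
    eps cs (cs.wordProd ω) t = ((cs.rightInvSeq ω).count t : ZMod 2) := by
  induction ω with
  | nil =>
    have h1 : P cs (1 : W) = 1 := map_one _
    show ((P cs (cs.wordProd [])) (t, 0)).2 = _
    rw [cs.wordProd_nil, h1]
    rfl
  | cons i ω ih =>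
    rw [cs.wordProd_cons, eps_mul, ih, eps_simple]
    have hris : cs.rightInvSeq (i :: ω)
        = ((cs.wordProd ω)⁻¹ * cs.simple i * cs.wordProd ω) :: cs.rightInvSeq ω := rfl
    rw [hris]
    simp only [List.count_cons, beq_iff_eq]
    have hiff : (cs.wordProd ω * t * (cs.wordProd ω)⁻¹ = cs.simple i)
        ↔ (t = (cs.wordProd ω)⁻¹ * cs.simple i * cs.wordProd ω) := conj_eq_iff _ _ _
    by_cases hc : t = (cs.wordProd ω)⁻¹ * cs.simple i * cs.wordProd ω
    · rw [if_pos (hiff.mpr hc), if_pos hc.symm]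
      push_cast
      ring
    · rw [if_neg (fun hx => hc (hiff.mp hx)), if_neg (fun hx => hc hx.symm)]
      push_cast
      ring

lemma eps_conj_simple (j : B) (r : W) (h : eps cs r r = 1) :
    eps cs (cs.simple j * r * cs.simple j) (cs.simple j * r * cs.simple j) = 1 := by
  have e1 := eps_mul cs (cs.simple j * r) (cs.simple j) (cs.simple j * r * cs.simple j)
  have e2 : cs.simple j * (cs.simple j * r * cs.simple j) * (cs.simple j)⁻¹ = r := by
    rw [cs.inv_simple, simple_conj_conj]
  rw [e2] at e1
  have e3 := eps_mul cs (cs.simple j) r r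
  have e4 : r * r * r⁻¹ = r := by group
  rw [e4, h] at e3
  rw [e1, e3]
  rw [eps_simple, eps_simple]
  by_cases hc : r = cs.simple j
  · rw [if_pos ((conj_simple_eq_simple_iff cs j r).mpr hc), if_pos hc]; decide
  · rw [if_neg (fun hx => hc ((conj_simple_eq_simple_iff cs j r).mp hx)), if_neg hc]; simp

lemma eps_refl_aux (w : W) : ∀ i : B,
    eps cs (w * cs.simple i * w⁻¹) (w * cs.simple i * w⁻¹) = 1 := by
  induction w using cs.simple_induction_left with
  | one =>
    intro i
    simp only [one_mul, inv_one, mul_one]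
    rw [eps_simple, if_pos rfl]
  | mul_simple_left w j ih =>
    intro i
    have hT : (cs.simple j * w) * cs.simple i * (cs.simple j * w)⁻¹
        = cs.simple j * (w * cs.simple i * w⁻¹) * cs.simple j := by
      rw [mul_inv_rev, cs.inv_simple]
      group
    rw [hT]
    exact eps_conj_simple cs j _ (ih i)

lemma eps_refl_self {t : W} (ht : cs.IsReflection t) : eps cs t t = 1 := by
  obtain ⟨w, i, rfl⟩ := ht
  exact eps_refl_aux cs w i

/-- **Strong exchange property** (valid for an arbitrary word). -/
lemma strong_exchange {w t : W} (ht : cs.IsReflection t)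
    (hlt : cs.length (w * t) < cs.length w) {ω : List B} (hw : cs.wordProd ω = w) :
    ∃ k, k < ω.length ∧ cs.wordProd (ω.eraseIdx k) = w * t := by
  have heps : eps cs w t = 1 := by
    by_contra h0
    have h0' : eps cs w t = 0 := by
      have hd : ∀ x : ZMod 2, x = 0 ∨ x = 1 := by decide
      rcases hd (eps cs w t) with h | h
      · exact h
      · exact absurd h h0
    have hwt : eps cs (w * t) t = 1 := by
      rw [eps_mul]
      have e1 : t * t * t⁻¹ = t := by group
      rw [e1, eps_refl_self cs ht, h0']
      decide
    obtain ⟨ω₁, hred₁, hprod₁⟩ := cs.exists_reduced_word' (w * t)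
    have hcount : (((cs.rightInvSeq ω₁).count t : ℕ) : ZMod 2) = 1 := by
      rw [← eps_count, ← hprod₁, hwt]
    have hmem : t ∈ cs.rightInvSeq ω₁ := by
      by_contra hnm
      rw [List.count_eq_zero_of_not_mem hnm] at hcount
      simp at hcount
    have hinv := cs.isRightInversion_of_mem_rightInvSeq hred₁ hmem
    rw [← hprod₁] at hinv
    have hlt2 : cs.length (w * t * t) < cs.length (w * t) := hinv.2
    rw [mul_assoc, ht.mul_self, mul_one] at hlt2
    omega
  have hcount : (((cs.rightInvSeq ω).count t : ℕ) : ZMod 2) = 1 := by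
    rw [← eps_count, hw, heps]
  have hmem : t ∈ cs.rightInvSeq ω := by
    by_contra hnm
    rw [List.count_eq_zero_of_not_mem hnm] at hcount
    simp at hcount
  obtain ⟨k, hk, hkt⟩ := List.mem_iff_getElem.mp hmem
  rw [cs.length_rightInvSeq] at hk
  refine ⟨k, hk, ?_⟩
  have hgetD : (cs.rightInvSeq ω).getD k 1 = t := by
    rw [List.getD_eq_getElem?_getD]
    rw [List.getElem?_eq_getElem (by rw [cs.length_rightInvSeq]; exact hk)]
    simpa using hkt
  rw [← hw, ← cs.wordProd_mul_getD_rightInvSeq, hgetD]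


/-! ### Deletion property -/

lemma exists_reduced_sublist_aux : ∀ n : ℕ, ∀ φ : List B, φ.length ≤ n →
    ∃ ψ : List B, ψ.Sublist φ ∧ cs.IsReduced ψ ∧ cs.wordProd ψ = cs.wordProd φ := by
  intro n
  induction n with
  | zero =>
    intro φ hφ
    have h : φ = [] := List.length_eq_zero_iff.mp (Nat.le_zero.mp hφ)
    subst h
    exact ⟨[], List.Sublist.refl _, by simp [CoxeterSystem.IsReduced], rfl⟩
  | succ n ih =>
    intro φ hφ
    rcases List.eq_nil_or_concat' φ with rfl | ⟨φ₀, i, rfl⟩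
    · exact ⟨[], List.Sublist.refl _, by simp [CoxeterSystem.IsReduced], rfl⟩
    · have hφ₀ : φ₀.length ≤ n := by
        simp only [List.length_append, List.length_singleton] at hφ
        omega
      obtain ⟨ψ₀, hsub₀, hred₀, hprod₀⟩ := ih φ₀ hφ₀
      have hprodφ : cs.wordProd (φ₀ ++ [i]) = cs.wordProd φ₀ * cs.simple i := by
        rw [cs.wordProd_append, cs.wordProd_singleton]
      by_cases hd : cs.IsRightDescent (cs.wordProd φ₀) i
      · obtain ⟨k, hk, hke⟩ := strong_exchange cs (cs.isReflection_simple i) hd hprod₀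
        have hlen : (ψ₀.eraseIdx k).length ≤ n := by
          have h1 : (ψ₀.eraseIdx k).length + 1 = ψ₀.length := List.length_eraseIdx_add_one hk
          have h2 : ψ₀.length ≤ φ₀.length := hsub₀.length_le
          omega
        obtain ⟨ψ, hs, hr, hp⟩ := ih (ψ₀.eraseIdx k) hlen
        refine ⟨ψ, ?_, hr, by rw [hp, hke, hprodφ]⟩
        exact (hs.trans (List.eraseIdx_sublist ψ₀ k)).trans
          (hsub₀.trans (List.sublist_append_left φ₀ [i]))
      · refine ⟨ψ₀ ++ [i], hsub₀.append_right [i], ?_, ?_⟩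
        · show cs.length (cs.wordProd (ψ₀ ++ [i])) = (ψ₀ ++ [i]).length
          rw [cs.wordProd_append, cs.wordProd_singleton, hprod₀,
            cs.not_isRightDescent_iff.mp hd]
          have : cs.length (cs.wordProd ψ₀) = ψ₀.length := hred₀
          rw [← hprod₀, this]
          simp
        · rw [cs.wordProd_append, cs.wordProd_singleton, hprod₀, hprodφ]

lemma exists_reduced_sublist (φ : List B) :
    ∃ ψ : List B, ψ.Sublist φ ∧ cs.IsReduced ψ ∧ cs.wordProd ψ = cs.wordProd φ :=
  exists_reduced_sublist_aux cs φ.length φ le_rfl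

lemma sub_descent {Ω φ : List B} (hsub : φ.Sublist Ω) {i : B}
    (hd : cs.IsRightDescent (cs.wordProd φ) i) :
    ∃ φ₂ : List B, φ₂.Sublist Ω ∧ cs.wordProd φ₂ = cs.wordProd φ * cs.simple i := by
  obtain ⟨ψ, hs, hr, hp⟩ := exists_reduced_sublist cs φ
  obtain ⟨k, hk, hke⟩ := strong_exchange cs (cs.isReflection_simple i) hd hp
  exact ⟨ψ.eraseIdx k, ((List.eraseIdx_sublist ψ k).trans hs).trans hsub, hke⟩

/-! ### The greedy algorithm reaches `1` on products of subwords -/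

lemma greedy_of_sublist (Ω : List B) : ∀ x : W,
    (∃ φ : List B, φ.Sublist Ω ∧ cs.wordProd φ = x) → greedyAux cs x Ω.reverse = 1 := by
  induction Ω using List.reverseRecOn with
  | nil =>
    rintro x ⟨φ, hsub, rfl⟩
    rw [List.sublist_nil.mp hsub]
    simp [greedyAux]
  | append_singleton Ω₀ i ih =>
    rintro x ⟨φ, hsub, rfl⟩
    have hrev : (Ω₀ ++ [i]).reverse = i :: Ω₀.reverse := by simp
    rw [hrev]
    simp only [greedyAux]
    apply ih
    obtain ⟨φ₁, φ₂, rfl, h₁, h₂⟩ := List.sublist_append_iff.mp hsub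
    rcases List.sublist_singleton.mp h₂ with rfl | rfl
    · rw [List.append_nil]
      by_cases hd : cs.IsRightDescent (cs.wordProd φ₁) i
      · rw [if_pos hd]; exact sub_descent cs h₁ hd
      · rw [if_neg hd]; exact ⟨φ₁, h₁, rfl⟩
    · have hp : cs.wordProd (φ₁ ++ [i]) = cs.wordProd φ₁ * cs.simple i := by
        rw [cs.wordProd_append, cs.wordProd_singleton]
      by_cases hd : cs.IsRightDescent (cs.wordProd (φ₁ ++ [i])) i
      · rw [if_pos hd, hp]
        refine ⟨φ₁, h₁, ?_⟩
        rw [mul_assoc, cs.simple_mul_simple_self, mul_one]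
      · rw [if_neg hd]
        have hd' : cs.IsRightDescent (cs.wordProd φ₁) i := by
          apply (cs.isRightDescent_iff_not_isRightDescent_mul).mpr
          rw [← hp]
          exact hd
        obtain ⟨φ₂, hs₂, hp₂⟩ := sub_descent cs h₁ hd'
        exact ⟨φ₂, hs₂, by rw [hp₂, hp]⟩

/-! ### Chains of reflections (Bruhat order) -/

def csStep (a b : W) : Prop :=
  ∃ t : W, cs.IsReflection t ∧ b = a * t ∧ cs.length a < cs.length b

def chainLE : W → W → Prop := Relation.ReflTransGen (csStep cs)

lemma chainLE_length_le {u v : W} (h : chainLE cs u v) : cs.length u ≤ cs.length v := by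
  induction h with
  | refl => exact le_rfl
  | tail _ hstep ih =>
    obtain ⟨t, _, _, hlt⟩ := hstep
    omega

lemma chainLE_eq_of_length {u v : W} (h : chainLE cs u v)
    (hl : cs.length v ≤ cs.length u) : u = v := by
  rcases Relation.ReflTransGen.cases_head h with rfl | ⟨c, hstep, hch⟩
  · rfl
  · obtain ⟨t, _, _, hlt⟩ := hstep
    have := chainLE_length_le cs hch
    omega

/-! ### Subword implies chain; lifting property -/

lemma AN : ∀ n : ℕ,
    (∀ ω : List B, ω.length ≤ n → cs.IsReduced ω →
      ∀ φ : List B, φ.Sublist ω → chainLE cs (cs.wordProd φ) (cs.wordProd ω)) ∧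
    (∀ (i : B) (u v : W), chainLE cs u v → ¬cs.IsRightDescent u i →
      ¬cs.IsRightDescent v i → cs.length v ≤ n →
      chainLE cs (u * cs.simple i) (v * cs.simple i)) := by
  intro n
  induction n using Nat.strong_induction_on with
  | _ n ihn =>
  constructor
  · -- A : subword implies chain
    intro ω hlen hred φ hsub
    rcases List.eq_nil_or_concat' ω with rfl | ⟨ω₀, i, rfl⟩
    · rw [List.sublist_nil.mp hsub]
      exact Relation.ReflTransGen.refl
    · have hn : ω₀.length + 1 ≤ n := by simpa using hlen
      have hn1 : n - 1 < n := by omega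
      obtain ⟨hA, hN⟩ := ihn (n - 1) hn1
      have hred₀ : cs.IsReduced ω₀ := by
        have h := CoxeterSystem.IsReduced.take hred ω₀.length
        rwa [List.take_left] at h
      have hprod : cs.wordProd (ω₀ ++ [i]) = cs.wordProd ω₀ * cs.simple i := by
        rw [cs.wordProd_append, cs.wordProd_singleton]
      have hlω : cs.length (cs.wordProd (ω₀ ++ [i])) = ω₀.length + 1 := by
        have h : cs.length (cs.wordProd (ω₀ ++ [i])) = (ω₀ ++ [i]).length := hred
        rw [h]; simp
      have hlω₀ : cs.length (cs.wordProd ω₀) = ω₀.length := hred₀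
      have hni : ¬cs.IsRightDescent (cs.wordProd ω₀) i := by
        intro hcon
        have : cs.length (cs.wordProd ω₀ * cs.simple i) < cs.length (cs.wordProd ω₀) := hcon
        rw [← hprod] at this
        omega
      have hstepTop : csStep cs (cs.wordProd ω₀) (cs.wordProd (ω₀ ++ [i])) :=
        ⟨cs.simple i, cs.isReflection_simple i, hprod, by omega⟩
      obtain ⟨φ₁, φ₂, rfl, h₁, h₂⟩ := List.sublist_append_iff.mp hsub
      have hlen₀ : ω₀.length ≤ n - 1 := by omega
      rcases List.sublist_singleton.mp h₂ with rfl | rfl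
      · rw [List.append_nil]
        exact (hA ω₀ hlen₀ hred₀ φ₁ h₁).tail hstepTop
      · have hpφ : cs.wordProd (φ₁ ++ [i]) = cs.wordProd φ₁ * cs.simple i := by
          rw [cs.wordProd_append, cs.wordProd_singleton]
        have hch₁ := hA ω₀ hlen₀ hred₀ φ₁ h₁
        by_cases hd : cs.IsRightDescent (cs.wordProd φ₁) i
        · have hstep1 : csStep cs (cs.wordProd (φ₁ ++ [i])) (cs.wordProd φ₁) := by
            refine ⟨cs.simple i, cs.isReflection_simple i, ?_, ?_⟩
            · rw [hpφ, mul_assoc, cs.simple_mul_simple_self, mul_one]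
            · rw [hpφ]; exact hd
          exact (Relation.ReflTransGen.head hstep1 hch₁).tail hstepTop
        · rw [hpφ, hprod]
          exact hN i _ _ hch₁ hd hni (by omega)
  · -- N : lifting along ascents
    intro i u v hch hu hv hlv
    suffices H : ∀ g : ℕ, ∀ u : W, chainLE cs u v → ¬cs.IsRightDescent u i →
        cs.length v - cs.length u ≤ g → chainLE cs (u * cs.simple i) (v * cs.simple i) by
      exact H (cs.length v) u hch hu (by omega)
    intro g
    induction g with
    | zero =>
      intro u hch hu hgap
      have hle := chainLE_length_le cs hch
      rw [chainLE_eq_of_length cs hch (by omega)]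
      exact Relation.ReflTransGen.refl
    | succ g ihg =>
      intro u hch hu hgap
      rcases Relation.ReflTransGen.cases_head hch with rfl | ⟨u₁, hstep, hch₁⟩
      · exact Relation.ReflTransGen.refl
      · obtain ⟨t, ht, rfl, hlt⟩ := hstep
        have hu₁v : cs.length (u * t) ≤ cs.length v := chainLE_length_le cs hch₁
        have hstepTop : csStep cs v (v * cs.simple i) :=
          ⟨cs.simple i, cs.isReflection_simple i, rfl, by
            have h := cs.not_isRightDescent_iff.mp hv; omega⟩
        by_cases h₁ : cs.IsRightDescent (u * t) i
        · obtain ⟨ζ', hζred, hζprod⟩ := cs.exists_reduced_word' ((u * t) * cs.simple i)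
          have hπζ : cs.wordProd (ζ' ++ [i]) = u * t := by
            rw [cs.wordProd_append, cs.wordProd_singleton, ← hζprod, mul_assoc,
              cs.simple_mul_simple_self, mul_one]
          have hltut : cs.length ((u * t) * t) < cs.length (u * t) := by
            rw [mul_assoc, ht.mul_self, mul_one]; exact hlt
          obtain ⟨k, hk, hke⟩ := strong_exchange cs ht hltut hπζ
          have hke' : cs.wordProd ((ζ' ++ [i]).eraseIdx k) = u := by
            rw [hke, mul_assoc, ht.mul_self, mul_one]
          have hζlen : ζ'.length = cs.length (u * t) - 1 := by
            have hl1 : cs.length ((u * t) * cs.simple i) = ζ'.length := by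
              rw [hζprod]; exact hζred
            have hl2 : cs.length ((u * t) * cs.simple i) + 1 = cs.length (u * t) :=
              cs.isRightDescent_iff.mp h₁
            omega
          have hut1 : 1 ≤ cs.length (u * t) := by omega
          rcases Nat.lt_or_ge k ζ'.length with hkl | hkg
          · have herase : (ζ' ++ [i]).eraseIdx k = ζ'.eraseIdx k ++ [i] :=
              List.eraseIdx_append_of_lt_length hkl [i]
            have hus : u * cs.simple i = cs.wordProd (ζ'.eraseIdx k) := by
              have h : u = cs.wordProd (ζ'.eraseIdx k) * cs.simple i := by
                rw [← cs.wordProd_singleton, ← cs.wordProd_append, ← herase, hke']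
              rw [h, mul_assoc, cs.simple_mul_simple_self, mul_one]
            have hζn : ζ'.length < n := by omega
            have hA' := (ihn ζ'.length hζn).1 ζ' le_rfl hζred (ζ'.eraseIdx k)
              (List.eraseIdx_sublist ζ' k)
            rw [← hus] at hA'
            have hπζ' : cs.wordProd ζ' = (u * t) * cs.simple i := hζprod.symm
            rw [hπζ'] at hA'
            have hstep2 : csStep cs ((u * t) * cs.simple i) (u * t) :=
              ⟨cs.simple i, cs.isReflection_simple i,
                by rw [mul_assoc, cs.simple_mul_simple_self, mul_one], h₁⟩
            exact hA'.trans ((Relation.ReflTransGen.head hstep2 hch₁).tail hstepTop)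
          · have hkeq : k = ζ'.length := by
              have hklen : k < (ζ' ++ [i]).length := hk
              simp only [List.length_append, List.length_singleton] at hklen
              omega
            have herase : (ζ' ++ [i]).eraseIdx k = ζ' := by
              subst hkeq
              rw [List.eraseIdx_eq_take_drop_succ, List.take_left]
              have hdrop : (ζ' ++ [i]).drop (ζ'.length + 1) = [] := by
                apply List.drop_eq_nil_of_le
                simp
              rw [hdrop, List.append_nil]
            have huζ : u = cs.wordProd ζ' := by rw [← hke', herase]
            have hu2 : u = (u * t) * cs.simple i := huζ.trans hζprod.symm
            have hueq : u * cs.simple i = u * t := by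
              conv_lhs => rw [hu2]
              rw [mul_assoc, cs.simple_mul_simple_self, mul_one]
            rw [hueq]
            exact hch₁.tail hstepTop
        · have hrefl : cs.IsReflection (cs.simple i * t * cs.simple i) := by
            have h := ht.conj (cs.simple i)
            rwa [cs.inv_simple] at h
          have hstep1 : csStep cs (u * cs.simple i) ((u * t) * cs.simple i) := by
            refine ⟨cs.simple i * t * cs.simple i, hrefl, ?_, ?_⟩
            · have h := cs.simple_mul_simple_self i
              calc (u * t) * cs.simple i
                  = u * (cs.simple i * cs.simple i) * t * cs.simple i := by rw [h]; group
                _ = u * cs.simple i * (cs.simple i * t * cs.simple i) := by group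
            · have l1 : cs.length (u * cs.simple i) = cs.length u + 1 :=
                cs.not_isRightDescent_iff.mp hu
              have l2 : cs.length ((u * t) * cs.simple i) = cs.length (u * t) + 1 :=
                cs.not_isRightDescent_iff.mp h₁
              omega
          exact Relation.ReflTransGen.head hstep1 (ihg (u * t) hch₁ h₁ (by omega))

/-! ### Chain implies subword of every reduced word -/

lemma subword_of_chain {x w : W} (h : chainLE cs x w) :
    ∀ ω : List B, cs.IsReduced ω → cs.wordProd ω = w →
      ∃ φ : List B, φ.Sublist ω ∧ cs.wordProd φ = x := by
  induction h with
  | refl => intro ω _ hw; exact ⟨ω, List.Sublist.refl ω, hw⟩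
  | @tail b c hxb hstep ih =>
    intro ω hred hw
    obtain ⟨t, ht, rfl, hlt⟩ := hstep
    have hlt' : cs.length (cs.wordProd ω * t) < cs.length (cs.wordProd ω) := by
      rw [hw, mul_assoc, ht.mul_self, mul_one]
      exact hlt
    obtain ⟨k, hk, hke⟩ := strong_exchange cs ht hlt' rfl
    have hkb : cs.wordProd (ω.eraseIdx k) = b := by
      rw [hke, hw, mul_assoc, ht.mul_self, mul_one]
    obtain ⟨ψ, hs, hr, hp⟩ := exists_reduced_sublist cs (ω.eraseIdx k)
    obtain ⟨φ, hφs, hφp⟩ := ih ψ hr (by rw [hp, hkb])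
    exact ⟨φ, (hφs.trans hs).trans (List.eraseIdx_sublist ω k), hφp⟩

end GreedyMaskProof

/-- If `ω` is a reduced expression for `w` and `x ≤ w` in Bruhat order, then the greedy
algorithm applied to `x`, reading the letters of `ω` from right to left, terminates at the
identity. -/
theorem greedy_reaches_one (cs : CoxeterSystem M W) {w x : W} {ω : List B}
    (hred : cs.IsReduced ω) (hprod : cs.wordProd ω = w) (hx : bruhatLE cs x w) :
    greedyAux cs x ω.reverse = 1 := by
  obtain ⟨ω', φ', hred', hprod', hsub', hφ'⟩ := hx
  have hchain : GreedyMaskProof.chainLE cs x w := by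
    have h := (GreedyMaskProof.AN cs ω'.length).1 ω' le_rfl hred' φ' hsub'
    rwa [hφ', hprod'] at h
  obtain ⟨φ, hsub, hφ⟩ := GreedyMaskProof.subword_of_chain cs hchain ω hred hprod
  exact GreedyMaskProof.greedy_of_sublist cs ω x ⟨φ, hsub, hφ⟩
end

section
/- Let w = w₁⋯w_p be a reduced expression for w in a Coxeter group, let σ be a constant mask on w, and let σ' be obtained from σ by changing the rightmost 0-entry of σ to 1. Then σ' is also a constant mask on w. -/
open CoxeterSystem

variable {B W : Type*} [Group W] {M : CoxeterMatrix B}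

namespace SEAux

open Classical in
/-- Count of `q < n` with `c ^ q * t = tgt`. -/
noncomputable def gcount (c tgt t : W) : ℕ → ℕ
  | 0 => 0
  | n + 1 => gcount c tgt t n + (if c ^ n * t = tgt then 1 else 0)

open Classical in
lemma gcount_succ (c tgt t : W) (n : ℕ) :
    gcount c tgt t (n + 1) = gcount c tgt t n + (if c ^ n * t = tgt then 1 else 0) := rfl

open Classical in
lemma gcount_add (c tgt t : W) (a b : ℕ) :
    gcount c tgt t (a + b) = gcount c tgt t a + gcount c tgt (c ^ a * t) b := by
  induction b with
  | zero => simp [gcount]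
  | succ b ih =>
      have h1 : a + (b + 1) = (a + b) + 1 := by omega
      rw [h1, gcount_succ, ih, gcount_succ]
      have h2 : c ^ (a + b) * t = c ^ b * (c ^ a * t) := by
        rw [add_comm a b, pow_add, mul_assoc]
      rw [h2, add_assoc]

open Classical in
lemma gcount_congr {c tgt t₁ t₂ : W} (h : ∀ q : ℕ, c ^ q * t₁ = tgt ↔ c ^ q * t₂ = tgt)
    (n : ℕ) : gcount c tgt t₁ n = gcount c tgt t₂ n := by
  induction n with
  | zero => rfl
  | succ n ih =>
      rw [gcount_succ, gcount_succ, ih]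
      by_cases h' : c ^ n * t₁ = tgt
      · rw [if_pos h', if_pos ((h n).mp h')]
      · rw [if_neg h', if_neg (fun hh => h' ((h n).mpr hh))]

lemma gcount_even_of_pow_eq_one {c t : W} {m : ℕ} (tgt : W) (h : c ^ m = 1) :
    Even (gcount c tgt t (2 * m)) := by
  have h1 : 2 * m = m + m := by omega
  rw [h1, gcount_add, h, one_mul]
  exact ⟨gcount c tgt t m, rfl⟩

lemma decide_odd_add (a b : ℕ) :
    decide (Odd (a + b)) = xor (decide (Odd a)) (decide (Odd b)) := by
  simp only [Nat.odd_iff]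
  by_cases h1 : a % 2 = 1 <;> by_cases h2 : b % 2 = 1
  · have h : ¬((a + b) % 2 = 1) := by omega
    simp [h, h1, h2]
  · have h : (a + b) % 2 = 1 := by omega
    simp [h, h1, h2]
  · have h : (a + b) % 2 = 1 := by omega
    simp [h, h1, h2]
  · have h : ¬((a + b) % 2 = 1) := by omega
    simp [h, h1, h2]

variable (cs : CoxeterSystem M W)

local prefix:100 "s" => cs.simple
local prefix:100 "π" => cs.wordProd
local prefix:100 "ℓ" => cs.length
local prefix:100 "ris" => cs.rightInvSeq
local prefix:100 "lis" => cs.leftInvSeq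

open Classical in
/-- The sign-flipping map associated to a simple reflection. -/
noncomputable def flip (i : B) : W × Bool → W × Bool :=
  fun p => (s i * p.1 * s i, if p.1 = s i then !p.2 else p.2)

open Classical in
lemma flip_apply (i : B) (t : W) (ε : Bool) :
    flip cs i (t, ε) = (s i * t * s i, if t = s i then !ε else ε) := rfl

lemma flip_involutive (i : B) : Function.Involutive (flip cs i) := by
  intro ⟨t, ε⟩
  have hs : s i * s i = 1 := cs.simple_mul_simple_self i
  have key : s i * t * s i = s i ↔ t = s i := by
    constructor
    · intro h
      have := congrArg (fun x => s i * x * s i) h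
      simpa [mul_assoc, hs] using this
    · intro h; rw [h, hs, one_mul]
  rw [flip_apply, flip_apply]
  by_cases h : t = s i
  · simp only [if_pos h, if_pos (key.mpr h)]
    rw [h]
    simp [mul_assoc, hs]
  · simp only [if_neg h, if_neg (fun hh => h (key.mp hh))]
    refine Prod.ext ?_ rfl
    show s i * (s i * t * s i) * s i = t
    calc s i * (s i * t * s i) * s i = (s i * s i) * t * (s i * s i) := by group
    _ = t := by rw [hs]; group

/-- The sign-flipping permutation associated to a simple reflection. -/
noncomputable def flipPerm (i : B) : Equiv.Perm (W × Bool) :=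
  (flip_involutive cs i).toPerm

lemma flipPerm_apply (i : B) (p : W × Bool) : flipPerm cs i p = flip cs i p := rfl

open Classical in
lemma mulflip_pow_apply (i j : B) (r : ℕ) (t : W) (ε : Bool) :
    ((flipPerm cs i * flipPerm cs j) ^ r) (t, ε) =
      ((s i * s j) ^ r * t * ((s i * s j) ^ r)⁻¹,
        xor ε (decide (Odd (gcount (s i * s j) (s j) t (2 * r))))) := by
  set c := s i * s j with hc
  have hkey : s j * c = c⁻¹ * s j := by
    rw [hc, mul_inv_rev, cs.inv_simple, cs.inv_simple]
    group
  have hsjc : ∀ a : W, s j * a * s j = s i ↔ c ^ 1 * a = s j := by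
    intro a
    rw [pow_one]
    constructor
    · intro h
      have : s i * (s j * a * s j) * s j = s i * s i * s j := by rw [h]
      simpa [← mul_assoc, cs.simple_mul_simple_self, hc] using this
    · intro h
      have h2 : s i * (s j * a * s j) = 1 := by
        have : c * a * s j = s j * s j := by rw [h]
        rw [hc] at this
        simpa [mul_assoc, cs.simple_mul_simple_self] using this
      calc s j * a * s j = s i * (s i * (s j * a * s j)) := by
            rw [← mul_assoc, cs.simple_mul_simple_self, one_mul]
      _ = s i := by rw [h2, mul_one]
  induction r generalizing t ε with
  | zero => simp [gcount]
  | succ r ih =>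
      rw [pow_succ, Equiv.Perm.mul_apply]
      have hg2 : ∀ a : W, gcount c (s j) a 2 =
          (if a = s j then 1 else 0) + (if s j * a * s j = s i then 1 else 0) := by
        intro a
        rw [show (2:ℕ) = 0 + 1 + 1 from rfl, gcount_succ, gcount_succ]
        have e0 : (if c ^ 0 * a = s j then (1:ℕ) else 0) = if a = s j then 1 else 0 := by
          refine if_congr ?_ rfl rfl; rw [pow_zero, one_mul]
        have e1 : (if c ^ 1 * a = s j then (1:ℕ) else 0) =
            if s j * a * s j = s i then 1 else 0 := by
          refine if_congr ?_ rfl rfl; exact (hsjc a).symm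
        rw [show gcount c (s j) a 0 = 0 from rfl, zero_add, e0, e1]
      have hstep : (flipPerm cs i * flipPerm cs j) (t, ε) =
          (c * t * c⁻¹, xor ε (decide (Odd (gcount c (s j) t 2)))) := by
        rw [Equiv.Perm.mul_apply, flipPerm_apply, flipPerm_apply, flip_apply, flip_apply]
        congr 1
        · rw [hc, mul_inv_rev, cs.inv_simple, cs.inv_simple]
          group
        · rw [hg2 t]
          by_cases hA : t = s j <;> by_cases hB : s j * t * s j = s i
          · rw [if_pos hB, if_pos hA, if_pos hA, if_pos hB]
            cases ε <;> simp [Nat.odd_iff]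
          · rw [if_neg hB, if_pos hA, if_pos hA, if_neg hB]
            cases ε <;> simp [Nat.odd_iff]
          · rw [if_pos hB, if_neg hA, if_neg hA, if_pos hB]
            cases ε <;> simp [Nat.odd_iff]
          · rw [if_neg hB, if_neg hA, if_neg hA, if_neg hB]
            cases ε <;> simp [Nat.odd_iff]
      rw [hstep, ih _ _]
      have hconj : ∀ q : ℕ, c ^ q * (c * t * c⁻¹) = s j ↔ c ^ q * (c ^ 2 * t) = s j := by
        intro q
        constructor
        · intro h
          have e : c ^ q * (c ^ 2 * t) = c * (c ^ q * (c * t * c⁻¹)) * c := by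
            rw [pow_two]; group
          rw [e, h, mul_assoc, hkey]
          group
        · intro h
          have e : c ^ q * (c * t * c⁻¹) = c⁻¹ * (c ^ q * (c ^ 2 * t)) * c⁻¹ := by
            rw [pow_two]; group
          rw [e, h]
          have : c⁻¹ * s j = s j * c := hkey.symm
          rw [this]
          group
      refine Prod.ext ?_ ?_
      · show c ^ r * (c * t * c⁻¹) * (c ^ r)⁻¹ = c ^ (r + 1) * t * (c ^ (r + 1))⁻¹
        rw [pow_succ]; group
      · show xor (xor ε (decide (Odd (gcount c (s j) t 2))))
            (decide (Odd (gcount c (s j) (c * t * c⁻¹) (2 * r)))) = _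
        rw [gcount_congr hconj, show 2 * (r + 1) = 2 + 2 * r by omega, gcount_add,
          decide_odd_add, Bool.xor_assoc]

lemma flip_liftable : M.IsLiftable (flipPerm cs) := by
  intro i j
  apply Equiv.ext
  rintro ⟨t, ε⟩
  rw [mulflip_pow_apply]
  have h1 : (s i * s j) ^ M i j = 1 := cs.simple_mul_simple_pow i j
  have h2 : ¬ Odd (gcount (s i * s j) (s j) t (2 * M i j)) := by
    rw [Nat.not_odd_iff_even]
    exact gcount_even_of_pow_eq_one _ h1
  simp [h1, h2]

/-- The sign homomorphism. -/
noncomputable def phi : W →* Equiv.Perm (W × Bool) :=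
  cs.lift ⟨flipPerm cs, flip_liftable cs⟩

lemma phi_simple (i : B) : phi cs (s i) = flipPerm cs i :=
  cs.lift_apply_simple (flip_liftable cs) i

open Classical in
lemma phi_wordProd (ω : List B) (t : W) (ε : Bool) :
    phi cs (π ω) (t, ε) =
      (π ω * t * (π ω)⁻¹,
        xor ε (decide (Odd ((ris ω).countP (fun x => decide (x = t)))))) := by
  induction ω generalizing ε with
  | nil => simp [rightInvSeq]
  | cons i ω ih =>
      rw [cs.wordProd_cons, map_mul, Equiv.Perm.mul_apply, ih, phi_simple,
        flipPerm_apply, flip_apply]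
      have hris : ris (i :: ω) = ((π ω)⁻¹ * s i * (π ω)) :: ris ω := rfl
      rw [hris, List.countP_cons]
      refine Prod.ext ?_ ?_
      · show s i * (π ω * t * (π ω)⁻¹) * s i = π (i :: ω) * t * (π (i :: ω))⁻¹
        rw [cs.wordProd_cons, mul_inv_rev, cs.inv_simple]
        group
      · show (if π ω * t * (π ω)⁻¹ = s i then
              !(xor ε (decide (Odd ((ris ω).countP (fun x => decide (x = t))))))
            else (xor ε (decide (Odd ((ris ω).countP (fun x => decide (x = t))))))) = _
        have hcond : (π ω * t * (π ω)⁻¹ = s i) ↔ (((π ω)⁻¹ * s i * (π ω) : W) = t) := by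
          constructor
          · intro h; rw [← h]; group
          · intro h; rw [← h]; group
        set a := (ris ω).countP (fun x => decide (x = t)) with ha
        by_cases h : π ω * t * (π ω)⁻¹ = s i
        · rw [if_pos h]
          have hd : (decide (((π ω)⁻¹ * s i * (π ω) : W) = t) : Bool) = true := by
            simp [hcond.mp h]
          rw [hd]
          show (!(ε ^^ decide (Odd a))) =
            (ε ^^ decide (Odd (a + if (true : Bool) = true then 1 else 0)))
          rw [if_pos rfl, decide_odd_add a 1]
          have h1 : decide (Odd 1) = true := by simp [Nat.odd_iff]
          rw [h1]
          cases ε <;> cases hb : decide (Odd a) <;> simp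
        · rw [if_neg h]
          have hd : (decide (((π ω)⁻¹ * s i * (π ω) : W) = t) : Bool) = false := by
            simp only [decide_eq_false_iff_not]
            exact fun hh => h (hcond.mpr hh)
          rw [hd]
          show (ε ^^ decide (Odd a)) =
            (ε ^^ decide (Odd (a + if (false : Bool) = true then 1 else 0)))
          simp

open Classical in
/-- The sign of `w` at `t`. -/
noncomputable def ebit (w t : W) : Bool := (phi cs w (t, false)).2

open Classical in
lemma phi_apply (w t : W) (ε : Bool) :
    phi cs w (t, ε) = (w * t * w⁻¹, xor ε (ebit cs w t)) := by
  obtain ⟨ω, rfl⟩ := cs.wordProd_surjective w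
  rw [phi_wordProd, ebit, phi_wordProd]
  simp

open Classical in
lemma ebit_eq_countP (ω : List B) (t : W) :
    ebit cs (π ω) t = decide (Odd ((ris ω).countP (fun x => decide (x = t)))) := by
  rw [ebit, phi_wordProd]
  simp

lemma ebit_false_of_not_inversion {w t : W} (h : ¬ ℓ (w * t) < ℓ w) :
    ebit cs w t = false := by
  obtain ⟨ω, hlen, rfl⟩ := cs.exists_reduced_word w
  classical
  rw [ebit_eq_countP]
  simp only [decide_eq_false_iff_not, Nat.not_odd_iff_even]
  by_contra hodd
  rw [Nat.not_even_iff_odd] at hodd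
  have hpos : 0 < (ris ω).countP (fun x => decide (x = t)) := hodd.pos
  rw [List.countP_pos_iff] at hpos
  obtain ⟨x, hx, hxt⟩ := hpos
  rw [decide_eq_true_iff] at hxt
  subst hxt
  exact h (cs.isRightInversion_of_mem_rightInvSeq hlen hx).2

lemma ebit_self {t : W} (ht : cs.IsReflection t) : ebit cs t t = true := by
  obtain ⟨v, i, rfl⟩ := ht
  obtain ⟨ω, rfl⟩ := cs.wordProd_surjective v
  induction ω with
  | nil =>
      simp only [cs.wordProd_nil, one_mul, inv_one, mul_one]
      rw [ebit, phi_simple, flipPerm_apply, flip_apply, if_pos rfl]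
      rfl
  | cons cL ω ih =>
      set t' := π ω * s i * (π ω)⁻¹ with ht'
      have hrefl' : cs.IsReflection t' := ⟨π ω, i, rfl⟩
      have hconj : π (cL :: ω) * s i * (π (cL :: ω))⁻¹ = s cL * t' * s cL := by
        rw [cs.wordProd_cons, mul_inv_rev, cs.inv_simple, ht']
        group
      rw [hconj]
      by_cases hcase : s cL * t' * s cL = t'
      · rw [hcase]; exact ih
      · by_cases hcase2 : t' = s cL
        · exfalso
          apply hcase
          rw [hcase2, cs.simple_mul_simple_self, one_mul]
        · set t'' := s cL * t' * s cL with ht''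
          have h1 : phi cs t'' = phi cs (s cL) * phi cs t' * phi cs (s cL) := by
            rw [← map_mul, ← map_mul]
          have h2 : t'' ≠ s cL := by
            intro hh
            apply hcase2
            have hh' : s cL * t' * s cL = s cL := ht''.symm.trans hh
            calc t' = (s cL * s cL) * t' * (s cL * s cL) := by
                  rw [cs.simple_mul_simple_self]; group
            _ = s cL * (s cL * t' * s cL) * s cL := by group
            _ = s cL * s cL * s cL := by rw [hh']
            _ = s cL := by rw [cs.simple_mul_simple_self, one_mul]
          rw [ebit, h1]
          simp only [Equiv.Perm.mul_apply]
          have st1 : phi cs (s cL) ((t'' : W), false) = (t', false) := by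
            rw [phi_simple, flipPerm_apply, flip_apply, if_neg h2]
            refine Prod.ext ?_ rfl
            show s cL * t'' * s cL = t'
            rw [ht'']
            calc s cL * (s cL * t' * s cL) * s cL
                = (s cL * s cL) * t' * (s cL * s cL) := by group
            _ = t' := by rw [cs.simple_mul_simple_self]; group
          rw [st1]
          have st2 : phi cs t' ((t' : W), false) = (t', true) := by
            rw [phi_apply, ih]
            refine Prod.ext ?_ rfl
            show t' * t' * t'⁻¹ = t'
            group
          rw [st2]
          rw [phi_simple, flipPerm_apply, flip_apply, if_neg hcase2]

lemma ebit_true_of_inversion {w t : W} (ht : cs.IsReflection t) (h : ℓ (w * t) < ℓ w) :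
    ebit cs w t = true := by
  have hw : w = (w * t) * t := by
    rw [mul_assoc, ht.mul_self, mul_one]
  have h1 : phi cs w (t, false) = phi cs (w * t) (phi cs t (t, false)) := by
    rw [← Equiv.Perm.mul_apply, ← map_mul, ← hw]
  have h2 : phi cs t (t, false) = (t, true) := by
    rw [phi_apply, ebit_self cs ht]
    refine Prod.ext ?_ rfl
    show t * t * t⁻¹ = t
    group
  have h3 : ebit cs (w * t) t = false := by
    apply ebit_false_of_not_inversion
    rw [mul_assoc, ht.mul_self, mul_one]
    omega
  rw [ebit, h1, h2, phi_apply, h3]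
  rfl

/-- Strong exchange property, right-handed version. -/
lemma mem_rightInvSeq_of_inversion {ω : List B} {t : W} (ht : cs.IsReflection t)
    (h : ℓ (π ω * t) < ℓ (π ω)) : t ∈ ris ω := by
  classical
  have h1 : ebit cs (π ω) t = true := ebit_true_of_inversion cs ht h
  rw [ebit_eq_countP] at h1
  rw [decide_eq_true_iff] at h1
  have hpos : 0 < (ris ω).countP (fun x => decide (x = t)) := h1.pos
  rw [List.countP_pos_iff] at hpos
  obtain ⟨x, hx, hxt⟩ := hpos
  rw [decide_eq_true_iff] at hxt
  exact hxt ▸ hx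

/-- Strong exchange property, left-handed version. -/
lemma mem_leftInvSeq_of_inversion {ω : List B} {t : W} (ht : cs.IsReflection t)
    (h : ℓ (t * π ω) < ℓ (π ω)) : t ∈ lis ω := by
  have h1 : ℓ (π ω.reverse * t) < ℓ (π ω.reverse) := by
    rw [cs.wordProd_reverse]
    have e : (π ω)⁻¹ * t = (t * π ω)⁻¹ := by rw [mul_inv_rev, ht.inv]
    rw [e, cs.length_inv, cs.length_inv]
    exact h
  have h2 := mem_rightInvSeq_of_inversion cs ht h1
  rw [cs.rightInvSeq_reverse] at h2
  exact (List.mem_reverse).mp h2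

lemma exists_eraseIdx_of_inversion {ω : List B} {t : W} (ht : cs.IsReflection t)
    (h : ℓ (t * π ω) < ℓ (π ω)) :
    ∃ m, m < ω.length ∧ t * π ω = π (ω.eraseIdx m) := by
  have h1 := mem_leftInvSeq_of_inversion cs ht h
  rw [List.mem_iff_getElem] at h1
  obtain ⟨m, hm, hval⟩ := h1
  rw [cs.length_leftInvSeq] at hm
  refine ⟨m, hm, ?_⟩
  rw [← cs.getD_leftInvSeq_mul_wordProd ω m]
  congr 1
  rw [List.getD_eq_getElem _ _ (by rw [cs.length_leftInvSeq]; exact hm)]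
  exact hval.symm

end SEAux

namespace MaskL

variable {α : Type*}

lemma msw_cons_true (x : α) (l : List α) (σ : List Bool) :
    maskSubword (x :: l) (true :: σ) = x :: maskSubword l σ := rfl

lemma msw_cons_false (x : α) (l : List α) (σ : List Bool) :
    maskSubword (x :: l) (false :: σ) = maskSubword l σ := rfl

lemma msw_append {a b : List α} {c d : List Bool} (h : a.length = c.length) :
    maskSubword (a ++ b) (c ++ d) = maskSubword a c ++ maskSubword b d := by
  unfold maskSubword
  rw [List.zip_append h, List.filterMap_append]

lemma msw_all_true {l : List α} {σ : List Bool} (h : ∀ b ∈ σ, b = true)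
    (hl : l.length ≤ σ.length) : maskSubword l σ = l := by
  induction l generalizing σ with
  | nil => rfl
  | cons x l ih =>
      cases σ with
      | nil => simp at hl
      | cons b σ =>
          have hb : b = true := h b List.mem_cons_self
          subst hb
          rw [msw_cons_true]
          rw [ih (fun b hb => h b (List.mem_cons_of_mem _ hb)) (by simpa using hl)]

end MaskL

/-- Changing the rightmost `0`-entry of a constant mask to `1` yields a constant mask. -/
theorem set_rightmost_zero_constant (cs : CoxeterSystem M W) {ω : List B} {σ : List Bool}
    (hred : cs.IsReduced ω) (hσ : IsConstantMask cs ω σ)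
    (k : ℕ) (hk : k < σ.length) (h0 : σ.get ⟨k, hk⟩ = false)
    (hrt : ∀ j (hj : j < σ.length), k < j → σ.get ⟨j, hj⟩ = true) :
    IsConstantMask cs ω (σ.set k true) := by
  classical
  obtain ⟨hlen, hnd⟩ := hσ
  have hkω : k < ω.length := hlen ▸ hk
  set σ' := σ.set k true with hσ'
  have hσ'len : σ'.length = ω.length := by rw [hσ', List.length_set]; exact hlen
  -- σ' agrees with σ on takes up to k
  have htake_le : ∀ j, j ≤ k → σ'.take j = σ.take j := by
    intro j hj
    apply List.ext_getElem
    · simp [hσ']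
    · intro i h1 h2
      rw [List.length_take] at h2
      have hij : i < j := lt_of_lt_of_le h2 (min_le_left _ _)
      rw [List.getElem_take, List.getElem_take]
      exact List.getElem_set_ne (by omega) (by rw [List.length_set]; omega)
  -- the element u
  set u := cs.wordProd (maskSubword (ω.take k) (σ.take k)) with hu
  -- mask decompositions
  have hσk : σ[k] = false := h0
  have hdecomp : ∀ j, k < j → j ≤ ω.length →
      maskSubword (ω.take j) (σ.take j) =
        maskSubword (ω.take k) (σ.take k) ++ (ω.take j).drop (k + 1) ∧
      maskSubword (ω.take j) (σ'.take j) =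
        maskSubword (ω.take k) (σ.take k) ++ ω[k] :: (ω.take j).drop (k + 1) := by
    intro j hkj hj
    have hωjlen : (ω.take j).length = j := by rw [List.length_take]; omega
    have hσjlen : (σ.take j).length = j := by rw [List.length_take]; omega
    have hσ'jlen : (σ'.take j).length = j := by
      rw [List.length_take, hσ', List.length_set]; omega
    have hωsplit : ω.take j = ω.take k ++ (ω.take j).drop k := by
      conv_lhs => rw [← List.take_append_drop k (ω.take j)]
      rw [List.take_take, min_eq_left hkj.le]
    have hσsplit : σ.take j = σ.take k ++ (σ.take j).drop k := by
      conv_lhs => rw [← List.take_append_drop k (σ.take j)]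
      rw [List.take_take, min_eq_left hkj.le]
    have hσ'split : σ'.take j = σ.take k ++ (σ'.take j).drop k := by
      conv_lhs => rw [← List.take_append_drop k (σ'.take j)]
      rw [List.take_take, min_eq_left hkj.le, htake_le k le_rfl]
    have hωdrop : (ω.take j).drop k = ω[k] :: (ω.take j).drop (k + 1) := by
      rw [List.drop_eq_getElem_cons (by omega)]
      congr 1
      exact List.getElem_take
    have hσdrop : (σ.take j).drop k = false :: (σ.take j).drop (k + 1) := by
      rw [List.drop_eq_getElem_cons (by omega)]
      congr 1
      rw [List.getElem_take]
      exact hσk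
    have hσ'tail : (σ'.take j).drop (k + 1) = (σ.take j).drop (k + 1) := by
      apply List.ext_getElem
      · rw [List.length_drop, List.length_drop, hσ'jlen, hσjlen]
      · intro i h1 h2
        rw [List.length_drop, hσ'jlen] at h1
        rw [List.getElem_drop, List.getElem_drop, List.getElem_take, List.getElem_take]
        exact List.getElem_set_ne (by omega) (by rw [List.length_set]; omega)
    have hσ'drop : (σ'.take j).drop k = true :: (σ.take j).drop (k + 1) := by
      rw [List.drop_eq_getElem_cons (by omega)]
      rw [hσ'tail]
      congr 1
      rw [List.getElem_take]
      exact List.getElem_set_self (by rw [List.length_set]; omega)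
    have halltrue : ∀ b ∈ (σ.take j).drop (k + 1), b = true := by
      intro b hb
      rw [List.mem_iff_getElem] at hb
      obtain ⟨i, hi, hbi⟩ := hb
      rw [List.getElem_drop, List.getElem_take] at hbi
      rw [← hbi]
      have hi2 : k + 1 + i < σ.length := by
        rw [List.length_drop, hσjlen] at hi
        omega
      exact hrt (k + 1 + i) hi2 (by omega)
    have hklen : (ω.take k).length = (σ.take k).length := by
      rw [List.length_take, List.length_take]; omega
    have htail_len : ((ω.take j).drop (k + 1)).length ≤ ((σ.take j).drop (k + 1)).length := by
      rw [List.length_drop, List.length_drop, hωjlen, hσjlen]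
    constructor
    · conv_lhs => rw [hωsplit, hσsplit]
      rw [MaskL.msw_append hklen, hωdrop, hσdrop, MaskL.msw_cons_false,
        MaskL.msw_all_true halltrue htail_len]
    · conv_lhs => rw [hωsplit, hσ'split]
      rw [MaskL.msw_append hklen, hωdrop, hσ'drop, MaskL.msw_cons_true,
        MaskL.msw_all_true halltrue htail_len]
  -- maskProd formulas
  have hmaskσ : ∀ j, k < j → j ≤ ω.length →
      maskProd cs (ω.take j) (σ.take j) = u * cs.wordProd ((ω.take j).drop (k + 1)) := by
    intro j h1 h2
    rw [maskProd, (hdecomp j h1 h2).1, cs.wordProd_append]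
  have hmaskσ' : ∀ j, k < j → j ≤ ω.length →
      maskProd cs (ω.take j) (σ'.take j) =
        u * cs.simple ω[k] * cs.wordProd ((ω.take j).drop (k + 1)) := by
    intro j h1 h2
    rw [maskProd, (hdecomp j h1 h2).2, cs.wordProd_append, cs.wordProd_cons, mul_assoc]
  -- no-defect facts from σ
  have hnd' : ∀ j (h : j < ω.length),
      ¬ cs.IsRightDescent (maskProd cs (ω.take j) (σ.take j)) (ω.get ⟨j, h⟩) :=
    fun j h hd => hnd j ⟨h, hd⟩
  have hk_nd : cs.length (u * cs.simple ω[k]) = cs.length u + 1 := by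
    have h1 := cs.not_isRightDescent_iff.mp (hnd' k hkω)
    exact h1
  have hx_nd : ∀ j, k < j → ∀ hj : j < ω.length,
      cs.length (u * cs.wordProd ((ω.take j).drop (k + 1)) * cs.simple ω[j]) =
        cs.length (u * cs.wordProd ((ω.take j).drop (k + 1))) + 1 := by
    intro j h1 hj
    have h4 := cs.not_isRightDescent_iff.mp (hnd' j hj)
    rw [hmaskσ j h1 hj.le] at h4
    exact h4
  -- reduced word for u
  obtain ⟨r, hrlen, hru⟩ := cs.exists_reduced_word u
  -- mid lemmas
  have hmid_len : ∀ j, k < j → j ≤ ω.length →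
      ((ω.take j).drop (k + 1)).length = j - k - 1 := by
    intro j h1 h2
    rw [List.length_drop, List.length_take]
    omega
  have hmid_succ : ∀ j, k < j → ∀ h2 : j < ω.length,
      (ω.take (j + 1)).drop (k + 1) = (ω.take j).drop (k + 1) ++ [ω[j]] := by
    intro j h1 h2
    have hts : ω.take (j + 1) = ω.take j ++ [ω[j]] := by
      rw [List.take_succ, List.getElem?_eq_getElem h2]
      rfl
    rw [hts, List.drop_append_of_le_length (by rw [List.length_take]; omega)]
  -- the main induction
  have main : ∀ n, k + 1 + n ≤ ω.length →
      cs.length (u * cs.wordProd ((ω.take (k + 1 + n)).drop (k + 1))) = cs.length u + n ∧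
      cs.length (u * cs.simple ω[k] * cs.wordProd ((ω.take (k + 1 + n)).drop (k + 1))) =
        cs.length u + n + 1 := by
    intro n
    induction n with
    | zero =>
        intro hle
        have hmid0 : (ω.take (k + 1)).drop (k + 1) = [] := by
          apply List.eq_nil_of_length_eq_zero
          rw [List.length_drop, List.length_take]
          omega
        rw [hmid0, cs.wordProd_nil, mul_one, mul_one]
        exact ⟨rfl, hk_nd⟩
    | succ n ih =>
        intro hle
        set j := k + 1 + n with hj
        have hjlt : j < ω.length := by omega
        have hih := ih (by omega)
        have hsucc : (ω.take (j + 1)).drop (k + 1) = (ω.take j).drop (k + 1) ++ [ω[j]] :=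
          hmid_succ j (by omega) hjlt
        have hj1 : k + 1 + (n + 1) = j + 1 := by omega
        rw [hj1, hsucc, cs.wordProd_append, cs.wordProd_singleton]
        constructor
        · rw [← mul_assoc]
          rw [hx_nd j (by omega) hjlt, hih.1]
          omega
        · -- the hard case
          rw [← mul_assoc]
          set Y := u * cs.simple ω[k] * cs.wordProd ((ω.take j).drop (k + 1)) with hY
          rcases cs.length_mul_simple Y ω[j] with hcase | hcase
          · rw [hcase, hih.2]
            omega
          · exfalso
            rw [hih.2] at hcase
            -- set up strong exchange
            set t := u * cs.simple ω[k] * u⁻¹ with ht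
            have htrefl : cs.IsReflection t := ⟨u, ω[k], rfl⟩
            set e := r ++ ((ω.take j).drop (k + 1) ++ [ω[j]]) with he
            have hπe : cs.wordProd e =
                u * cs.wordProd ((ω.take j).drop (k + 1)) * cs.simple ω[j] := by
              rw [he, cs.wordProd_append, cs.wordProd_append, cs.wordProd_singleton, ← hru,
                mul_assoc]
            have hπelen : cs.length (cs.wordProd e) = cs.length u + n + 1 := by
              rw [hπe, hx_nd j (by omega) hjlt, hih.1]
            have htY : t * cs.wordProd e = Y * cs.simple ω[j] := by
              rw [hπe, ht, hY]
              group
            have hYs : cs.length (Y * cs.simple ω[j]) = cs.length u + n := by omega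
            have hlt : cs.length (t * cs.wordProd e) < cs.length (cs.wordProd e) := by
              rw [htY, hYs, hπelen]
              omega
            obtain ⟨m, hm, hme⟩ := SEAux.exists_eraseIdx_of_inversion cs htrefl hlt
            have hprefix_len : (r ++ (ω.take j).drop (k + 1)).length = r.length + n := by
              rw [List.length_append, hmid_len j (by omega) hjlt.le]
              omega
            rcases lt_or_ge m (r.length + n) with hmlt | hmge
            · -- deletion inside r ++ mid: contradiction with length of Y
              have herase : e.eraseIdx m =
                  ((r ++ (ω.take j).drop (k + 1)).eraseIdx m) ++ [ω[j]] := by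
                rw [he, ← List.append_assoc]
                rw [List.eraseIdx_append_of_lt_length (by omega)]
              have hYval : Y = cs.wordProd ((r ++ (ω.take j).drop (k + 1)).eraseIdx m) := by
                have h5 : Y * cs.simple ω[j] * cs.simple ω[j] = Y := by
                  rw [mul_assoc, cs.simple_mul_simple_self, mul_one]
                rw [← h5, ← htY, hme, herase, cs.wordProd_append, cs.wordProd_singleton,
                  mul_assoc, cs.simple_mul_simple_self, mul_one]
              have h6 : cs.length Y ≤ r.length + n - 1 := by
                rw [hYval]
                calc cs.length (cs.wordProd ((r ++ (ω.take j).drop (k + 1)).eraseIdx m))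
                    ≤ ((r ++ (ω.take j).drop (k + 1)).eraseIdx m).length :=
                      cs.length_wordProd_le _
                _ ≤ r.length + n - 1 := by
                      rw [List.length_eraseIdx_of_lt (by omega)]
                      omega
              have h7 : cs.length Y = cs.length u + n + 1 := hih.2
              have hrl : r.length = cs.length u := by
                rw [hru]; exact (show cs.length (cs.wordProd r) = r.length from hrlen).symm
              omega
            · -- deletion at the last position
              have hmeq : m = r.length + n := by
                rw [he, List.length_append, List.length_append, List.length_singleton,
                  hmid_len j (by omega) hjlt.le] at hm
                omega
              have herase : e.eraseIdx m = r ++ (ω.take j).drop (k + 1) := by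
                rw [he, ← List.append_assoc, hmeq, ← hprefix_len,
                  List.eraseIdx_append_of_length_le le_rfl, Nat.sub_self]
                simp
              -- derive s_k * π(mid (j+1)) = π(mid j)
              have h8 : t * cs.wordProd e = u * cs.wordProd ((ω.take j).drop (k + 1)) := by
                rw [hme, herase, cs.wordProd_append, ← hru]
              have h9 : cs.simple ω[k] *
                  cs.wordProd ((ω.take (j + 1)).drop (k + 1)) =
                  cs.wordProd ((ω.take j).drop (k + 1)) := by
                have h10 : t * cs.wordProd e =
                    u * (cs.simple ω[k] * cs.wordProd ((ω.take (j + 1)).drop (k + 1))) := by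
                  rw [hπe, ht, hsucc, cs.wordProd_append, cs.wordProd_singleton]
                  group
                rw [h10] at h8
                exact mul_left_cancel h8
              -- the contiguous subword
              have hcw : (ω.take (j + 1)).drop k = ω[k] :: (ω.take (j + 1)).drop (k + 1) := by
                rw [List.drop_eq_getElem_cons (by rw [List.length_take]; omega)]
                congr 1
                exact List.getElem_take
              have hcwred : cs.IsReduced ((ω.take (j + 1)).drop k) :=
                (hred.take (j + 1)).drop k
              have hcwlen : ((ω.take (j + 1)).drop k).length = j + 1 - k := by
                rw [List.length_drop, List.length_take]
                omega
              have h11 : cs.length (cs.wordProd ((ω.take (j + 1)).drop k)) = j + 1 - k := by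
                rw [hcwred, hcwlen]
              have h12 : cs.wordProd ((ω.take (j + 1)).drop k) =
                  cs.wordProd ((ω.take j).drop (k + 1)) := by
                rw [hcw, cs.wordProd_cons, h9]
              have h13 : cs.length (cs.wordProd ((ω.take j).drop (k + 1))) ≤ n := by
                calc cs.length (cs.wordProd ((ω.take j).drop (k + 1)))
                    ≤ ((ω.take j).drop (k + 1)).length := cs.length_wordProd_le _
                _ = n := by rw [hmid_len j (by omega) hjlt.le]; omega
              rw [h12] at h11
              omega
  -- conclude
  refine ⟨hσ'len, ?_⟩
  intro j hdef
  obtain ⟨hjlen, hdesc⟩ := hdef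
  rcases le_or_gt j k with hjk | hjk
  · apply hnd j
    refine ⟨hjlen, ?_⟩
    rwa [maskProd, htake_le j hjk] at hdesc
  · rw [hmaskσ' j hjk hjlen.le] at hdesc
    have hdesc' : cs.length
        (u * cs.simple ω[k] * cs.wordProd ((ω.take j).drop (k + 1)) *
          cs.simple (ω.get ⟨j, hjlen⟩)) <
        cs.length (u * cs.simple ω[k] * cs.wordProd ((ω.take j).drop (k + 1))) := hdesc
    obtain ⟨h1, h2⟩ := main (j - k - 1) (by omega)
    obtain ⟨h3, h4⟩ := main (j - k) (by omega)
    have hjeq : k + 1 + (j - k - 1) = j := by omega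
    have hjeq2 : k + 1 + (j - k) = j + 1 := by omega
    rw [hjeq] at h2
    rw [hjeq2] at h4
    have hsucc : (ω.take (j + 1)).drop (k + 1) = (ω.take j).drop (k + 1) ++ [ω[j]] :=
      hmid_succ j hjk hjlen
    rw [hsucc, cs.wordProd_append, cs.wordProd_singleton, ← mul_assoc] at h4
    have hget : (ω.get ⟨j, hjlen⟩ : B) = ω[j] := rfl
    rw [hget] at hdesc'
    omega
end

section
/- Let W be a Coxeter group and y ≤ w in Bruhat order. Then the Möbius function of the Bruhat order satisfies μ(y,w) = (−1)^{l(w)−l(y)}. Equivalently, the alternating sum ∑_{y ≤ x ≤ w} (−1)^{l(w)−l(x)} equals 1 if y = w and 0 if y < w. -/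
open CoxeterSystem
open scoped Classical

open List

set_option linter.unusedSectionVars false

variable {B W : Type*} [Group W] {M : CoxeterMatrix B}

namespace VermaAux

/-- Parity count of occurrences of `t` in a list, valued in `ZMod 2`. -/
noncomputable def par (l : List W) (t : W) : ZMod 2 :=
  (l.map (fun x => if x = t then (1 : ZMod 2) else 0)).sum

@[simp] lemma par_nil (t : W) : par ([] : List W) t = 0 := rfl

lemma par_cons (x : W) (l : List W) (t : W) :
    par (x :: l) t = (if x = t then (1 : ZMod 2) else 0) + par l t := by
  simp [par]

lemma mem_of_par_ne_zero {l : List W} {t : W} (h : par l t ≠ 0) : t ∈ l := by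
  induction l with
  | nil => simp at h
  | cons x l ih =>
    rw [par_cons] at h
    by_cases hx : x = t
    · simp [hx]
    · simp only [hx, if_false, zero_add] at h
      exact List.mem_cons_of_mem _ (ih h)

/-- The `ZMod 2`-valued functions on `W`, as a multiplicative group. -/
abbrev Hgrp (W : Type*) := W → Multiplicative (ZMod 2)

/-- Action of `W` on `Hgrp W` by conjugating the argument. -/
noncomputable def phi : W →* MulAut (Hgrp W) where
  toFun w :=
    { toFun := fun f t => f (w⁻¹ * t * w)
      invFun := fun f t => f (w * t * w⁻¹)
      left_inv := by intro f; funext t; group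
      right_inv := by intro f; funext t; group
      map_mul' := by intro f g; rfl }
  map_one' := by ext f t; simp
  map_mul' := by intro u v; ext f t; simp [mul_assoc]

lemma phi_apply (w : W) (f : Hgrp W) (t : W) : phi w f t = f (w⁻¹ * t * w) := rfl

/-- Indicator function of `v`. -/
noncomputable def dlt (v : W) : Hgrp W := fun t => if t = v then Multiplicative.ofAdd 1 else 1

lemma phi_dlt (w v : W) : phi w (dlt v) = dlt (w * v * w⁻¹) := by
  funext t
  simp only [phi_apply, dlt]
  congr 1
  simp only [eq_iff_iff]
  constructor
  · intro h; rw [← h]; group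
  · intro h; rw [h]; group

variable (cs : CoxeterSystem M W)

/-- Generators of the parity semidirect product. -/
noncomputable def dgen (i : B) : Hgrp W ⋊[phi] W := ⟨dlt (cs.simple i), cs.simple i⟩

lemma sq_one (x : Multiplicative (ZMod 2)) : x * x = 1 := by
  have : ∀ a : ZMod 2, a + a = 0 := by decide
  exact this x

lemma conj_pow_simple (i i' : B) (m : ℕ) :
    cs.simple i * (cs.simple i * cs.simple i') ^ m * (cs.simple i)⁻¹
      = ((cs.simple i * cs.simple i') ^ m)⁻¹ := by
  induction m with
  | zero => simp
  | succ m ih =>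
    have h2 : cs.simple i * (cs.simple i * cs.simple i') * (cs.simple i)⁻¹
        = (cs.simple i * cs.simple i')⁻¹ := by
      rw [cs.inv_simple, mul_inv_rev, cs.inv_simple, cs.inv_simple]
      rw [← mul_assoc, cs.simple_mul_simple_self, one_mul]
    calc cs.simple i * (cs.simple i * cs.simple i') ^ (m + 1) * (cs.simple i)⁻¹
        = (cs.simple i * (cs.simple i * cs.simple i') ^ m * (cs.simple i)⁻¹)
          * (cs.simple i * (cs.simple i * cs.simple i') * (cs.simple i)⁻¹) := by
          rw [pow_succ]; group
      _ = ((cs.simple i * cs.simple i') ^ m)⁻¹ * (cs.simple i * cs.simple i')⁻¹ := by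
          rw [ih, h2]
      _ = ((cs.simple i * cs.simple i') ^ (m+1))⁻¹ := by
          rw [← mul_inv_rev, ← pow_succ']

lemma simple_mul_inv_pow (i i' : B) (m : ℕ) :
    cs.simple i * ((cs.simple i * cs.simple i') ^ m)⁻¹
      = (cs.simple i * cs.simple i') ^ m * cs.simple i := by
  have h := conj_pow_simple cs i i' m
  calc cs.simple i * ((cs.simple i * cs.simple i') ^ m)⁻¹
      = (cs.simple i * (cs.simple i * cs.simple i') ^ m * (cs.simple i)⁻¹)⁻¹
        * cs.simple i := by group
    _ = (((cs.simple i * cs.simple i') ^ m)⁻¹)⁻¹ * cs.simple i := by rw [h]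
    _ = (cs.simple i * cs.simple i') ^ m * cs.simple i := by rw [inv_inv]

lemma rho_conj_a (i i' : B) (m : ℕ) :
    (cs.simple i * cs.simple i') ^ m * cs.simple i * ((cs.simple i * cs.simple i') ^ m)⁻¹
      = (cs.simple i * cs.simple i') ^ (2 * m) * cs.simple i := by
  calc (cs.simple i * cs.simple i') ^ m * cs.simple i * ((cs.simple i * cs.simple i') ^ m)⁻¹
      = (cs.simple i * cs.simple i') ^ m
        * (cs.simple i * ((cs.simple i * cs.simple i') ^ m)⁻¹) := by group
    _ = (cs.simple i * cs.simple i') ^ m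
        * ((cs.simple i * cs.simple i') ^ m * cs.simple i) := by
        rw [simple_mul_inv_pow]
    _ = (cs.simple i * cs.simple i') ^ (2*m) * cs.simple i := by
        rw [two_mul, pow_add]; group

lemma rho_conj_b (i i' : B) (m : ℕ) :
    (cs.simple i * cs.simple i') ^ m * (cs.simple i * cs.simple i' * cs.simple i)
        * ((cs.simple i * cs.simple i') ^ m)⁻¹
      = (cs.simple i * cs.simple i') ^ (2 * m + 1) * cs.simple i := by
  calc (cs.simple i * cs.simple i') ^ m * (cs.simple i * cs.simple i' * cs.simple i)
        * ((cs.simple i * cs.simple i') ^ m)⁻¹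
      = (cs.simple i * cs.simple i') ^ (m+1)
        * (cs.simple i * ((cs.simple i * cs.simple i') ^ m)⁻¹) := by
        rw [pow_succ]; group
    _ = (cs.simple i * cs.simple i') ^ (m+1)
        * ((cs.simple i * cs.simple i') ^ m * cs.simple i) := by
        rw [simple_mul_inv_pow]
    _ = (cs.simple i * cs.simple i') ^ (2*m+1) * cs.simple i := by
        have : 2*m+1 = (m+1) + m := by omega
        rw [this, pow_add]; group

/-- Closed form for powers of `dgen i * dgen i'`. -/
lemma dgen_mul_pow (i i' : B) (m : ℕ) :
    (dgen cs i * dgen cs i') ^ m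
      = ⟨fun t => ∏ k ∈ Finset.range (2*m),
            (if t = (cs.simple i * cs.simple i') ^ k * cs.simple i then
              Multiplicative.ofAdd (1 : ZMod 2) else 1),
          (cs.simple i * cs.simple i') ^ m⟩ := by
  induction m with
  | zero =>
    apply SemidirectProduct.ext
    · funext t; simp
    · simp
  | succ m ih =>
    have hstep : dgen cs i * dgen cs i'
        = ⟨dlt (cs.simple i) * dlt (cs.simple i * cs.simple i' * cs.simple i),
            cs.simple i * cs.simple i'⟩ := by
      apply SemidirectProduct.ext
      · show dlt (cs.simple i) * phi (cs.simple i) (dlt (cs.simple i')) = _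
        rw [phi_dlt, cs.inv_simple]
      · rfl
    rw [pow_succ, ih, hstep]
    apply SemidirectProduct.ext
    · show (fun t => ∏ k ∈ Finset.range (2*m),
            (if t = (cs.simple i * cs.simple i') ^ k * cs.simple i then
              Multiplicative.ofAdd (1 : ZMod 2) else 1))
          * phi ((cs.simple i * cs.simple i') ^ m)
            (dlt (cs.simple i) * dlt (cs.simple i * cs.simple i' * cs.simple i)) = _
      rw [map_mul, phi_dlt, phi_dlt, rho_conj_a, rho_conj_b]
      funext t
      show _ = ∏ k ∈ Finset.range (2*(m+1)),
            (if t = (cs.simple i * cs.simple i') ^ k * cs.simple i then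
              Multiplicative.ofAdd (1 : ZMod 2) else 1)
      have h2 : 2 * (m + 1) = (2*m) + 1 + 1 := by omega
      rw [h2, Finset.prod_range_succ, Finset.prod_range_succ]
      simp only [Pi.mul_apply, dlt]
      rw [mul_assoc]
    · show (cs.simple i * cs.simple i') ^ m * (cs.simple i * cs.simple i') = _
      rw [← pow_succ]

lemma dgen_liftable : M.IsLiftable (dgen cs) := by
  intro i i'
  rw [dgen_mul_pow]
  apply SemidirectProduct.ext
  · funext t
    show (∏ k ∈ Finset.range (2 * M i i'),
        (if t = (cs.simple i * cs.simple i') ^ k * cs.simple i then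
          Multiplicative.ofAdd (1 : ZMod 2) else 1)) = 1
    have h2 : 2 * M i i' = M i i' + M i i' := by omega
    rw [h2, Finset.prod_range_add]
    have hsame : ∀ k ∈ Finset.range (M i i'),
        (if t = (cs.simple i * cs.simple i') ^ (M i i' + k) * cs.simple i then
          Multiplicative.ofAdd (1 : ZMod 2) else 1)
        = (if t = (cs.simple i * cs.simple i') ^ k * cs.simple i then
          Multiplicative.ofAdd (1 : ZMod 2) else 1) := by
      intro k _
      congr 2
      rw [pow_add, cs.simple_mul_simple_pow, one_mul]
    rw [Finset.prod_congr rfl hsame, ← Finset.prod_mul_distrib]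
    apply Finset.prod_eq_one
    intro k _
    exact sq_one _
  · show (cs.simple i * cs.simple i') ^ M i i' = 1
    exact cs.simple_mul_simple_pow i i'

/-- The parity homomorphism. -/
noncomputable def theta : W →* (Hgrp W ⋊[phi] W) :=
  cs.lift ⟨dgen cs, dgen_liftable cs⟩

lemma theta_simple (i : B) : theta cs (cs.simple i) = dgen cs i :=
  cs.lift_apply_simple (dgen_liftable cs) i

/-- `theta` computed on a word: left component is the parity of the left inversion
sequence, right component is the word product. -/
lemma theta_wordProd (ω : List B) :
    theta cs (cs.wordProd ω)
      = ⟨fun t => Multiplicative.ofAdd (par (cs.leftInvSeq ω) t), cs.wordProd ω⟩ := by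
  induction ω with
  | nil =>
    rw [cs.wordProd_nil, map_one]
    apply SemidirectProduct.ext
    · funext t; simp [leftInvSeq]
    · simp
  | cons i ω ih =>
    rw [cs.wordProd_cons, map_mul, theta_simple, ih]
    apply SemidirectProduct.ext
    · show dlt (cs.simple i) * phi (cs.simple i)
          (fun t => Multiplicative.ofAdd (par (cs.leftInvSeq ω) t)) = _
      funext t
      show dlt (cs.simple i) t
          * Multiplicative.ofAdd (par (cs.leftInvSeq ω) ((cs.simple i)⁻¹ * t * cs.simple i))
        = Multiplicative.ofAdd (par (cs.leftInvSeq (i :: ω)) t)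
      have hlis : cs.leftInvSeq (i :: ω)
          = cs.simple i :: List.map (MulAut.conj (cs.simple i)) (cs.leftInvSeq ω) := rfl
      rw [hlis, par_cons]
      have hpar : par (List.map (⇑(MulAut.conj (cs.simple i))) (cs.leftInvSeq ω)) t
          = par (cs.leftInvSeq ω) ((cs.simple i)⁻¹ * t * cs.simple i) := by
        unfold par
        rw [List.map_map]
        congr 1
        apply List.map_congr_left
        intro x _
        show (if (MulAut.conj (cs.simple i)) x = t then (1:ZMod 2) else 0)
          = (if x = (cs.simple i)⁻¹ * t * cs.simple i then (1:ZMod 2) else 0)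
        congr 1
        simp only [eq_iff_iff, MulAut.conj_apply]
        constructor
        · intro h; rw [← h]; group
        · intro h; rw [h]; group
      rw [hpar, dlt]
      rcases eq_or_ne t (cs.simple i) with h | h
      · rw [if_pos h, if_pos h.symm, ofAdd_add]
      · rw [if_neg h, if_neg (fun hh => h hh.symm), ofAdd_add]
        simp
    · show cs.simple i * cs.wordProd ω = _
      rw [← cs.wordProd_cons]

lemma theta_right (w : W) : (theta cs w).right = w := by
  obtain ⟨ω, _, rfl⟩ := cs.exists_reduced_word' w
  rw [theta_wordProd]

/-- Parity of `t` in any word for `w` is well-defined. -/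
lemma par_lis_eq (w : W) (t : W) {ω : List B} (hω : cs.wordProd ω = w) :
    Multiplicative.ofAdd (par (cs.leftInvSeq ω) t) = (theta cs w).left t := by
  rw [← hω, theta_wordProd]

/-- `fodd cs w t`: the parity of `t` in (any) inversion sequence of `w` is odd. -/
noncomputable def fodd (w t : W) : Prop :=
  (theta cs w).left t = Multiplicative.ofAdd (1 : ZMod 2)

lemma mem_lis_of_fodd {w t : W} (h : fodd cs w t) {ω : List B} (hω : cs.wordProd ω = w) :
    t ∈ cs.leftInvSeq ω := by
  apply mem_of_par_ne_zero (t := t)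
  intro hz
  rw [fodd, ← par_lis_eq cs w t hω, hz] at h
  exact absurd h (by decide)

lemma descent_of_fodd {w t : W} (h : fodd cs w t) : cs.length (t * w) < cs.length w := by
  obtain ⟨ω, hred, rfl⟩ := cs.exists_reduced_word' w
  exact (cs.isLeftInversion_of_mem_leftInvSeq hred (mem_lis_of_fodd cs h rfl)).2

lemma theta_left_mul (u v x : W) :
    (theta cs (u * v)).left x
      = (theta cs u).left x * (theta cs v).left (u⁻¹ * x * u) := by
  rw [map_mul]
  simp only [SemidirectProduct.mul_left, Pi.mul_apply]
  congr 1
  show (theta cs v).left (((theta cs u).right)⁻¹ * x * (theta cs u).right) = _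
  rw [theta_right]

lemma theta_left_inv (u x : W) :
    (theta cs u⁻¹).left x = ((theta cs u).left (u * x * u⁻¹))⁻¹ := by
  rw [map_inv]
  simp only [SemidirectProduct.inv_left]
  show ((theta cs u).left)⁻¹ ((((theta cs u).right)⁻¹)⁻¹ * x * ((theta cs u).right)⁻¹) = _
  rw [theta_right, Pi.inv_apply, inv_inv]

lemma theta_left_simple (i : B) (x : W) :
    (theta cs (cs.simple i)).left x = dlt (cs.simple i) x := by
  rw [theta_simple]; rfl

lemma fodd_refl_self {t : W} (ht : cs.IsReflection t) : fodd cs t t := by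
  obtain ⟨w, i, rfl⟩ := ht
  unfold fodd
  have key : ∀ x : W, x = w * cs.simple i * w⁻¹ →
      (theta cs (w * (cs.simple i * w⁻¹))).left x = Multiplicative.ofAdd (1 : ZMod 2) := by
    intro x hx
    rw [theta_left_mul, theta_left_mul, theta_left_simple, theta_left_inv]
    have e1 : w⁻¹ * x * w = cs.simple i := by rw [hx]; group
    rw [e1]
    have e2 : w * ((cs.simple i)⁻¹ * cs.simple i * cs.simple i) * w⁻¹ = x := by
      rw [hx]; group
    rw [e2, dlt, if_pos rfl]
    have : ∀ a b : Multiplicative (ZMod 2), a * (b * a⁻¹) = b := by decide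
    exact this _ _
  have hsplit : w * cs.simple i * w⁻¹ = w * (cs.simple i * w⁻¹) := by group
  rw [hsplit]
  exact key _ (by group)

lemma fodd_of_descent {w t : W} (ht : cs.IsReflection t) (h : cs.length (t * w) < cs.length w) :
    fodd cs w t := by
  have hw : w = t * (t * w) := by rw [← mul_assoc, ht.mul_self, one_mul]
  unfold fodd
  rw [hw, theta_left_mul]
  have h1 : (theta cs t).left t = Multiplicative.ofAdd (1:ZMod 2) := fodd_refl_self cs ht
  have harg : t⁻¹ * t * t = t := by group
  rw [harg, h1]
  have h2 : (theta cs (t * w)).left t = 1 := by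
    by_contra hne
    have : (theta cs (t*w)).left t = Multiplicative.ofAdd (1:ZMod 2) := by
      have : ∀ x : Multiplicative (ZMod 2),
          x ≠ 1 → x = Multiplicative.ofAdd (1:ZMod 2) := by decide
      exact this _ hne
    have hdesc := descent_of_fodd cs (t := t) (w := t * w) this
    rw [← mul_assoc, ht.mul_self, one_mul] at hdesc
    omega
  rw [h2, mul_one]

/-- **Strong exchange property** (left version). -/
lemma strong_exchange {t : W} (ht : cs.IsReflection t) (ω : List B)
    (h : cs.length (t * cs.wordProd ω) < cs.length (cs.wordProd ω)) :
    ∃ j, j < ω.length ∧ t * cs.wordProd ω = cs.wordProd (ω.eraseIdx j) := by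
  have hmem := mem_lis_of_fodd cs (fodd_of_descent cs ht h) (ω := ω) rfl
  obtain ⟨j, hj, hget⟩ := List.mem_iff_getElem.mp hmem
  rw [cs.length_leftInvSeq] at hj
  refine ⟨j, hj, ?_⟩
  have := cs.getD_leftInvSeq_mul_wordProd ω j
  rw [List.getD_eq_getElem _ _ (by rw [cs.length_leftInvSeq]; exact hj)] at this
  rw [hget] at this
  exact this

/-- **Deletion property**: every word has a reduced sublist with the same product. -/
lemma deletion (ω : List B) :
    ∃ φ, φ.Sublist ω ∧ cs.IsReduced φ ∧ cs.wordProd φ = cs.wordProd ω := by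
  induction ω with
  | nil => exact ⟨[], List.Sublist.refl _, by simp [CoxeterSystem.IsReduced], rfl⟩
  | cons i ω ih =>
    obtain ⟨φ, hsub, hred, hprod⟩ := ih
    by_cases h : cs.length (cs.simple i * cs.wordProd φ) < cs.length (cs.wordProd φ)
    · obtain ⟨j, hj, hex⟩ := strong_exchange cs (cs.isReflection_simple i) φ h
      refine ⟨φ.eraseIdx j, ((φ.eraseIdx_sublist j).trans hsub).trans
        (List.sublist_cons_self i ω), ?_, ?_⟩
      · unfold CoxeterSystem.IsReduced
        rw [← hex, List.length_eraseIdx, if_pos hj]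
        have h1 : cs.length (cs.wordProd φ) = φ.length := hred
        rcases cs.length_simple_mul (cs.wordProd φ) i with hh | hh <;> omega
      · rw [← hex, hprod, cs.wordProd_cons]
    · have hup : cs.length (cs.simple i * cs.wordProd φ) = cs.length (cs.wordProd φ) + 1 := by
        rcases cs.length_simple_mul (cs.wordProd φ) i with h1 | h1
        · exact h1
        · omega
      refine ⟨i :: φ, List.cons_sublist_cons.mpr hsub, ?_, ?_⟩
      · unfold CoxeterSystem.IsReduced
        rw [cs.wordProd_cons, hup, List.length_cons]
        have h1 : cs.length (cs.wordProd φ) = φ.length := hred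
        omega
      · rw [cs.wordProd_cons, cs.wordProd_cons, hprod]

section Chains

variable (cs : CoxeterSystem M W)

/-- A single step in the Bruhat chain order: multiply by a reflection on the left,
increasing length. -/
def crel (x z : W) : Prop :=
  ∃ t, cs.IsReflection t ∧ z = t * x ∧ cs.length x < cs.length z

/-- Chain order. -/
def cle : W → W → Prop := Relation.ReflTransGen (crel cs)

lemma cle_refl (x : W) : cle cs x x := Relation.ReflTransGen.refl

lemma cle_trans {x y z : W} (h1 : cle cs x y) (h2 : cle cs y z) : cle cs x z :=
  Relation.ReflTransGen.trans h1 h2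

lemma cle_length_le {x w : W} (h : cle cs x w) : cs.length x ≤ cs.length w := by
  induction h with
  | refl => exact le_refl _
  | tail hb hr ih => obtain ⟨t, _, _, hlt⟩ := hr; omega

/-- The big simultaneous induction: subword implies chain (A), chain implies subword
w.r.t. every reduced word (B), and chain lifting (C). -/
lemma ABC : ∀ n : ℕ, ∀ w : W, cs.length w ≤ n →
    ((∀ ω, cs.IsReduced ω → cs.wordProd ω = w →
        ∀ χ, χ.Sublist ω → cle cs (cs.wordProd χ) w)
    ∧ (∀ x, cle cs x w → ∀ ω, cs.IsReduced ω → cs.wordProd ω = w →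
        ∃ χ, χ.Sublist ω ∧ cs.IsReduced χ ∧ cs.wordProd χ = x)
    ∧ (∀ i x, cs.length w < cs.length (cs.simple i * w) → cle cs x w →
        cle cs x (cs.simple i * w) ∧ cle cs (cs.simple i * x) (cs.simple i * w))) := by
  intro n
  induction n with
  | zero =>
    intro w hw
    have hw1 : w = 1 := by
      rw [← cs.length_eq_zero_iff]; omega
    subst hw1
    refine ⟨?_, ?_, ?_⟩
    · intro ω hred hprod χ hχ
      have hω : ω = [] := by
        apply List.eq_nil_of_length_eq_zero
        have : cs.length (cs.wordProd ω) = ω.length := hred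
        rw [hprod, cs.length_one] at this
        omega
      subst hω
      have hχ' : χ = [] := List.sublist_nil.mp hχ
      subst hχ'
      exact cle_refl cs _
    · intro x hx ω hred hprod
      have hx1 : x = 1 := by
        have := cle_length_le cs hx
        rw [cs.length_one] at this
        rw [← cs.length_eq_zero_iff]; omega
      exact ⟨ω, List.Sublist.refl _, hred, by rw [hprod, hx1]⟩
    · intro i x _ hx
      have hx1 : x = 1 := by
        have := cle_length_le cs hx
        rw [cs.length_one] at this
        rw [← cs.length_eq_zero_iff]; omega
      subst hx1
      constructor
      · exact Relation.ReflTransGen.single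
          ⟨cs.simple i, cs.isReflection_simple i, rfl, by
            rw [mul_one, cs.length_one, cs.length_simple]; omega⟩
      · exact cle_refl cs _
  | succ n ih =>
    intro w hw
    refine ⟨?_, ?_, ?_⟩
    -- Part A
    · intro ω hred hprod χ hχ
      cases ω with
      | nil =>
        have hχ' : χ = [] := List.sublist_nil.mp hχ
        subst hχ'
        rw [← hprod, cs.wordProd_nil]
        exact cle_refl cs _
      | cons a ω₁ =>
        have hω₁red : cs.IsReduced ω₁ := by
          have := hred.drop 1
          simpa using this
        have hl1 : cs.length (cs.wordProd ω₁) = ω₁.length := hω₁red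
        have hlw : cs.length w = ω₁.length + 1 := by
          rw [← hprod]; exact hred
        have hwsplit : w = cs.simple a * cs.wordProd ω₁ := by
          rw [← hprod, cs.wordProd_cons]
        have hasc : cs.length (cs.wordProd ω₁) < cs.length (cs.simple a * cs.wordProd ω₁) := by
          rw [← hwsplit]; omega
        have hle1 : cs.length (cs.wordProd ω₁) ≤ n := by omega
        rcases List.sublist_cons_iff.mp hχ with hχ1 | ⟨χ₁, rfl, hχ₁⟩
        · have h1 : cle cs (cs.wordProd χ) (cs.wordProd ω₁) :=
            (ih _ hle1).1 ω₁ hω₁red rfl χ hχ1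
          refine h1.tail ⟨cs.simple a, cs.isReflection_simple a, hwsplit, ?_⟩
          omega
        · have h1 : cle cs (cs.wordProd χ₁) (cs.wordProd ω₁) :=
            (ih _ hle1).1 ω₁ hω₁red rfl χ₁ hχ₁
          have h2 := ((ih _ hle1).2.2 a (cs.wordProd χ₁) hasc h1).2
          rw [cs.wordProd_cons, hwsplit]
          exact h2
    -- Part B
    · intro x hx ω hred hprod
      rcases Relation.ReflTransGen.cases_tail hx with rfl | ⟨u, hxu, t, ht, hwtu, hlu⟩
      · exact ⟨ω, List.Sublist.refl _, hred, hprod⟩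
      · have hu : u = t * w := by
          rw [hwtu, ← mul_assoc, ht.mul_self, one_mul]
        have hlt : cs.length (t * cs.wordProd ω) < cs.length (cs.wordProd ω) := by
          rw [hprod, ← hu]; omega
        obtain ⟨j, hj, hex⟩ := strong_exchange cs ht ω hlt
        obtain ⟨ρ, hρsub, hρred, hρprod⟩ := deletion cs (ω.eraseIdx j)
        have hρu : cs.wordProd ρ = u := by
          rw [hρprod, ← hex, hprod, ← hu]
        have hlun : cs.length u ≤ n := by omega
        obtain ⟨χ, hχρ, hχred, hχx⟩ := (ih _ hlun).2.1 x hxu ρ hρred hρu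
        exact ⟨χ, hχρ.trans (hρsub.trans (ω.eraseIdx_sublist j)), hχred, hχx⟩
    -- Part C
    · intro i x hasc hx
      rcases Relation.ReflTransGen.cases_tail hx with rfl | ⟨u, hxu, t, ht, hwtu, hlu⟩
      · constructor
        · exact Relation.ReflTransGen.single ⟨cs.simple i, cs.isReflection_simple i, rfl, hasc⟩
        · exact cle_refl cs _
      · have hlun : cs.length u ≤ n := by omega
        have hwsw : cle cs w (cs.simple i * w) :=
          Relation.ReflTransGen.single ⟨cs.simple i, cs.isReflection_simple i, rfl, hasc⟩
        have hxw : cle cs x w := hxu.tail ⟨t, ht, hwtu, hlu⟩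
        by_cases hsu : cs.length u < cs.length (cs.simple i * u)
        · obtain ⟨h1, h2⟩ := (ih _ hlun).2.2 i x hsu hxu
          have hstep : crel cs (cs.simple i * u) (cs.simple i * w) := by
            refine ⟨cs.simple i * t * (cs.simple i)⁻¹, ht.conj (cs.simple i), ?_, ?_⟩
            · rw [hwtu]; group
            · have := cs.length_simple_mul u i
              omega
          exact ⟨h1.tail hstep, h2.tail hstep⟩
        · have hdes : cs.length (cs.simple i * u) < cs.length u := by
            have := cs.length_simple_mul_ne u i
            omega
          refine ⟨hxw.trans hwsw, ?_⟩
          by_cases hsx : cs.length (cs.simple i * x) < cs.length x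
          · have h1 : cle cs (cs.simple i * x) x :=
              Relation.ReflTransGen.single ⟨cs.simple i, cs.isReflection_simple i,
                (cs.simple_mul_simple_cancel_left i).symm, hsx⟩
            exact (h1.trans hxw).trans hwsw
          · have hsxup : cs.length x < cs.length (cs.simple i * x) := by
              have := cs.length_simple_mul_ne x i
              omega
            have hcancel : cs.simple i * (cs.simple i * u) = u :=
              cs.simple_mul_simple_cancel_left i
            have hu2asc : cs.length (cs.simple i * u)
                < cs.length (cs.simple i * (cs.simple i * u)) := by
              rw [hcancel]; exact hdes
            obtain ⟨ρ₂, hρ₂red, hρ₂⟩ := cs.exists_reduced_word' (cs.simple i * u)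
            have hlu2 : cs.length u = cs.length (cs.simple i * u) + 1 := by
              have := cs.length_simple_mul u i
              omega
            have hred2 : cs.IsReduced (i :: ρ₂) := by
              unfold CoxeterSystem.IsReduced
              rw [cs.wordProd_cons, ← hρ₂, hcancel, List.length_cons]
              have h1 : cs.length (cs.wordProd ρ₂) = ρ₂.length := hρ₂red
              rw [← hρ₂] at h1
              omega
            have hprod2 : cs.wordProd (i :: ρ₂) = u := by
              rw [cs.wordProd_cons, ← hρ₂, hcancel]
            obtain ⟨χ, hχ, hχred, hχx⟩ := (ih _ hlun).2.1 x hxu (i :: ρ₂) hred2 hprod2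
            rcases List.sublist_cons_iff.mp hχ with hχ1 | ⟨χ₁, rfl, hχ₁⟩
            · -- χ ⊆ ρ₂
              have hlu2n : cs.length (cs.simple i * u) ≤ n := by omega
              have hcle2 : cle cs x (cs.simple i * u) := by
                have := (ih _ hlu2n).1 ρ₂ hρ₂red hρ₂.symm χ hχ1
                rwa [hχx] at this
              have h2 := ((ih _ hlu2n).2.2 i x hu2asc hcle2).2
              rw [hcancel] at h2
              have huw : cle cs u w :=
                Relation.ReflTransGen.single ⟨t, ht, hwtu, hlu⟩
              exact (h2.trans huw).trans hwsw
            · -- χ = i :: χ₁ : contradiction with length of s_i x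
              exfalso
              have h1 : cs.length (cs.wordProd (i :: χ₁)) = χ₁.length + 1 := hχred
              have h2 : cs.simple i * x = cs.wordProd χ₁ := by
                rw [← hχx, cs.wordProd_cons, cs.simple_mul_simple_cancel_left]
              have h3 : cs.length (cs.simple i * x) ≤ χ₁.length := by
                rw [h2]; exact cs.length_wordProd_le χ₁
              rw [hχx] at h1
              omega

end Chains

section Bruhat

variable (cs : CoxeterSystem M W)

lemma bruhatLE_iff_cle {x w : W} : bruhatLE cs x w ↔ cle cs x w := by
  constructor
  · rintro ⟨ω, φ, hred, hprod, hsub, hx⟩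
    have := (ABC cs (cs.length w) w (le_refl _)).1 ω hred hprod φ hsub
    rwa [hx] at this
  · intro h
    obtain ⟨ω, hred, hω⟩ := cs.exists_reduced_word' w
    obtain ⟨χ, hsub, hχred, hχ⟩ :=
      (ABC cs (cs.length w) w (le_refl _)).2.1 x h ω hred hω.symm
    exact ⟨ω, χ, hred, hω.symm, hsub, hχ⟩

lemma ble_refl (x : W) : bruhatLE cs x x := by
  obtain ⟨ω, hred, hω⟩ := cs.exists_reduced_word' x
  exact ⟨ω, ω, hred, hω.symm, List.Sublist.refl _, hω.symm⟩

lemma ble_trans {x y z : W} (h1 : bruhatLE cs x y) (h2 : bruhatLE cs y z) :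
    bruhatLE cs x z := by
  rw [bruhatLE_iff_cle] at *
  exact h1.trans h2

lemma ble_length_le {x w : W} (h : bruhatLE cs x w) : cs.length x ≤ cs.length w := by
  obtain ⟨ω, φ, hred, hprod, hsub, hx⟩ := h
  have h1 : cs.length (cs.wordProd ω) = ω.length := hred
  have h2 := cs.length_wordProd_le φ
  have h3 := hsub.length_le
  rw [hx] at h2
  rw [hprod] at h1
  omega

lemma ble_eq_of_length_ge {x w : W} (h : bruhatLE cs x w) (hl : cs.length w ≤ cs.length x) :
    x = w := by
  obtain ⟨ω, φ, hred, hprod, hsub, hx⟩ := h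
  have h1 : cs.length (cs.wordProd ω) = ω.length := hred
  have h2 := cs.length_wordProd_le φ
  have h3 := hsub.length_le
  rw [hx] at h2
  rw [hprod] at h1
  have : φ = ω := hsub.eq_of_length (by omega)
  rw [← hx, this, hprod]

lemma subword_of_le {x w : W} (h : bruhatLE cs x w) {ω : List B}
    (hred : cs.IsReduced ω) (hprod : cs.wordProd ω = w) :
    ∃ χ, χ.Sublist ω ∧ cs.IsReduced χ ∧ cs.wordProd χ = x :=
  (ABC cs (cs.length w) w (le_refl _)).2.1 x ((bruhatLE_iff_cle cs).mp h) ω hred hprod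

/-- A reduced word for `w` starting with a given left descent. -/
lemma descent_word {w : W} (a : B) (h : cs.length (cs.simple a * w) < cs.length w) :
    ∃ ρ, cs.IsReduced ρ ∧ cs.wordProd ρ = cs.simple a * w
      ∧ cs.IsReduced (a :: ρ) ∧ cs.wordProd (a :: ρ) = w := by
  obtain ⟨ρ, hred, hρ⟩ := cs.exists_reduced_word' (cs.simple a * w)
  have hcancel : cs.simple a * (cs.simple a * w) = w := cs.simple_mul_simple_cancel_left a
  have hlen : cs.length w = cs.length (cs.simple a * w) + 1 := by
    have := cs.length_simple_mul w a
    omega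
  have hlρ : cs.length (cs.wordProd ρ) = ρ.length := hred
  refine ⟨ρ, hred, hρ.symm, ?_, ?_⟩
  · unfold CoxeterSystem.IsReduced
    rw [cs.wordProd_cons, ← hρ, hcancel, List.length_cons]
    rw [← hρ] at hlρ
    omega
  · rw [cs.wordProd_cons, ← hρ, hcancel]

/-- Lifting (i): if `s w < w` and `x ≤ w` then `s x ≤ w`. -/
lemma liftL1 {x w : W} (a : B) (hx : bruhatLE cs x w)
    (hd : cs.length (cs.simple a * w) < cs.length w) :
    bruhatLE cs (cs.simple a * x) w := by
  obtain ⟨ρ, hρred, hρprod, hΩred, hΩprod⟩ := descent_word cs a hd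
  obtain ⟨χ, hχsub, hχred, hχx⟩ := subword_of_le cs hx hΩred hΩprod
  rcases List.sublist_cons_iff.mp hχsub with hχ1 | ⟨χ₁, rfl, hχ₁⟩
  · exact ⟨a :: ρ, a :: χ, hΩred, hΩprod, List.cons_sublist_cons.mpr hχ1,
      by rw [cs.wordProd_cons, hχx]⟩
  · refine ⟨a :: ρ, χ₁, hΩred, hΩprod, hχ₁.trans (List.sublist_cons_self a ρ), ?_⟩
    rw [← hχx, cs.wordProd_cons, cs.simple_mul_simple_cancel_left]

/-- Lifting (iii): if `s w < w`, `x ≤ w` and `x < s x`, then `x ≤ s w`. -/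
lemma liftL3 {x w : W} (a : B) (hx : bruhatLE cs x w)
    (hd : cs.length (cs.simple a * w) < cs.length w)
    (hux : cs.length x < cs.length (cs.simple a * x)) :
    bruhatLE cs x (cs.simple a * w) := by
  obtain ⟨ρ, hρred, hρprod, hΩred, hΩprod⟩ := descent_word cs a hd
  obtain ⟨χ, hχsub, hχred, hχx⟩ := subword_of_le cs hx hΩred hΩprod
  rcases List.sublist_cons_iff.mp hχsub with hχ1 | ⟨χ₁, rfl, hχ₁⟩
  · exact ⟨ρ, χ, hρred, hρprod, hχ1, hχx⟩
  · exfalso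
    have h1 : cs.length (cs.wordProd (a :: χ₁)) = χ₁.length + 1 := hχred
    have h2 : cs.simple a * x = cs.wordProd χ₁ := by
      rw [← hχx, cs.wordProd_cons, cs.simple_mul_simple_cancel_left]
    have h3 : cs.length (cs.simple a * x) ≤ χ₁.length := by
      rw [h2]; exact cs.length_wordProd_le χ₁
    rw [hχx] at h1
    omega

/-- Lifting (v): if `s x < x` then `s x ≤ x`. -/
lemma liftL5 {x : W} (a : B) (hd : cs.length (cs.simple a * x) < cs.length x) :
    bruhatLE cs (cs.simple a * x) x := by
  obtain ⟨ρ, hρred, hρprod, hΩred, hΩprod⟩ := descent_word cs a hd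
  exact ⟨a :: ρ, ρ, hΩred, hΩprod, List.sublist_cons_self a ρ, hρprod⟩

/-- Lifting (iv): if `w < s w` and `x ≤ w` then `x ≤ s w` and `s x ≤ s w`. -/
lemma liftL4 {x w : W} (a : B) (hx : bruhatLE cs x w)
    (hasc : cs.length w < cs.length (cs.simple a * w)) :
    bruhatLE cs x (cs.simple a * w) ∧ bruhatLE cs (cs.simple a * x) (cs.simple a * w) := by
  obtain ⟨ω, hred, hω⟩ := cs.exists_reduced_word' w
  obtain ⟨χ, hχsub, hχred, hχx⟩ := subword_of_le cs hx hred hω.symm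
  have hΩred : cs.IsReduced (a :: ω) := by
    unfold CoxeterSystem.IsReduced
    rw [cs.wordProd_cons, ← hω, List.length_cons]
    have h1 : cs.length (cs.wordProd ω) = ω.length := hred
    rw [← hω] at h1
    have h2 := cs.length_simple_mul w a
    omega
  have hΩprod : cs.wordProd (a :: ω) = cs.simple a * w := by
    rw [cs.wordProd_cons, ← hω]
  constructor
  · exact ⟨a :: ω, χ, hΩred, hΩprod, hχsub.trans (List.sublist_cons_self a ω), hχx⟩
  · exact ⟨a :: ω, a :: χ, hΩred, hΩprod, List.cons_sublist_cons.mpr hχsub,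
      by rw [cs.wordProd_cons, hχx]⟩

lemma le_smul_self {x : W} (a : B) (hasc : cs.length x < cs.length (cs.simple a * x)) :
    bruhatLE cs x (cs.simple a * x) :=
  (liftL4 cs a (ble_refl cs x) hasc).1

/-- Lifting (ii): if `s y < y`, `s w < w`, `y ≤ w` then `s y ≤ s w`. -/
lemma liftL2 {y w : W} (a : B) (hyw : bruhatLE cs y w)
    (hdy : cs.length (cs.simple a * y) < cs.length y)
    (hdw : cs.length (cs.simple a * w) < cs.length w) :
    bruhatLE cs (cs.simple a * y) (cs.simple a * w) := by
  obtain ⟨ρ, hρred, hρprod, hΩred, hΩprod⟩ := descent_word cs a hdw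
  obtain ⟨χ, hχsub, hχred, hχx⟩ := subword_of_le cs hyw hΩred hΩprod
  rcases List.sublist_cons_iff.mp hχsub with hχ1 | ⟨χ₁, rfl, hχ₁⟩
  · have h1 : bruhatLE cs y (cs.simple a * w) := ⟨ρ, χ, hρred, hρprod, hχ1, hχx⟩
    exact ble_trans cs (liftL5 cs a hdy) h1
  · refine ⟨ρ, χ₁, hρred, hρprod, hχ₁, ?_⟩
    rw [← hχx, cs.wordProd_cons, cs.simple_mul_simple_cancel_left]

end Bruhat

section Signs

lemma neg_one_pow_cancel {b c : ℕ} (h : b = c + 1 ∨ c = b + 1) :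
    (-1 : ℤ) ^ b + (-1 : ℤ) ^ c = 0 := by
  rcases h with rfl | rfl <;> rw [pow_succ] <;> ring

lemma neg_one_pow_sub {a b : ℕ} (h : b ≤ a) :
    (-1 : ℤ) ^ (a - b) = (-1 : ℤ) ^ a * (-1 : ℤ) ^ b := by
  have hb : (-1 : ℤ) ^ b * (-1 : ℤ) ^ b = 1 := by
    rw [← pow_add]
    exact Even.neg_one_pow ⟨b, rfl⟩
  calc (-1 : ℤ) ^ (a - b) = (-1 : ℤ) ^ (a - b) * ((-1 : ℤ) ^ b * (-1 : ℤ) ^ b) := by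
        rw [hb, mul_one]
    _ = (-1 : ℤ) ^ (a - b + b) * (-1 : ℤ) ^ b := by rw [← pow_add]; ring
    _ = (-1 : ℤ) ^ a * (-1 : ℤ) ^ b := by rw [Nat.sub_add_cancel h]

end Signs

section Main

variable (cs : CoxeterSystem M W)

lemma main_aux : ∀ n : ℕ, ∀ w y : W, ∀ F : Finset W, cs.length w ≤ n → bruhatLE cs y w →
    (∀ x, x ∈ F ↔ (bruhatLE cs y x ∧ bruhatLE cs x w)) →
    ∑ x ∈ F, (-1 : ℤ) ^ (cs.length w - cs.length x) = if y = w then 1 else 0 := by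
  intro n
  induction n with
  | zero =>
    intro w y F hw hyw hF
    have hw1 : w = 1 := by rw [← cs.length_eq_zero_iff]; omega
    subst hw1
    have hy1 : y = 1 := by
      have := ble_length_le cs hyw
      rw [← cs.length_eq_zero_iff]
      rw [cs.length_one] at this
      omega
    subst hy1
    rw [if_pos rfl]
    have hFs : F = {1} := by
      apply Finset.ext
      intro x
      rw [hF x, Finset.mem_singleton]
      constructor
      · rintro ⟨h1, h2⟩
        exact ble_eq_of_length_ge cs h2 (ble_length_le cs h1)
      · rintro rfl
        exact ⟨ble_refl cs 1, ble_refl cs 1⟩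
    rw [hFs]
    simp
  | succ n IH =>
    intro w y F hw hyw hF
    by_cases hyeq : y = w
    · rw [if_pos hyeq]
      have hFs : F = {w} := by
        apply Finset.ext
        intro x
        rw [hF x, Finset.mem_singleton]
        constructor
        · rintro ⟨h1, h2⟩
          rw [hyeq] at h1
          exact ble_eq_of_length_ge cs h2 (ble_length_le cs h1)
        · intro h
          rw [h, hyeq]
          exact ⟨ble_refl cs w, ble_refl cs w⟩
      rw [hFs]
      simp
    · rw [if_neg hyeq]
      have hwne1 : w ≠ 1 := by
        rintro rfl
        apply hyeq
        apply ble_eq_of_length_ge cs hyw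
        rw [cs.length_one]
        omega
      obtain ⟨a, ha⟩ := cs.exists_leftDescent_of_ne_one hwne1
      have hdes : cs.length (cs.simple a * w) < cs.length w := ha
      by_cases hya : cs.length y < cs.length (cs.simple a * y)
      -- Case A : s y > y. Pair up the interval by x ↦ s x.
      · apply Finset.sum_involution (fun x _ => cs.simple a * x)
        · intro x hx
          obtain ⟨hyx, hxw⟩ := (hF x).mp hx
          have h1 : cs.length x ≤ cs.length w := ble_length_le cs hxw
          have h2 : cs.length (cs.simple a * x) ≤ cs.length w :=
            ble_length_le cs (liftL1 cs a hxw hdes)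
          have h3 := cs.length_simple_mul x a
          apply neg_one_pow_cancel
          omega
        · intro x hx _
          intro heq
          have := cs.length_simple_mul_ne x a
          rw [heq] at this
          exact this rfl
        · intro x hx
          obtain ⟨hyx, hxw⟩ := (hF x).mp hx
          rw [hF]
          refine ⟨?_, liftL1 cs a hxw hdes⟩
          by_cases hxx : cs.length x < cs.length (cs.simple a * x)
          · exact ble_trans cs hyx (le_smul_self cs a hxx)
          · have hdx : cs.length (cs.simple a * x) < cs.length x := by
              have := cs.length_simple_mul_ne x a
              omega
            exact liftL3 cs a hyx hdx hya
        · intro x hx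
          exact cs.simple_mul_simple_cancel_left a
      -- Case B : s y < y.
      · have hyd : cs.length (cs.simple a * y) < cs.length y := by
          have := cs.length_simple_mul_ne y a
          omega
        have hcy : cs.simple a * (cs.simple a * y) = y := cs.simple_mul_simple_cancel_left a
        have hcw : cs.simple a * (cs.simple a * w) = w := cs.simple_mul_simple_cancel_left a
        have hw2w : bruhatLE cs (cs.simple a * w) w := liftL5 cs a hdes
        have hy2y : bruhatLE cs (cs.simple a * y) y := liftL5 cs a hyd
        have hy2asc : cs.length (cs.simple a * y)
            < cs.length (cs.simple a * (cs.simple a * y)) := by rw [hcy]; exact hyd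
        obtain ⟨U, hU⟩ : ∃ U : Finset W, ∀ x, bruhatLE cs x w → x ∈ U := by
          obtain ⟨ω₀, hω₀red, hω₀⟩ := cs.exists_reduced_word' w
          refine ⟨(ω₀.sublists.map cs.wordProd).toFinset, ?_⟩
          intro x hxw
          obtain ⟨χ, hsub, _, hχ⟩ := subword_of_le cs hxw hω₀red hω₀.symm
          rw [List.mem_toFinset, List.mem_map]
          exact ⟨χ, List.mem_sublists.mpr hsub, hχ⟩
        obtain ⟨K, hKmem⟩ : ∃ K : Finset W, ∀ x, x ∈ K ↔
            (bruhatLE cs (cs.simple a * y) x ∧ bruhatLE cs x w) := by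
          refine ⟨U.filter (fun x => bruhatLE cs (cs.simple a * y) x ∧ bruhatLE cs x w), ?_⟩
          intro x
          rw [Finset.mem_filter]
          exact ⟨fun h => h.2, fun h => ⟨hU x h.2, h⟩⟩
        obtain ⟨K2, hK2mem⟩ : ∃ K2 : Finset W, ∀ x, x ∈ K2 ↔
            (bruhatLE cs (cs.simple a * y) x ∧ bruhatLE cs x (cs.simple a * w)) := by
          refine ⟨U.filter (fun x => bruhatLE cs (cs.simple a * y) x
            ∧ bruhatLE cs x (cs.simple a * w)), ?_⟩
          intro x
          rw [Finset.mem_filter]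
          exact ⟨fun h => h.2, fun h => ⟨hU x (ble_trans cs h.2 hw2w), h⟩⟩
        obtain ⟨P1, hP1mem⟩ : ∃ P1 : Finset W, ∀ x, x ∈ P1 ↔
            (bruhatLE cs y x ∧ bruhatLE cs x (cs.simple a * w)) := by
          refine ⟨U.filter (fun x => bruhatLE cs y x ∧ bruhatLE cs x (cs.simple a * w)), ?_⟩
          intro x
          rw [Finset.mem_filter]
          exact ⟨fun h => h.2, fun h => ⟨hU x (ble_trans cs h.2 hw2w), h⟩⟩
        -- closure of K under the involution, and the key sum over K vanishes
        have hKsum : ∑ x ∈ K, (-1 : ℤ) ^ (cs.length x) = 0 := by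
          apply Finset.sum_involution (fun x _ => cs.simple a * x)
          · intro x hx
            have h3 := cs.length_simple_mul x a
            apply neg_one_pow_cancel
            omega
          · intro x hx _
            intro heq
            have := cs.length_simple_mul_ne x a
            rw [heq] at this
            exact this rfl
          · intro x hx
            obtain ⟨hy2x, hxw⟩ := (hKmem x).mp hx
            rw [hKmem]
            refine ⟨?_, liftL1 cs a hxw hdes⟩
            by_cases hxx : cs.length x < cs.length (cs.simple a * x)
            · exact ble_trans cs hy2x (le_smul_self cs a hxx)
            · have hdx : cs.length (cs.simple a * x) < cs.length x := by
                have := cs.length_simple_mul_ne x a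
                omega
              exact liftL3 cs a hy2x hdx hy2asc
          · intro x hx
            exact cs.simple_mul_simple_cancel_left a
        -- if x ∈ K and ¬ y ≤ x then x ≤ s w
        have hP4 : ∀ x, x ∈ K → ¬ bruhatLE cs y x → bruhatLE cs x (cs.simple a * w) := by
          intro x hx hnyx
          obtain ⟨hy2x, hxw⟩ := (hKmem x).mp hx
          by_cases hxx : cs.length x < cs.length (cs.simple a * x)
          · exact liftL3 cs a hxw hdes hxx
          · exfalso
            have hdx : cs.length (cs.simple a * x) < cs.length x := by
              have := cs.length_simple_mul_ne x a
              omega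
            have h1 : bruhatLE cs (cs.simple a * y) (cs.simple a * x) :=
              liftL3 cs a hy2x hdx hy2asc
            have hxasc : cs.length (cs.simple a * x)
                < cs.length (cs.simple a * (cs.simple a * x)) := by
              rw [cs.simple_mul_simple_cancel_left]; exact hdx
            have h2 := (liftL4 cs a h1 hxasc).2
            rw [hcy, cs.simple_mul_simple_cancel_left] at h2
            exact hnyx h2
        -- partitions
        have hKsplit : F = K.filter (fun x => bruhatLE cs y x) := by
          apply Finset.ext
          intro x
          rw [hF x, Finset.mem_filter, hKmem]
          constructor
          · rintro ⟨h1, h2⟩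
            exact ⟨⟨ble_trans cs hy2y h1, h2⟩, h1⟩
          · rintro ⟨⟨_, h2⟩, h1⟩
            exact ⟨h1, h2⟩
        have hK2split : P1 = K2.filter (fun x => bruhatLE cs y x) := by
          apply Finset.ext
          intro x
          rw [hP1mem x, Finset.mem_filter, hK2mem]
          constructor
          · rintro ⟨h1, h2⟩
            exact ⟨⟨ble_trans cs hy2y h1, h2⟩, h1⟩
          · rintro ⟨⟨_, h2⟩, h1⟩
            exact ⟨h1, h2⟩
        have hP3split : K.filter (fun x => ¬ bruhatLE cs y x)
            = K2.filter (fun x => ¬ bruhatLE cs y x) := by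
          apply Finset.ext
          intro x
          rw [Finset.mem_filter, Finset.mem_filter, hKmem, hK2mem]
          constructor
          · rintro ⟨⟨h1, h2⟩, h3⟩
            exact ⟨⟨h1, hP4 x ((hKmem x).mpr ⟨h1, h2⟩) h3⟩, h3⟩
          · rintro ⟨⟨h1, h2⟩, h3⟩
            exact ⟨⟨h1, ble_trans cs h2 hw2w⟩, h3⟩
        -- auxiliary conversion between the two kinds of sums
        have hconv : ∀ (S : Finset W) (v : W), (∀ x ∈ S, bruhatLE cs x v) →
            ∑ x ∈ S, (-1 : ℤ) ^ (cs.length v - cs.length x)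
              = (-1 : ℤ) ^ (cs.length v) * ∑ x ∈ S, (-1 : ℤ) ^ (cs.length x) := by
          intro S v hS
          rw [Finset.mul_sum]
          apply Finset.sum_congr rfl
          intro x hx
          exact neg_one_pow_sub (ble_length_le cs (hS x hx))
        -- IH for (s y, s w) on K2
        have hlw2 : cs.length (cs.simple a * w) ≤ n := by omega
        have hy2w2 : bruhatLE cs (cs.simple a * y) (cs.simple a * w) :=
          liftL2 cs a hyw hyd hdes
        have hIH2 := IH (cs.simple a * w) (cs.simple a * y) K2 hlw2 hy2w2 hK2mem
        have hne2 : cs.simple a * y ≠ cs.simple a * w := by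
          intro h
          apply hyeq
          have := congrArg (fun z => cs.simple a * z) h
          simpa [hcy, hcw] using this
        rw [if_neg hne2] at hIH2
        have hK2sum : ∑ x ∈ K2, (-1 : ℤ) ^ (cs.length x) = 0 := by
          rw [hconv K2 (cs.simple a * w) (fun x hx => ((hK2mem x).mp hx).2)] at hIH2
          rcases mul_eq_zero.mp hIH2 with h | h
          · exfalso
            exact pow_ne_zero _ (by norm_num) h
          · exact h
        -- sum over P1 vanishes
        have hP1sum : ∑ x ∈ P1, (-1 : ℤ) ^ (cs.length x) = 0 := by
          by_cases hysw : bruhatLE cs y (cs.simple a * w)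
          · have hIH1 := IH (cs.simple a * w) y P1 hlw2 hysw hP1mem
            have hne1 : y ≠ cs.simple a * w := by
              intro h
              have : cs.simple a * y = w := by rw [h, hcw]
              rw [← this] at hdes
              rw [h] at hyd
              have h3 := cs.length_simple_mul y a
              omega
            rw [if_neg hne1] at hIH1
            rw [hconv P1 (cs.simple a * w) (fun x hx => ((hP1mem x).mp hx).2)] at hIH1
            rcases mul_eq_zero.mp hIH1 with h | h
            · exfalso
              exact pow_ne_zero _ (by norm_num) h
            · exact h
          · have : P1 = ∅ := by
              apply Finset.eq_empty_of_forall_notMem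
              intro x hx
              obtain ⟨h1, h2⟩ := (hP1mem x).mp hx
              exact hysw (ble_trans cs h1 h2)
            rw [this, Finset.sum_empty]
        -- combine
        have hsplitK : ∑ x ∈ K.filter (fun x => bruhatLE cs y x), (-1 : ℤ) ^ (cs.length x)
            + ∑ x ∈ K.filter (fun x => ¬ bruhatLE cs y x), (-1 : ℤ) ^ (cs.length x) = 0 := by
          rw [Finset.sum_filter_add_sum_filter_not]
          exact hKsum
        have hsplitK2 : ∑ x ∈ K2.filter (fun x => bruhatLE cs y x), (-1 : ℤ) ^ (cs.length x)
            + ∑ x ∈ K2.filter (fun x => ¬ bruhatLE cs y x), (-1 : ℤ) ^ (cs.length x) = 0 := by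
          rw [Finset.sum_filter_add_sum_filter_not]
          exact hK2sum
        rw [← hK2split] at hsplitK2
        rw [hP1sum, zero_add] at hsplitK2
        rw [← hP3split] at hsplitK2
        rw [← hKsplit] at hsplitK
        rw [hsplitK2, add_zero] at hsplitK
        rw [hconv F w (fun x hx => ((hF x).mp hx).2), hsplitK, mul_zero]

end Main

end VermaAux

/-- **Verma's theorem** (Möbius function of Bruhat order): for `y ≤ w`, the alternating sum
`∑_{y ≤ x ≤ w} (−1)^{ℓ(w) − ℓ(x)}` equals `1` if `y = w` and `0` if `y < w`; equivalently
`μ(y, w) = (−1)^{ℓ(w) − ℓ(y)}`. -/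

theorem mobius_bruhat (cs : CoxeterSystem M W) {y w : W} (hyw : bruhatLE cs y w)
    (F : Finset W) (hF : ∀ x, x ∈ F ↔ (bruhatLE cs y x ∧ bruhatLE cs x w)) :
    ∑ x ∈ F, (-1 : ℤ) ^ (cs.length w - cs.length x) = if y = w then 1 else 0 := by
  exact VermaAux.main_aux cs (cs.length w) w y F (le_refl _) hyw hF
end

section
/- Let W be a Coxeter group and y < w in Bruhat order, and suppose there exists a generator s ∈ S with ys > y and ws < w. Then the map x ↦ xs restricted appropriately gives a complete matching of the Hasse diagram of [y,w]: precisely, for each x ∈ [y,w] the element xs also lies in [y,w], and the pairing x ↔ xs matches each element with one covering it or covered by it. -/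
open CoxeterSystem

variable {B W : Type*} [Group W] {M : CoxeterMatrix B}

section SMAux
set_option linter.unusedSectionVars false
set_option maxHeartbeats 1600000
open List

namespace SMProof

variable {B W : Type*} [Group W] [DecidableEq W] {M : CoxeterMatrix B}
  (cs : CoxeterSystem M W)

local prefix:100 "s" => cs.simple
local prefix:100 "π" => cs.wordProd
local prefix:100 "ℓ" => cs.length

lemma conj_simple_eq_iff (i : B) (x : W) : (s i * x * s i = s i) ↔ (x = s i) := by
  constructor
  · intro h
    have hx : x = (s i)⁻¹ * (s i * x * s i) * (s i)⁻¹ := by group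
    rw [h, cs.inv_simple] at hx
    rw [hx, cs.simple_mul_simple_self, one_mul]
  · intro h
    rw [h, cs.simple_mul_simple_self, one_mul]

/-- The function underlying the permutation associated to a simple reflection. -/
def nuFun (i : B) : W × ℤˣ → W × ℤˣ :=
  fun p => (s i * p.1 * s i, if p.1 = s i then -p.2 else p.2)

lemma nuFun_involutive (i : B) : Function.Involutive (nuFun cs i) := by
  rintro ⟨x, ε⟩
  simp only [nuFun]
  have h1 : s i * (s i * x * s i) * s i = x := by
    rw [← mul_assoc, ← mul_assoc, cs.simple_mul_simple_self, one_mul, mul_assoc,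
      cs.simple_mul_simple_self, mul_one]
  by_cases hp : x = s i
  · rw [if_pos hp, if_pos (by rw [(conj_simple_eq_iff cs i x)]; exact hp), h1, neg_neg]
  · rw [if_neg hp, if_neg (fun h => hp ((conj_simple_eq_iff cs i x).mp h)), h1]

/-- The permutation of `W × ℤˣ` associated to a simple reflection. -/
def nu (i : B) : Equiv.Perm (W × ℤˣ) := (nuFun_involutive cs i).toPerm

lemma nu_apply (i : B) (p : W × ℤˣ) :
    nu cs i p = (s i * p.1 * s i, if p.1 = s i then -p.2 else p.2) := rfl

/-- Formula for products of the `nu` permutations over a word. -/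
lemma nuProd_apply : ∀ (ω : List B) (p : W × ℤˣ),
    (ω.map (nu cs)).prod p =
      (π ω * p.1 * (π ω)⁻¹, (-1 : ℤˣ) ^ ((cs.rightInvSeq ω).count p.1) * p.2) := by
  intro ω
  induction ω with
  | nil => intro p; simp [rightInvSeq]
  | cons i α ih =>
    rintro ⟨x, ε⟩
    have hsplit : ((i :: α).map (nu cs)).prod = nu cs i * (α.map (nu cs)).prod := by
      simp [List.map_cons, List.prod_cons]
    rw [hsplit]
    have happ : (nu cs i * (α.map (nu cs)).prod) (x, ε) =
        nu cs i ((α.map (nu cs)).prod (x, ε)) := rfl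
    rw [happ, ih (x, ε), nu_apply]
    have hcond : (π α * x * (π α)⁻¹ = s i) ↔ ((π α)⁻¹ * s i * π α = x) := by
      constructor
      · intro h
        have : x = (π α)⁻¹ * (π α * x * (π α)⁻¹) * π α := by group
        rw [h] at this
        rw [this]
      · intro h
        rw [← h]; group
    have hris : cs.rightInvSeq (i :: α) = ((π α)⁻¹ * s i * π α) :: cs.rightInvSeq α := rfl
    have hw : π (i :: α) = s i * π α := cs.wordProd_cons i α
    rw [Prod.mk.injEq]
    constructor
    · show s i * (π α * x * (π α)⁻¹) * s i = π (i :: α) * x * (π (i :: α))⁻¹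
      rw [hw, mul_inv_rev, cs.inv_simple]
      group
    · show (if π α * x * (π α)⁻¹ = s i then -((-1 : ℤˣ) ^ ((cs.rightInvSeq α).count x) * ε)
          else (-1 : ℤˣ) ^ ((cs.rightInvSeq α).count x) * ε) =
        (-1 : ℤˣ) ^ ((cs.rightInvSeq (i :: α)).count x) * ε
      rw [hris, List.count_cons]
      by_cases hc : (π α)⁻¹ * s i * π α = x
      · rw [if_pos (hcond.mpr hc), if_pos (beq_iff_eq.mpr hc), pow_succ]
        simp [mul_comm, mul_left_comm, mul_assoc]
      · rw [if_neg (fun h => hc (hcond.mp h)), if_neg (by simpa using hc)]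
        simp


/-- Product of a function mapped over an even alternating word. -/
lemma map_prod_alternating {G : Type*} [Monoid G] (f : B → G) (i i' : B) :
    ∀ m : ℕ, ((alternatingWord i i' (2 * m)).map f).prod = (f i * f i') ^ m := by
  intro m
  induction m with
  | zero => simp [alternatingWord]
  | succ m ih =>
    have h2 : 2 * (m + 1) = (2 * m + 1) + 1 := by ring
    rw [h2, alternatingWord_succ' i i' (2*m+1), alternatingWord_succ' i i' (2*m)]
    have hodd : ¬ Even (2*m+1) := by simp [Nat.even_add_one]
    rw [if_neg hodd, if_pos (by simp : Even (2*m))]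
    simp only [List.map_cons, List.prod_cons]
    rw [ih, pow_succ', mul_assoc]

lemma drop_alternatingWord (i i' : B) :
    ∀ (j m : ℕ), j ≤ m → (alternatingWord i i' m).drop j = alternatingWord i i' (m - j) := by
  intro j
  induction j with
  | zero => intro m _; simp
  | succ j ih =>
    intro m hm
    obtain ⟨m', rfl⟩ : ∃ m', m = m' + 1 := ⟨m - 1, by omega⟩
    rw [alternatingWord_succ' i i' m']
    have hd : (((if Even m' then i' else i) :: alternatingWord i i' m').drop (j+1))
        = (alternatingWord i i' m').drop j := by simp
    rw [hd, ih m' (by omega)]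
    congr 1
    omega

lemma ris_alternating_entry (i i' : B) (m : ℕ) (k : ℕ) (hk : k < 2 * m) :
    (cs.rightInvSeq (alternatingWord i i' (2 * m))).getD k 1 =
      (π (alternatingWord i i' (2*m - k - 1)))⁻¹ * π (alternatingWord i i' (2*m - k)) := by
  rw [cs.getD_rightInvSeq]
  rw [drop_alternatingWord i i' (k+1) (2*m) (by omega)]
  have h2 : 2*m - k = (2*m - k - 1) + 1 := by omega
  have h3 : alternatingWord i i' (2*m - k) =
      (if Even (2*m-k-1) then i' else i) :: alternatingWord i i' (2*m-k-1) := by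
    rw [h2, alternatingWord_succ' i i' (2*m-k-1), Nat.add_sub_cancel]
  have hget : (alternatingWord i i' (2*m))[k]? =
      some (if Even (2*m - k - 1) then i' else i) := by
    have h1 : (alternatingWord i i' (2*m)).drop k = alternatingWord i i' (2*m - k) :=
      drop_alternatingWord i i' k (2*m) (by omega)
    have h4 : (alternatingWord i i' (2*m))[k]?
        = ((alternatingWord i i' (2*m)).drop k)[0]? := by
      rw [List.getElem?_drop]
      norm_num
    rw [h4, h1, h3]
    rfl
  rw [hget]
  have h5 : π (alternatingWord i i' (2*m - k)) =
      s (if Even (2*m-k-1) then i' else i) * π (alternatingWord i i' (2*m-k-1)) := by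
    rw [h3, cs.wordProd_cons]
  have h6 : 2 * m - (k+1) = 2*m - k - 1 := by omega
  rw [h6, h5]
  simp only [Option.map_some, Option.getD_some]
  group

/-- conjugation of powers of `s i * s i'` by `s i'` inverts them -/
lemma simple_conj_pow (i i' : B) (u : ℕ) :
    s i' * (s i * s i') ^ u * s i' = ((s i * s i') ^ u)⁻¹ := by
  have h1 : s i' * (s i * s i') * s i' = (s i * s i')⁻¹ := by
    rw [mul_inv_rev, cs.inv_simple, cs.inv_simple]
    calc s i' * (s i * s i') * s i' = s i' * s i * (s i' * s i') := by group
      _ = s i' * s i := by rw [cs.simple_mul_simple_self, mul_one]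
  induction u with
  | zero => simp
  | succ u ih =>
    have expand : (s i' * (s i * s i')^u * s i') * (s i' * (s i * s i') * s i')
        = s i' * (s i * s i')^(u+1) * s i' := by
      rw [pow_succ]
      calc (s i' * (s i * s i')^u * s i') * (s i' * (s i * s i') * s i')
          = s i' * (s i * s i')^u * (s i' * s i') * ((s i * s i') * s i') := by group
        _ = s i' * ((s i * s i')^u * (s i * s i')) * s i' := by
            rw [cs.simple_mul_simple_self]; group
    rw [← expand, ih, h1, pow_succ', mul_inv_rev, mul_inv_rev]
    group

lemma q_ratio (i i' : B) (r : ℕ) :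
    (π (alternatingWord i i' r))⁻¹ * π (alternatingWord i i' (r+1)) =
      ((s i * s i') ^ (r/2))⁻¹ * s i' * (s i * s i') ^ ((r+1)/2) := by
  rw [cs.prod_alternatingWord_eq_mul_pow, cs.prod_alternatingWord_eq_mul_pow]
  rcases Nat.even_or_odd r with he | ho
  · rw [if_pos he, if_neg (by simp [Nat.even_add_one, he])]
    rw [one_mul, mul_assoc]
  · rw [if_neg (by simp [Nat.not_even_iff_odd.mpr ho]), if_pos (by simpa [Nat.even_add_one] using ho)]
    rw [one_mul, mul_inv_rev, cs.inv_simple]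

lemma q_ratio_periodic (i i' : B) (m r : ℕ) (hc : (s i * s i')^m = 1) :
    (π (alternatingWord i i' (r+m)))⁻¹ * π (alternatingWord i i' (r+m+1)) =
      (π (alternatingWord i i' r))⁻¹ * π (alternatingWord i i' (r+1)) := by
  rw [q_ratio, q_ratio]
  set c := s i * s i' with hcdef
  set δ₁ := (r+m)/2 - r/2 with hδ₁
  set δ₂ := (r+m+1)/2 - (r+1)/2 with hδ₂
  have e1 : (r+m)/2 = r/2 + δ₁ := by omega
  have e2 : (r+m+1)/2 = (r+1)/2 + δ₂ := by omega
  have e3 : δ₂ + δ₁ = m := by omega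
  have comm : ∀ u v : ℕ, c^u * c^v = c^v * c^u := fun u v => by
    rw [← pow_add, ← pow_add, add_comm]
  have hconj : s i' * c^δ₂ = (c^δ₂)⁻¹ * s i' := by
    have h := simple_conj_pow cs i i' δ₂
    calc s i' * c^δ₂ = (s i' * c^δ₂ * s i') * s i' := by
          rw [mul_assoc (s i' * c^δ₂), cs.simple_mul_simple_self, mul_one]
      _ = (c^δ₂)⁻¹ * s i' := by rw [h]
  have key : (c^δ₁)⁻¹ * (s i' * c^δ₂) = s i' := by
    rw [hconj, ← mul_assoc, ← mul_inv_rev, ← pow_add, e3, hc, inv_one, one_mul]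
  rw [e1, e2, pow_add, pow_add]
  calc (c^(r/2) * c^δ₁)⁻¹ * s i' * (c^((r+1)/2) * c^δ₂)
      = (c^(r/2))⁻¹ * ((c^δ₁)⁻¹ * (s i' * c^δ₂)) * c^((r+1)/2) := by
        rw [comm ((r+1)/2) δ₂]; group
    _ = (c^(r/2))⁻¹ * s i' * c^((r+1)/2) := by rw [key]

lemma ris_alternating_periodic (i i' : B) (m k : ℕ) (hk : k < m)
    (hc : (s i * s i')^m = 1) :
    (cs.rightInvSeq (alternatingWord i i' (2 * m))).getD (k + m) 1 =
      (cs.rightInvSeq (alternatingWord i i' (2 * m))).getD k 1 := by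
  rw [ris_alternating_entry cs i i' m (k+m) (by omega),
    ris_alternating_entry cs i i' m k (by omega)]
  have e1 : 2*m - (k+m) - 1 = m - k - 1 := by omega
  have e2 : 2*m - (k+m) = (m - k - 1) + 1 := by omega
  have e3 : 2*m - k - 1 = (m - k - 1) + m := by omega
  have e4 : 2*m - k = ((m - k - 1) + m) + 1 := by omega
  rw [e1, e2, e3, e4]
  exact (q_ratio_periodic cs i i' m (m - k - 1) hc).symm

lemma ris_alternating_doubling (i i' : B) (m : ℕ) (hc : (s i * s i')^m = 1) :
    ∃ T : List W, cs.rightInvSeq (alternatingWord i i' (2 * m)) = T ++ T := by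
  set L := cs.rightInvSeq (alternatingWord i i' (2 * m)) with hL
  have hlen : L.length = 2 * m := by
    rw [hL, cs.length_rightInvSeq, length_alternatingWord]
  refine ⟨L.take m, ?_⟩
  have hsplit : L = L.take m ++ L.drop m := (List.take_append_drop m L).symm
  nth_rewrite 1 [hsplit]
  congr 1
  apply List.ext_getElem
  · rw [List.length_take, List.length_drop, hlen]; omega
  · intro j h1 h2
    have hj : j < m := by
      have := List.length_take (i := m) (l := L)
      simp [hlen] at h2
      omega
    rw [List.getElem_take, List.getElem_drop]
    have g1 : L[m + j] = L.getD (m+j) 1 := (List.getD_eq_getElem L 1 (by omega)).symm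
    have g2 : L[j]'(by omega) = L.getD j 1 := (List.getD_eq_getElem L 1 (by omega)).symm
    rw [g1, g2, hL]
    have : m + j = j + m := by omega
    rw [this]
    exact ris_alternating_periodic cs i i' m j hj hc

lemma nu_liftable : M.IsLiftable (nu cs) := by
  intro i i'
  rw [← map_prod_alternating (nu cs) i i' (M i i')]
  apply Equiv.ext
  rintro ⟨x, ε⟩
  rw [nuProd_apply]
  have hπ : π (alternatingWord i i' (2 * M i i')) = 1 := by
    rw [cs.prod_alternatingWord_eq_mul_pow, if_pos (by simp : Even (2 * M i i'))]
    have h2 : 2 * M i i' / 2 = M i i' := by omega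
    rw [h2, one_mul, cs.simple_mul_simple_pow]
  have heven : Even ((cs.rightInvSeq (alternatingWord i i' (2 * M i i'))).count x) := by
    obtain ⟨T, hT⟩ := ris_alternating_doubling cs i i' (M i i') (cs.simple_mul_simple_pow i i')
    rw [hT, List.count_append]
    exact ⟨T.count x, by omega⟩
  rw [hπ, Even.neg_one_pow heven]
  simp

/-- The sign homomorphism into permutations of `W × ℤˣ`. -/
noncomputable def theta : W →* Equiv.Perm (W × ℤˣ) :=
  cs.lift ⟨fun i => nu cs i, nu_liftable cs⟩

lemma theta_simple (i : B) : theta cs (s i) = nu cs i :=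
  cs.lift_apply_simple (nu_liftable cs) i

lemma theta_wordProd (ω : List B) : theta cs (π ω) = (ω.map (nu cs)).prod := by
  induction ω with
  | nil => simp [cs.wordProd_nil]
  | cons i α ih =>
    rw [cs.wordProd_cons, map_mul, theta_simple, ih]
    simp [List.map_cons, List.prod_cons]

/-- The sign cocycle. -/
noncomputable def esgn (w t : W) : ℤˣ := (theta cs w (t, 1)).2

lemma esgn_wordProd (ω : List B) (t : W) :
    esgn cs (π ω) t = (-1 : ℤˣ) ^ ((cs.rightInvSeq ω).count t) := by
  rw [esgn, theta_wordProd, nuProd_apply]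
  simp

lemma theta_apply (w t : W) (ε : ℤˣ) :
    theta cs w (t, ε) = (w * t * w⁻¹, ε * esgn cs w t) := by
  obtain ⟨ω, -, rfl⟩ := cs.exists_reduced_word' w
  rw [theta_wordProd, nuProd_apply, esgn_wordProd]
  simp [mul_comm]

lemma esgn_mul (a b t : W) : esgn cs (a * b) t = esgn cs b t * esgn cs a (b * t * b⁻¹) := by
  have h : theta cs (a * b) (t, 1) = theta cs a (theta cs b (t, 1)) := by
    rw [map_mul]; rfl
  have hb := theta_apply cs b t 1
  rw [one_mul] at hb
  have ha := theta_apply cs a (b * t * b⁻¹) (esgn cs b t)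
  show (theta cs (a * b) (t, 1)).2 = _
  rw [h, hb, ha]

lemma esgn_one (t : W) : esgn cs 1 t = 1 := by
  simp [esgn]

lemma esgn_simple_self (i : B) : esgn cs (s i) (s i) = -1 := by
  have : (s i) = π [i] := by simp
  rw [this, esgn_wordProd]
  have hris : cs.rightInvSeq [i] = [s i] := by
    simp [rightInvSeq]
  rw [hris]
  simp

lemma esgn_refl_self {t : W} (ht : cs.IsReflection t) : esgn cs t t = -1 := by
  obtain ⟨u, i, rfl⟩ := ht
  set t := u * s i * u⁻¹ with htdef
  have hdec : t = u * (s i * u⁻¹) := by rw [htdef]; group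
  have h1 : (s i * u⁻¹) * t * (s i * u⁻¹)⁻¹ = s i := by
    rw [htdef, mul_inv_rev, cs.inv_simple, inv_inv]
    calc s i * u⁻¹ * (u * s i * u⁻¹) * (u * s i)
        = s i * (u⁻¹ * u) * s i * (u⁻¹ * u) * s i := by group
      _ = s i := by
          simp only [inv_mul_cancel, mul_one]
          rw [cs.simple_mul_simple_self, one_mul]
  have h2 : u⁻¹ * t * (u⁻¹)⁻¹ = s i := by
    rw [htdef, inv_inv]
    calc u⁻¹ * (u * s i * u⁻¹) * u = (u⁻¹ * u) * s i * (u⁻¹ * u) := by group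
      _ = s i := by simp
  have e1 : esgn cs t t = esgn cs (s i * u⁻¹) t * esgn cs u (s i) := by
    nth_rewrite 1 [hdec]
    rw [esgn_mul, h1]
  have e2 : esgn cs (s i * u⁻¹) t = esgn cs u⁻¹ t * esgn cs (s i) (s i) := by
    rw [esgn_mul, h2]
  have e3 : esgn cs u⁻¹ t * esgn cs u (s i) = 1 := by
    have := esgn_mul cs u u⁻¹ t
    rw [mul_inv_cancel, esgn_one, h2] at this
    exact this.symm
  rw [e1, e2, esgn_simple_self]
  calc esgn cs u⁻¹ t * -1 * esgn cs u (s i)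
      = -(esgn cs u⁻¹ t * esgn cs u (s i)) := by rw [mul_neg_one, neg_mul]
    _ = -1 := by rw [e3]

lemma length_lt_of_esgn_neg {w t : W} (h : esgn cs w t = -1) :
    cs.length (w * t) < cs.length w := by
  obtain ⟨ω, hred, rfl⟩ := cs.exists_reduced_word' w
  rw [esgn_wordProd] at h
  have hodd : ¬ Even ((cs.rightInvSeq ω).count t) := by
    intro he
    rw [Even.neg_one_pow he] at h
    exact absurd h (by decide)
  have hmem : t ∈ cs.rightInvSeq ω := by
    by_contra hmem
    exact hodd (by simp [List.count_eq_zero_of_not_mem hmem])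
  exact (cs.isRightInversion_of_mem_rightInvSeq hred hmem).2

lemma esgn_neg_of_descent {w t : W} (ht : cs.IsReflection t)
    (h : cs.length (w * t) < cs.length w) : esgn cs w t = -1 := by
  rcases Int.units_eq_one_or (esgn cs w t) with h1 | h1
  · exfalso
    have key : esgn cs (w * t) t = -1 := by
      rw [esgn_mul]
      have htt : t * t * t⁻¹ = t := by rw [mul_assoc, mul_inv_cancel, mul_one]
      rw [htt, esgn_refl_self cs ht, h1, mul_one]
    have := length_lt_of_esgn_neg cs key
    rw [mul_assoc, ht.mul_self, mul_one] at this
    omega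
  · exact h1

/-- Strong exchange: membership form. -/
lemma strong_exchange_mem {ω : List B} (hred : cs.IsReduced ω) {t : W}
    (ht : cs.IsReflection t) (h : cs.length (π ω * t) < cs.length (π ω)) :
    t ∈ cs.rightInvSeq ω := by
  have := esgn_neg_of_descent cs ht h
  rw [esgn_wordProd] at this
  by_contra hmem
  rw [List.count_eq_zero_of_not_mem hmem, pow_zero] at this
  exact absurd this (by decide)

/-- Strong exchange: erasure form. -/
lemma strong_exchange {ω : List B} (hred : cs.IsReduced ω) {t : W}
    (ht : cs.IsReflection t) (h : cs.length (π ω * t) < cs.length (π ω)) :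
    ∃ k < ω.length, π (ω.eraseIdx k) = π ω * t := by
  obtain ⟨k, hk, hkt⟩ := List.mem_iff_getElem.mp (strong_exchange_mem cs hred ht h)
  rw [cs.length_rightInvSeq] at hk
  refine ⟨k, hk, ?_⟩
  rw [← cs.wordProd_mul_getD_rightInvSeq ω k]
  congr 1
  rw [List.getD_eq_getElem _ 1 (by rw [cs.length_rightInvSeq]; omega)]
  exact hkt

/-- Deletion: every word has a reduced sublist with the same product. -/
lemma exists_reduced_sublist : ∀ (n : ℕ) (ω : List B), ω.length ≤ n →
    ∃ χ : List B, χ.Sublist ω ∧ cs.IsReduced χ ∧ π χ = π ω := by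
  intro n
  induction n with
  | zero =>
    intro ω hω
    rw [Nat.le_zero, List.length_eq_zero_iff] at hω
    subst hω
    exact ⟨[], List.Sublist.refl _, by simp [CoxeterSystem.IsReduced], rfl⟩
  | succ n ih =>
    intro ω hω
    by_cases hred : cs.IsReduced ω
    · exact ⟨ω, List.Sublist.refl _, hred, rfl⟩
    rcases List.eq_nil_or_concat ω with rfl | ⟨α, b, rfl⟩
    · exact absurd (by simp [CoxeterSystem.IsReduced] : cs.IsReduced ([] : List B)) hred
    have hπ : π (α.concat b) = π α * s b := cs.wordProd_concat b α
    have hαsub : α.Sublist (α.concat b) := by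
      rw [List.concat_eq_append]
      exact List.sublist_append_left α [b]
    by_cases hredα : cs.IsReduced α
    · have hdesc : cs.length (π α * s b) < cs.length (π α) := by
        rcases cs.length_mul_simple (π α) b with hup | hdn
        · exfalso
          apply hred
          rw [CoxeterSystem.IsReduced, hπ, hup, hredα]
          simp
        · omega
      obtain ⟨k, hk, hke⟩ := strong_exchange cs hredα (cs.isReflection_simple b) hdesc
      have hklen : (α.eraseIdx k).length ≤ n := by
        have h5 := List.length_eraseIdx_add_one hk
        simp at hω
        omega
      obtain ⟨χ, h1, h2, h3⟩ := ih (α.eraseIdx k) (by omega)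
      exact ⟨χ, (h1.trans (List.eraseIdx_sublist α k)).trans hαsub, h2,
        by rw [h3, hke, ← hπ]⟩
    · obtain ⟨χ', hsub', hred', hπ'⟩ := ih α (by simp at hω; omega)
      have hlt : χ'.length < α.length := by
        have h1 : cs.length (π α) ≤ α.length := cs.length_wordProd_le α
        have h2 : cs.length (π α) ≠ α.length := hredα
        have h3 : χ'.length = cs.length (π α) := by rw [← hπ']; exact hred'.symm
        omega
      obtain ⟨χ, hsub, hredχ, hπχ⟩ := ih (χ'.concat b) (by simp at hω ⊢; omega)
      refine ⟨χ, hsub.trans ?_, hredχ, ?_⟩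
      · rw [List.concat_eq_append, List.concat_eq_append]
        exact hsub'.append (List.Sublist.refl [b])
      · rw [hπχ, cs.wordProd_concat, cs.wordProd_concat, hπ']

/-- One step of a Bruhat chain. -/
def cLT1 (u v : W) : Prop := ∃ t, cs.IsReflection t ∧ v = u * t ∧ cs.length u < cs.length v

/-- Bruhat order via chains of reflections. -/
def cLE : W → W → Prop := Relation.ReflTransGen (cLT1 cs)

/-- Chain order implies a reduced subword of every reduced word. -/
lemma chain_to_subword : ∀ (n : ℕ) (u w : W), cs.length w ≤ n → cLE cs u w →
    ∀ ω : List B, cs.IsReduced ω → π ω = w →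
    ∃ ψ : List B, ψ.Sublist ω ∧ cs.IsReduced ψ ∧ π ψ = u := by
  intro n
  induction n using Nat.strong_induction_on with
  | _ n IHn =>
  intro u w hw hle ω hred hπω
  rcases hle.cases_tail with heq | ⟨w₀, hc, t, ht, hveq, hlt⟩
  · exact ⟨ω, List.Sublist.refl _, hred, by rw [hπω, heq]⟩
  · have hπt : π ω * t = w₀ := by
      rw [hπω, hveq, mul_assoc, ht.mul_self, mul_one]
    have hlen : cs.length (π ω * t) < cs.length (π ω) := by
      rw [hπt, hπω]
      omega
    obtain ⟨k, hk, hke⟩ := strong_exchange cs hred ht hlen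
    obtain ⟨χ, hχsub, hχred, hχπ⟩ :=
      exists_reduced_sublist cs (ω.eraseIdx k).length (ω.eraseIdx k) le_rfl
    have hχw : π χ = w₀ := by rw [hχπ, hke, hπt]
    obtain ⟨ψ, h1, h2, h3⟩ := IHn (cs.length w₀) (by omega) u w₀ le_rfl hc χ hχred hχw
    exact ⟨ψ, (h1.trans hχsub).trans (List.eraseIdx_sublist ω k), h2, h3⟩

/-- The master mutual induction: subword-to-chain (A), and the two halves of the
lifting property (Z1, Z2). -/
lemma masterZ : ∀ N : ℕ,
    (∀ ω φ : List B, cs.IsReduced ω → φ.Sublist ω → 2 * ω.length ≤ N →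
      cLE cs (π φ) (π ω)) ∧
    (∀ (i : B) (v u : W), 2 * cs.length v + 1 ≤ N →
      cs.length v < cs.length (v * s i) → cLE cs u v →
      cs.length u < cs.length (u * s i) → cLE cs (u * s i) (v * s i)) ∧
    (∀ (i : B) (w u : W), 2 * cs.length w ≤ N →
      cs.length (w * s i) < cs.length w → cLE cs u w →
      cs.length u < cs.length (u * s i) → cLE cs u (w * s i)) := by
  intro N
  induction N using Nat.strong_induction_on with
  | _ N IH =>
  refine ⟨?_, ?_, ?_⟩
  · -- Part A
    intro ω φ hred hsub hN
    rcases List.eq_nil_or_concat ω with rfl | ⟨α, b, rfl⟩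
    · rw [List.sublist_nil.mp hsub]
      exact Relation.ReflTransGen.refl
    · have hαred : cs.IsReduced α := by
        have h := hred.take α.length
        rwa [List.concat_eq_append, List.take_left] at h
      have hπω : π (α.concat b) = π α * s b := cs.wordProd_concat b α
      have hlv : cs.length (π α) = α.length := hαred
      have hlw : cs.length (π (α.concat b)) = α.length + 1 := by
        have := hred
        rw [CoxeterSystem.IsReduced] at this
        rw [this, List.length_concat]
      have hlenω : (α.concat b).length = α.length + 1 := List.length_concat
      have hasc : cs.length (π α) < cs.length (π α * s b) := by
        rw [← hπω]; omega
      have hstep : cLT1 cs (π α) (π (α.concat b)) :=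
        ⟨s b, cs.isReflection_simple b, hπω, by omega⟩
      rw [List.concat_eq_append] at hsub
      obtain ⟨φ₁, φ₂, rfl, hs1, hs2⟩ := List.sublist_append_iff.mp hsub
      have hA := (IH (N-2) (by omega)).1 α φ₁ hαred hs1 (by omega)
      rcases List.sublist_singleton.mp hs2 with rfl | rfl
      · rw [List.append_nil]
        exact Relation.ReflTransGen.tail hA hstep
      · have hπφ : π (φ₁ ++ [b]) = π φ₁ * s b := by
          rw [cs.wordProd_append]; simp
        rcases cs.length_mul_simple (π φ₁) b with hup | hdn
        · have hZ1 := (IH (N-1) (by omega)).2.1 b (π α) (π φ₁) (by omega) hasc hA (by omega)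
          rw [hπφ, hπω]
          exact hZ1
        · have step1 : cLT1 cs (π φ₁ * s b) (π φ₁) :=
            ⟨s b, cs.isReflection_simple b,
              by rw [mul_assoc, cs.simple_mul_simple_self, mul_one], by omega⟩
          rw [hπφ]
          exact Relation.ReflTransGen.head step1 (Relation.ReflTransGen.tail hA hstep)
  · -- Part Z1
    intro i v u hN hasc hle huasc
    rcases hle.cases_tail with heq | ⟨v₀, hc, t, ht, hveq, hlt⟩
    · rw [heq]
      exact Relation.ReflTransGen.refl
    · subst hveq
      rcases cs.length_mul_simple v₀ i with h0up | h0dn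
      · have hZ1 := (IH (2 * cs.length v₀ + 1) (by omega)).2.1 i v₀ u le_rfl
          (by omega) hc huasc
        refine Relation.ReflTransGen.tail hZ1 ?_
        refine ⟨s i * t * s i, ?_, ?_, by omega⟩
        · have := ht.conj (s i)
          rwa [cs.inv_simple] at this
        · calc v₀ * t * s i = v₀ * (s i * s i) * t * s i := by
                rw [cs.simple_mul_simple_self, mul_one]
            _ = v₀ * s i * (s i * t * s i) := by group
      · have hZ2 := (IH (2 * cs.length v₀) (by omega)).2.2 i v₀ u le_rfl
          (by omega) hc huasc
        have hcanc : v₀ * s i * s i = v₀ := by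
          rw [mul_assoc, cs.simple_mul_simple_self, mul_one]
        have hZ1' := (IH (2 * cs.length (v₀ * s i) + 1) (by omega)).2.1 i (v₀ * s i) u
          le_rfl (by rw [hcanc]; omega) hZ2 huasc
        rw [hcanc] at hZ1'
        exact Relation.ReflTransGen.tail
          (Relation.ReflTransGen.tail hZ1' ⟨t, ht, rfl, hlt⟩)
          ⟨s i, cs.isReflection_simple i, rfl, hasc⟩
  · -- Part Z2
    intro i w u hN hdesc hle huasc
    obtain ⟨α, hαred, hαπ⟩ := cs.exists_reduced_word' (w * s i)
    have hlen_ws : cs.length (w * s i) + 1 = cs.length w := by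
      rcases cs.length_mul_simple w i with hup | hdn
      · omega
      · exact hdn
    have hαlen : α.length = cs.length w - 1 := by
      have := hαred
      rw [CoxeterSystem.IsReduced, ← hαπ] at this
      omega
    have hπω : π (α.concat i) = w := by
      rw [cs.wordProd_concat, ← hαπ, mul_assoc, cs.simple_mul_simple_self, mul_one]
    have hωred : cs.IsReduced (α.concat i) := by
      rw [CoxeterSystem.IsReduced, hπω, List.length_concat]
      omega
    obtain ⟨ψ, hψsub, hψred, hψπ⟩ := chain_to_subword cs (cs.length w) u w le_rfl hle
      (α.concat i) hωred hπω
    rw [List.concat_eq_append] at hψsub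
    obtain ⟨ψ₁, ψ₂, heqψ, hs1, hs2⟩ := List.sublist_append_iff.mp hψsub
    subst heqψ
    rcases List.sublist_singleton.mp hs2 with rfl | rfl
    · have hA := (IH (N-1) (by omega)).1 α ψ₁ hαred hs1 (by omega)
      rw [List.append_nil] at hψπ
      rw [hψπ, ← hαπ] at hA
      exact hA
    · exfalso
      have hsp : π (ψ₁ ++ [i]) = π ψ₁ * s i := by
        rw [cs.wordProd_append]; simp
      have hu : u * s i = π ψ₁ := by
        rw [← hψπ, hsp, mul_assoc, cs.simple_mul_simple_self, mul_one]
      have hlu : cs.length u = ψ₁.length + 1 := by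
        have := hψred
        rw [CoxeterSystem.IsReduced, hψπ] at this
        rw [this]
        simp
      have hle2 : cs.length (u * s i) ≤ ψ₁.length := by
        rw [hu]
        exact cs.length_wordProd_le ψ₁
      omega

lemma subword_to_chain {ω φ : List B} (hred : cs.IsReduced ω) (hsub : φ.Sublist ω) :
    cLE cs (π φ) (π ω) :=
  (masterZ cs (2 * ω.length)).1 ω φ hred hsub le_rfl

lemma bruhatLE_iff_cLE (x w : W) : bruhatLE cs x w ↔ cLE cs x w := by
  constructor
  · rintro ⟨ω, φ, hred, rfl, hsub, rfl⟩
    exact subword_to_chain cs hred hsub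
  · intro h
    obtain ⟨ω, hred, hπ⟩ := cs.exists_reduced_word' w
    obtain ⟨ψ, h1, h2, h3⟩ := chain_to_subword cs (cs.length w) x w le_rfl h ω hred hπ.symm
    exact ⟨ω, ψ, hred, hπ.symm, h1, h3⟩

lemma bruhatLE_trans {x y z : W} (h1 : bruhatLE cs x y) (h2 : bruhatLE cs y z) :
    bruhatLE cs x z := by
  rw [bruhatLE_iff_cLE] at *
  exact h1.trans h2

lemma bruhatLE_mul_of_ascent {x : W} {i : B} (h : cs.length x < cs.length (x * s i)) :
    bruhatLE cs x (x * s i) := by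
  obtain ⟨ω, hred, hπ⟩ := cs.exists_reduced_word' x
  have h3 : cs.length x = ω.length := by rw [hπ]; exact hred
  refine ⟨ω.concat i, ω, ?_, ?_, ?_, hπ.symm⟩
  · rw [CoxeterSystem.IsReduced, cs.wordProd_concat, ← hπ, List.length_concat]
    have h2 : cs.length (x * s i) ≤ cs.length x + 1 := by
      have := cs.length_mul_le x (s i)
      rwa [cs.length_simple] at this
    omega
  · rw [cs.wordProd_concat, ← hπ]
  · rw [List.concat_eq_append]
    exact List.sublist_append_left ω [i]

lemma mul_bruhatLE_of_descent {x : W} {i : B} (h : cs.length (x * s i) < cs.length x) :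
    bruhatLE cs (x * s i) x := by
  obtain ⟨α, hred, hπ⟩ := cs.exists_reduced_word' (x * s i)
  have hlen : cs.length (x * s i) + 1 = cs.length x := by
    rcases cs.length_mul_simple x i with h1 | h1 <;> omega
  have hπω : π (α.concat i) = x := by
    rw [cs.wordProd_concat, ← hπ, mul_assoc, cs.simple_mul_simple_self, mul_one]
  have hαlen : α.length = cs.length (x * s i) := by
    have := hred
    rw [CoxeterSystem.IsReduced, ← hπ] at this
    omega
  refine ⟨α.concat i, α, ?_, hπω, ?_, hπ.symm⟩
  · rw [CoxeterSystem.IsReduced, hπω, List.length_concat]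
    omega
  · rw [List.concat_eq_append]
    exact List.sublist_append_left α [i]

lemma bruhat_lift_a {x w : W} {i : B} (hw : cs.length (w * s i) < cs.length w)
    (hle : bruhatLE cs x w) : bruhatLE cs (x * s i) w := by
  obtain ⟨α, hαred, hαπ⟩ := cs.exists_reduced_word' (w * s i)
  have hlen_ws : cs.length (w * s i) + 1 = cs.length w := by
    rcases cs.length_mul_simple w i with h1 | h1 <;> omega
  have hπω : π (α.concat i) = w := by
    rw [cs.wordProd_concat, ← hαπ, mul_assoc, cs.simple_mul_simple_self, mul_one]
  have hαlen : α.length = cs.length (w * s i) := by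
    have := hαred
    rw [CoxeterSystem.IsReduced, ← hαπ] at this
    omega
  have hωred : cs.IsReduced (α.concat i) := by
    rw [CoxeterSystem.IsReduced, hπω, List.length_concat]
    omega
  rw [bruhatLE_iff_cLE] at hle
  obtain ⟨ψ, hψsub, hψred, hψπ⟩ := chain_to_subword cs (cs.length w) x w le_rfl hle
    (α.concat i) hωred hπω
  rw [List.concat_eq_append] at hψsub
  obtain ⟨ψ₁, ψ₂, heqψ, hs1, hs2⟩ := List.sublist_append_iff.mp hψsub
  subst heqψ
  have hsp : π (ψ₁ ++ [i]) = π ψ₁ * s i := by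
    rw [cs.wordProd_append]; simp
  rcases List.sublist_singleton.mp hs2 with rfl | rfl
  · rw [List.append_nil] at hψπ
    refine ⟨α.concat i, ψ₁ ++ [i], hωred, hπω, ?_, ?_⟩
    · rw [List.concat_eq_append]
      exact hs1.append (List.Sublist.refl [i])
    · rw [hsp, hψπ]
  · refine ⟨α.concat i, ψ₁, hωred, hπω, ?_, ?_⟩
    · rw [List.concat_eq_append]
      exact hs1.trans (List.sublist_append_left α [i])
    · rw [hsp] at hψπ
      rw [← hψπ, mul_assoc, cs.simple_mul_simple_self, mul_one]

lemma bruhat_lift_b {y x : W} {i : B} (hdesc : cs.length (x * s i) < cs.length x)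
    (hyle : bruhatLE cs y x) (hyasc : cs.length y < cs.length (y * s i)) :
    bruhatLE cs y (x * s i) := by
  rw [bruhatLE_iff_cLE] at *
  exact (masterZ cs (2 * cs.length x)).2.2 i x y le_rfl hdesc hyle hyasc

end SMProof
end SMAux

set_option maxHeartbeats 1600000 in
/-- **Verma's special matching.** If `y < w`, `s i` is a right ascent of `y` and a right
descent of `w`, then right multiplication by `s i` preserves the interval `[y, w]` and
matches each element of `[y, w]` with one covering it or covered by it. -/
theorem special_matching (cs : CoxeterSystem M W) {y w : W} (i : B)
    (hyw : bruhatLT cs y w) (hy : ¬ cs.IsRightDescent y i) (hw : cs.IsRightDescent w i) :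
    ∀ x : W, bruhatLE cs y x → bruhatLE cs x w →
      (bruhatLE cs y (x * cs.simple i) ∧ bruhatLE cs (x * cs.simple i) w) ∧
      (bruhatCovers cs x (x * cs.simple i) ∨ bruhatCovers cs (x * cs.simple i) x) := by
  classical
  intro x hyx hxw
  have hw' : cs.length (w * cs.simple i) < cs.length w := hw
  have hy' : ¬ cs.length (y * cs.simple i) < cs.length y := hy
  have hyasc : cs.length y < cs.length (y * cs.simple i) := by
    rcases cs.length_mul_simple y i with h | h
    · omega
    · exact absurd (by omega) hy'
  rcases cs.length_mul_simple x i with hxup | hxdn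
  · have hxlt : cs.length x < cs.length (x * cs.simple i) := by omega
    have h1 : bruhatLE cs x (x * cs.simple i) := SMProof.bruhatLE_mul_of_ascent cs hxlt
    have hyxs : bruhatLE cs y (x * cs.simple i) := SMProof.bruhatLE_trans cs hyx h1
    have hxsw : bruhatLE cs (x * cs.simple i) w := SMProof.bruhat_lift_a cs hw' hxw
    refine ⟨⟨hyxs, hxsw⟩, Or.inl ⟨⟨h1, ?_⟩, by omega⟩⟩
    intro heq
    have := congrArg cs.length heq
    omega
  · have hxlt : cs.length (x * cs.simple i) < cs.length x := by omega
    have h1 : bruhatLE cs (x * cs.simple i) x := SMProof.mul_bruhatLE_of_descent cs hxlt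
    have hxsw : bruhatLE cs (x * cs.simple i) w := SMProof.bruhatLE_trans cs h1 hxw
    have hyxs : bruhatLE cs y (x * cs.simple i) := SMProof.bruhat_lift_b cs hxlt hyx hyasc
    refine ⟨⟨hyxs, hxsw⟩, Or.inr ⟨⟨h1, ?_⟩, by omega⟩⟩
    intro heq
    have := congrArg cs.length heq
    omega
end
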